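/- arXiv:1809.07637 — 14 statements merged into one kernel-verified Lean document; each statement's English description precedes it below -/
import Mathlib

section
/- Given a network allocation problem (G, α, β), an allocation state exists if and only if for every subset D ⊆ X one has Σ_{x∈D} α_x ≤ Σ_{y∈N(D)} β_y. -/
open Finset

set_option linter.unusedSectionVars false

/-- A partial allocation state: `W x y` is zero off the edge set, row sums are
bounded by `α` and column sums are bounded by `β`. -/
def IsPartialAlloc {X : Type*} [Fintype X] (E : X → X → Prop) (α β : X → ℕ)
    (W : X → X → ℕ) : Prop :=
  (∀ x y, ¬ E x y → W x y = 0) ∧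
  (∀ x, ∑ y, W x y ≤ α x) ∧
  (∀ y, ∑ x, W x y ≤ β y)

/-- An allocation state: a partial allocation state whose row sums equal `α`. -/
def IsAlloc {X : Type*} [Fintype X] (E : X → X → Prop) (α β : X → ℕ)
    (W : X → X → ℕ) : Prop :=
  IsPartialAlloc E α β W ∧ ∀ x, ∑ y, W x y = α x

/-- The out-neighborhood `N(D)` of a set of units `D`. -/
def NSet {X : Type*} [Fintype X] (E : X → X → Prop) [DecidableRel E]
    (D : Finset X) : Finset X :=
  univ.filter fun y => ∃ x ∈ D, E x y

section Aux

variable {X : Type*} [Fintype X] [DecidableEq X] (E : X → X → Prop) [DecidableRel E]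
  (α β : X → ℕ)

lemma NSet_mono {D D' : Finset X} (h : D ⊆ D') : NSet E D ⊆ NSet E D' := by
  intro y hy
  simp only [NSet, mem_filter, mem_univ, true_and] at *
  obtain ⟨x, hx, he⟩ := hy
  exact ⟨x, h hx, he⟩

lemma NSet_union (D D' : Finset X) : NSet E (D ∪ D') = NSet E D ∪ NSet E D' := by
  ext y
  simp only [NSet, mem_filter, mem_univ, true_and, mem_union]
  constructor
  · rintro ⟨x, hx | hx, he⟩
    · exact Or.inl ⟨x, hx, he⟩
    · exact Or.inr ⟨x, hx, he⟩
  · rintro (⟨x, hx, he⟩ | ⟨x, hx, he⟩)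
    · exact ⟨x, Or.inl hx, he⟩
    · exact ⟨x, Or.inr hx, he⟩

lemma sum_NSet_submodular (D D' : Finset X) :
    ∑ y ∈ NSet E (D ∪ D'), β y + ∑ y ∈ NSet E (D ∩ D'), β y ≤
      ∑ y ∈ NSet E D, β y + ∑ y ∈ NSet E D', β y := by
  have h1 : NSet E (D ∩ D') ⊆ NSet E D ∩ NSet E D' := by
    intro y hy
    simp only [NSet, mem_filter, mem_univ, true_and, mem_inter] at *
    obtain ⟨x, hx, he⟩ := hy
    exact ⟨⟨x, hx.1, he⟩, ⟨x, hx.2, he⟩⟩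
  calc ∑ y ∈ NSet E (D ∪ D'), β y + ∑ y ∈ NSet E (D ∩ D'), β y
      ≤ ∑ y ∈ NSet E D ∪ NSet E D', β y + ∑ y ∈ NSet E D ∩ NSet E D', β y := by
        rw [NSet_union]
        exact Nat.add_le_add_left (Finset.sum_le_sum_of_subset h1) _
    _ = ∑ y ∈ NSet E D, β y + ∑ y ∈ NSet E D', β y := sum_union_inter

/-- Union of two "tight" sets is tight, given the Hall condition. -/
lemma tight_union (hall : ∀ D : Finset X, ∑ x ∈ D, α x ≤ ∑ y ∈ NSet E D, β y)
    {D D' : Finset X} (hD : ∑ y ∈ NSet E D, β y ≤ ∑ x ∈ D, α x)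
    (hD' : ∑ y ∈ NSet E D', β y ≤ ∑ x ∈ D', α x) :
    ∑ y ∈ NSet E (D ∪ D'), β y ≤ ∑ x ∈ D ∪ D', α x := by
  have h1 := sum_NSet_submodular E β D D'
  have h2 : ∑ x ∈ D ∪ D', α x + ∑ x ∈ D ∩ D', α x = ∑ x ∈ D, α x + ∑ x ∈ D', α x :=
    sum_union_inter
  have h3 := hall (D ∩ D')
  omega

lemma sum_update_sub_of_mem {z : X} {s : Finset X} (f : X → ℕ) (hz : z ∈ s) (hf : 1 ≤ f z) :
    ∑ a ∈ s, Function.update f z (f z - 1) a = ∑ a ∈ s, f a - 1 := by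
  rw [Finset.sum_update_of_mem hz]
  have h2 : ∑ a ∈ s, f a = ∑ a ∈ s \ {z}, f a + f z :=
    (Finset.sum_eq_sum_sdiff_singleton_add hz f)
  omega

lemma sum_update_sub_of_notMem {z : X} {s : Finset X} (f : X → ℕ) (hz : z ∉ s) :
    ∑ a ∈ s, Function.update f z (f z - 1) a = ∑ a ∈ s, f a := by
  refine Finset.sum_congr rfl fun a ha => ?_
  refine Function.update_of_ne ?_ _ _
  intro h; subst h; exact hz ha

/-- Key existence direction, by induction on the total supply. -/
lemma alloc_of_hall : ∀ (n : ℕ) (α β : X → ℕ), ∑ x, α x = n →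
    (∀ D : Finset X, ∑ x ∈ D, α x ≤ ∑ y ∈ NSet E D, β y) →
    ∃ W : X → X → ℕ, IsAlloc E α β W := by
  intro n
  induction n with
  | zero =>
    intro α β hsum _
    refine ⟨fun _ _ => 0, ⟨fun _ _ _ => rfl, fun x => by simp, fun y => by simp⟩, fun x => ?_⟩
    have := (Finset.sum_eq_zero_iff.mp hsum) x (mem_univ x)
    simp [this]
  | succ n ih =>
    intro α β hsum hall
    -- pick x with α x ≥ 1
    have hx : ∃ x, 1 ≤ α x := by
      by_contra h
      push_neg at h
      have : ∑ x, α x = 0 := Finset.sum_eq_zero fun x _ => by have := h x; omega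
      omega
    obtain ⟨x, hαx⟩ := hx
    -- the union of all tight sets avoiding x
    set S : Finset (Finset X) :=
      univ.filter (fun D => x ∉ D ∧ ∑ y ∈ NSet E D, β y ≤ ∑ a ∈ D, α a) with hS
    set D₀ : Finset X := S.sup id with hD₀
    have hxD₀ : x ∉ D₀ := by
      intro hmem
      obtain ⟨D, hDS, hxD⟩ := Finset.mem_sup.mp hmem
      exact (Finset.mem_filter.mp hDS).2.1 hxD
    have hsub : ∀ D ∈ S, D ⊆ D₀ := fun D hD => Finset.le_sup (f := id) hD
    have htight : ∑ y ∈ NSet E D₀, β y ≤ ∑ a ∈ D₀, α a := by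
      rw [hD₀]
      have : ∀ T : Finset (Finset X), T ⊆ S →
          ∑ y ∈ NSet E (T.sup id), β y ≤ ∑ a ∈ T.sup id, α a := by
        intro T
        induction T using Finset.induction with
        | empty =>
          intro _
          have : NSet E (∅ : Finset X) = ∅ := by
            ext y; simp [NSet]
          simp [this]
        | @insert D T' hni ihT =>
          intro hTS
          have h1 : (insert D T').sup id = D ∪ T'.sup id := by
            simp [Finset.sup_insert]
          rw [h1]
          refine tight_union E α β hall ?_ (ihT (fun a ha => hTS (mem_insert_of_mem ha)))
          exact (Finset.mem_filter.mp (hTS (mem_insert_self D T'))).2.2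
      exact this S (Finset.Subset.refl S)
    -- find y ∈ N_x \ N(D₀) with β y ≥ 1
    have hins : NSet E (insert x D₀) = NSet E D₀ ∪ (NSet E {x} \ NSet E D₀) := by
      rw [Finset.insert_eq, NSet_union]
      ext z
      simp only [mem_union, mem_sdiff]
      tauto
    have hdisj : Disjoint (NSet E D₀) (NSet E {x} \ NSet E D₀) := Finset.disjoint_sdiff
    have hhall := hall (insert x D₀)
    rw [Finset.sum_insert hxD₀, hins, Finset.sum_union hdisj] at hhall
    have hdiff : 1 ≤ ∑ y ∈ NSet E {x} \ NSet E D₀, β y := by omega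
    have hy : ∃ y ∈ NSet E {x} \ NSet E D₀, β y ≠ 0 := by
      apply Finset.exists_ne_zero_of_sum_ne_zero
      omega
    obtain ⟨y, hymem, hβy0⟩ := hy
    have hβy : 1 ≤ β y := Nat.one_le_iff_ne_zero.mpr hβy0
    have hyNx : y ∈ NSet E {x} := (mem_sdiff.mp hymem).1
    have hyND₀ : y ∉ NSet E D₀ := (mem_sdiff.mp hymem).2
    have hExy : E x y := by
      have := mem_filter.mp hyNx
      obtain ⟨x', hx', he⟩ := this.2
      rwa [Finset.mem_singleton.mp hx'] at he
    -- decreased supply/capacity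
    set α' : X → ℕ := Function.update α x (α x - 1) with hα'
    set β' : X → ℕ := Function.update β y (β y - 1) with hβ'
    have hsumα' : ∑ a, α' a = n := by
      rw [hα', sum_update_sub_of_mem α (mem_univ x) hαx]
      omega
    have hall' : ∀ D : Finset X, ∑ a ∈ D, α' a ≤ ∑ z ∈ NSet E D, β' z := by
      intro D
      by_cases hxD : x ∈ D
      · have hyND : y ∈ NSet E D := by
          simp only [NSet, mem_filter, mem_univ, true_and]
          exact ⟨x, hxD, hExy⟩
        rw [hα', hβ', sum_update_sub_of_mem α hxD hαx, sum_update_sub_of_mem β hyND hβy]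
        have := hall D
        omega
      · rw [hα', sum_update_sub_of_notMem α hxD]
        by_cases hyD : y ∈ NSet E D
        · -- D is not tight
          have hnt : ¬ (∑ z ∈ NSet E D, β z ≤ ∑ a ∈ D, α a) := by
            intro hcon
            have hDS : D ∈ S := Finset.mem_filter.mpr ⟨mem_univ D, hxD, hcon⟩
            exact hyND₀ (NSet_mono E (hsub D hDS) hyD)
          rw [hβ', sum_update_sub_of_mem β hyD hβy]
          omega
        · rw [hβ', sum_update_sub_of_notMem β hyD]
          exact hall D
    obtain ⟨W', ⟨⟨hW'0, hW'r, hW'c⟩, hW'eq⟩⟩ := ih α' β' hsumα' hall'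
    refine ⟨fun a b => W' a b + if a = x ∧ b = y then 1 else 0, ⟨⟨?_, ?_, ?_⟩, ?_⟩⟩
    · intro a b hnE
      have h0 := hW'0 a b hnE
      have : ¬ (a = x ∧ b = y) := by
        rintro ⟨rfl, rfl⟩; exact hnE hExy
      simp [h0, this]
    · intro a
      have hrow : ∑ b, (W' a b + if a = x ∧ b = y then 1 else 0)
          = ∑ b, W' a b + (if a = x then 1 else 0) := by
        rw [Finset.sum_add_distrib]
        congr 1
        by_cases hax : a = x
        · simp [hax]
        · simp [hax]
      rw [hrow, hW'eq a]
      by_cases hax : a = x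
      · rw [hax, if_pos rfl, hα', Function.update_self]
        omega
      · rw [hα'] at *
        simp [Function.update_of_ne hax, hax]
    · intro b
      have hcol : ∑ a, (W' a b + if a = x ∧ b = y then 1 else 0)
          = ∑ a, W' a b + (if b = y then 1 else 0) := by
        rw [Finset.sum_add_distrib]
        congr 1
        by_cases hby : b = y
        · simp [hby]
        · simp [hby]
      rw [hcol]
      have := hW'c b
      by_cases hby : b = y
      · subst hby
        rw [hβ', Function.update_self] at this
        rw [if_pos rfl]
        omega
      · rw [hβ', Function.update_of_ne hby] at this
        simp [hby, this]
    · intro a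
      have hrow : ∑ b, (W' a b + if a = x ∧ b = y then 1 else 0)
          = ∑ b, W' a b + (if a = x then 1 else 0) := by
        rw [Finset.sum_add_distrib]
        congr 1
        by_cases hax : a = x
        · simp [hax]
        · simp [hax]
      rw [hrow, hW'eq a]
      by_cases hax : a = x
      · rw [hax, if_pos rfl, hα', Function.update_self]
        omega
      · rw [hα', Function.update_of_ne hax]
        simp [hax]

end Aux

/-- an allocation state exists iff
`Σ_{x∈D} α_x ≤ Σ_{y∈N(D)} β_y` for every subset `D ⊆ X`. -/
theorem allocation_exists_iff {X : Type*} [Fintype X] [DecidableEq X]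
    (E : X → X → Prop) [DecidableRel E] (α β : X → ℕ) :
    (∃ W : X → X → ℕ, IsAlloc E α β W) ↔
      ∀ D : Finset X, ∑ x ∈ D, α x ≤ ∑ y ∈ NSet E D, β y := by
  constructor
  · rintro ⟨W, ⟨⟨hW0, _, hWc⟩, hWeq⟩⟩ D
    have h1 : ∑ x ∈ D, α x = ∑ x ∈ D, ∑ y, W x y :=
      Finset.sum_congr rfl fun x _ => (hWeq x).symm
    rw [h1, Finset.sum_comm]
    have h2 : ∑ y, ∑ x ∈ D, W x y = ∑ y ∈ NSet E D, ∑ x ∈ D, W x y := by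
      refine (Finset.sum_subset (Finset.subset_univ _) ?_).symm
      intro y _ hyN
      refine Finset.sum_eq_zero fun x hxD => ?_
      apply hW0
      intro hE
      exact hyN (by simp only [NSet, mem_filter, mem_univ, true_and]; exact ⟨x, hxD, hE⟩)
    rw [h2]
    refine Finset.sum_le_sum fun y _ => ?_
    calc ∑ x ∈ D, W x y ≤ ∑ x, W x y :=
          Finset.sum_le_sum_of_subset (Finset.subset_univ D)
      _ ≤ β y := hWc y
  · intro hall
    exact alloc_of_hall E (∑ x, α x) α β rfl hall
end

section
/- Suppose G is the complete directed graph on X, i.e. E = {(x,y) : x ≠ y}. Then an allocation state exists if and only if both: (a) α_x ≤ Σ_{y≠x} β_y for every x ∈ X, and (b) Σ_{x∈X} α_x ≤ Σ_{y∈X} β_y. -/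
open Finset

private lemma lex_helper (M a b c d : ℕ) (hc : c < M)
    (h : M * b + a ≤ M * d + c) : b < d ∨ (b = d ∧ a ≤ c) := by
  rcases lt_trichotomy b d with h' | h' | h'
  · exact Or.inl h'
  · subst h'
    exact Or.inr ⟨rfl, le_of_add_le_add_left h⟩
  · exfalso
    have h2 : M * (d + 1) ≤ M * b := Nat.mul_le_mul_left M h'
    have : M * d + M ≤ M * b := by rw [Nat.mul_add, Nat.mul_one] at h2; exact h2
    omega

private lemma alloc_aux {X : Type*} [Fintype X] [DecidableEq X]
    (E : X → X → Prop) (hE : ∀ x y, E x y ↔ x ≠ y) :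
    ∀ (n : ℕ) (α β : X → ℕ), ∑ x, α x = n →
      (∀ x : X, α x ≤ ∑ y ∈ univ.erase x, β y) → (∑ x, α x ≤ ∑ y, β y) →
      ∃ W : X → X → ℕ, (∀ x y, ¬ E x y → W x y = 0) ∧
        (∀ y, ∑ x, W x y ≤ β y) ∧ (∀ x, ∑ y, W x y = α x) := by
  intro n
  induction n with
  | zero =>
    intro α β hsum _ _
    refine ⟨fun _ _ => 0, fun _ _ _ => rfl, fun y => by simp, fun x => ?_⟩
    have := (Finset.sum_eq_zero_iff).mp hsum x (mem_univ x)
    simp [this]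
  | succ n ih =>
    intro α β hsum ha hb
    -- there is some unit with positive demand
    obtain ⟨x₀, -, hx₀⟩ : ∃ i ∈ univ, α i ≠ 0 :=
      Finset.exists_ne_zero_of_sum_ne_zero (by rw [hsum]; omega)
    -- x maximizes α
    obtain ⟨x, -, hxmax⟩ := Finset.exists_max_image univ α ⟨x₀, mem_univ x₀⟩
    have hαx : 1 ≤ α x := lt_of_lt_of_le (Nat.pos_of_ne_zero hx₀) (hxmax x₀ (mem_univ x₀))
    -- the set of other units: nonempty with positive total capacity
    have hpos : 1 ≤ ∑ w ∈ univ.erase x, β w := le_trans hαx (ha x)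
    obtain ⟨w₀, hw₀mem, hw₀⟩ : ∃ w ∈ univ.erase x, β w ≠ 0 :=
      Finset.exists_ne_zero_of_sum_ne_zero (by omega)
    -- y maximizes (β, α) lexicographically among w ≠ x
    obtain ⟨y, hymem, hymax⟩ :=
      Finset.exists_max_image (univ.erase x) (fun w => (n + 2) * β w + α w) ⟨w₀, hw₀mem⟩
    have hαle : ∀ z : X, α z < n + 2 := by
      intro z
      have : α z ≤ ∑ w, α w := Finset.single_le_sum (fun i _ => Nat.zero_le _) (mem_univ z)
      omega
    have hlex : ∀ w ∈ univ.erase x, β w < β y ∨ (β w = β y ∧ α w ≤ α y) := by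
      intro w hw
      exact lex_helper (n + 2) (α w) (β w) (α y) (β y) (hαle y) (hymax w hw)
    have hyx : y ≠ x := (Finset.mem_erase.mp hymem).1
    have hβy : 1 ≤ β y := by
      rcases hlex w₀ hw₀mem with h | h
      · omega
      · omega
    -- decremented demands and capacities
    set α' : X → ℕ := Function.update α x (α x - 1) with hα'def
    set β' : X → ℕ := Function.update β y (β y - 1) with hβ'def
    have hsumα' : ∑ w, α' w = n := by
      rw [hα'def, Finset.sum_update_of_mem (mem_univ x), Finset.sdiff_singleton_eq_erase]
      have := Finset.sum_erase_add univ α (mem_univ x)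
      omega
    have hsumβ' : ∑ w, β' w = ∑ w, β w - 1 := by
      rw [hβ'def, Finset.sum_update_of_mem (mem_univ y), Finset.sdiff_singleton_eq_erase]
      have := Finset.sum_erase_add univ β (mem_univ y)
      omega
    -- erased sums of β'
    have herase : ∀ z : X, z ≠ y →
        ∑ w ∈ univ.erase z, β' w = ∑ w ∈ univ.erase z, β w - 1 := by
      intro z hz
      have hymem' : y ∈ univ.erase z := Finset.mem_erase.mpr ⟨hz.symm ∘ Eq.symm ∘ Eq.symm, mem_univ y⟩
      rw [hβ'def, Finset.sum_update_of_mem hymem', Finset.sdiff_singleton_eq_erase]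
      have := Finset.sum_erase_add (univ.erase z) β hymem'
      omega
    have heraseY : ∑ w ∈ univ.erase y, β' w = ∑ w ∈ univ.erase y, β w := by
      refine Finset.sum_congr rfl fun w hw => ?_
      rw [hβ'def, Function.update_of_ne (Finset.mem_erase.mp hw).1]
    -- hypotheses of the induction hypothesis
    have ha' : ∀ z : X, α' z ≤ ∑ w ∈ univ.erase z, β' w := by
      intro z
      by_cases hzy : z = y
      · subst hzy
        rw [heraseY, hα'def, Function.update_of_ne hyx]
        exact ha z
      · rw [herase z hzy]
        by_cases hzx : z = x
        · subst hzx
          rw [hα'def, Function.update_self]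
          have := ha z
          omega
        · rw [hα'def, Function.update_of_ne hzx]
          -- the key strict inequality: α z < ∑_{w ≠ z} β w
          by_contra hcon
          push_neg at hcon
          have h1 : α z ≤ ∑ w ∈ univ.erase z, β w := ha z
          have hxy : x ≠ y := fun h => hyx h.symm
          have hpair : β x + β y ≤ ∑ w ∈ univ.erase z, β w := by
            have hsub : ({x, y} : Finset X) ⊆ univ.erase z := by
              intro w hw
              rcases Finset.mem_insert.mp hw with h | h
              · exact Finset.mem_erase.mpr ⟨by rw [h]; exact fun h' => hzx h'.symm, mem_univ w⟩
              · have : w = y := Finset.mem_singleton.mp h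
                exact Finset.mem_erase.mpr ⟨by rw [this]; exact fun h' => hzy h'.symm, mem_univ w⟩
            calc β x + β y = ∑ w ∈ ({x, y} : Finset X), β w := (Finset.sum_pair hxy).symm
              _ ≤ _ := Finset.sum_le_sum_of_subset hsub
          have htriple : α x + α z + α y ≤ ∑ w, α w := by
            have h3 : ∑ w ∈ ({x, z, y} : Finset X), α w = α x + α z + α y := by
              rw [Finset.sum_insert (by simp [hzx, hxy, Ne.symm hzx, fun h => hxy h]),
                Finset.sum_pair hzy]
              ring
            calc α x + α z + α y = ∑ w ∈ ({x, z, y} : Finset X), α w := h3.symm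
              _ ≤ _ := Finset.sum_le_sum_of_subset (Finset.subset_univ _)
          have hsplit : ∑ w, β w = β z + ∑ w ∈ univ.erase z, β w := by
            have := Finset.sum_erase_add univ β (mem_univ z)
            omega
          have hzmem : z ∈ univ.erase x := Finset.mem_erase.mpr ⟨hzx, mem_univ z⟩
          have hβzy := hlex z hzmem
          have hzx' : α z ≤ α x := hxmax z (mem_univ z)
          rcases hβzy with h | ⟨h, h'⟩ <;> omega
    have hb' : ∑ w, α' w ≤ ∑ w, β' w := by
      rw [hsumα', hsumβ']
      omega
    obtain ⟨W', hW'0, hW'col, hW'row⟩ := ih α' β' hsumα' ha' hb'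
    refine ⟨fun a b => W' a b + if a = x ∧ b = y then 1 else 0, ?_, ?_, ?_⟩
    · intro a b hab
      have hab' : a = b := by
        by_contra h
        exact hab ((hE a b).mpr h)
      have h0 : W' a b = 0 := hW'0 a b hab
      have : ¬(a = x ∧ b = y) := by
        rintro ⟨rfl, rfl⟩
        exact hyx (hab'.symm)
      simp [h0, this]
    · intro b
      rw [Finset.sum_add_distrib]
      have hind : (∑ a, if a = x ∧ b = y then 1 else 0) = if b = y then 1 else 0 := by
        by_cases hby : b = y <;> simp [hby]
      rw [hind]
      by_cases hby : b = y
      · subst hby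
        have := hW'col b
        rw [hβ'def, Function.update_self] at this
        rw [if_pos rfl]
        omega
      · have := hW'col b
        rw [hβ'def, Function.update_of_ne hby] at this
        simp [hby, this]
    · intro a
      rw [Finset.sum_add_distrib]
      have hind : (∑ b, if a = x ∧ b = y then 1 else 0) = if a = x then 1 else 0 := by
        by_cases hax : a = x <;> simp [hax]
      rw [hind]
      by_cases hax : a = x
      · subst hax
        have := hW'row a
        rw [hα'def, Function.update_self] at this
        rw [if_pos rfl]
        omega
      · have := hW'row a
        rw [hα'def, Function.update_of_ne hax] at this
        simp [hax, this]

/-- for the complete directed graph (`E x y ↔ x ≠ y`), an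
allocation state exists iff `α x ≤ Σ_{y ≠ x} β y` for every `x` and
`Σ_x α x ≤ Σ_y β y`. -/
theorem allocation_exists_iff_complete {X : Type*} [Fintype X] [DecidableEq X]
    (E : X → X → Prop) (hE : ∀ x y, E x y ↔ x ≠ y) (α β : X → ℕ) :
    (∃ W : X → X → ℕ, IsAlloc E α β W) ↔
      ((∀ x : X, α x ≤ ∑ y ∈ univ.erase x, β y) ∧ ∑ x, α x ≤ ∑ y, β y) := by
  constructor
  · rintro ⟨W, ⟨⟨hW0, -, hWcol⟩, hWrow⟩⟩
    constructor
    · intro x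
      have hdiag : W x x = 0 := hW0 x x (by simp [hE])
      have h1 : α x = ∑ y ∈ univ.erase x, W x y := by
        rw [← hWrow x]
        have h2 : ∑ y ∈ univ.erase x, W x y + W x x = ∑ y, W x y :=
          Finset.sum_erase_add univ _ (mem_univ x)
        omega
      rw [h1]
      refine Finset.sum_le_sum fun y hy => ?_
      calc W x y ≤ ∑ a, W a y :=
            Finset.single_le_sum (f := fun a => W a y) (fun i _ => Nat.zero_le _) (mem_univ x)
        _ ≤ β y := hWcol y
    · calc ∑ x, α x = ∑ x, ∑ y, W x y := by
            exact Finset.sum_congr rfl fun x _ => (hWrow x).symm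
        _ = ∑ y, ∑ x, W x y := Finset.sum_comm
        _ ≤ ∑ y, β y := Finset.sum_le_sum fun y _ => hWcol y
  · rintro ⟨ha, hb⟩
    obtain ⟨W, h0, hcol, hrow⟩ := alloc_aux E hE (∑ x, α x) α β rfl ha hb
    exact ⟨W, ⟨⟨h0, fun x => (hrow x).le, hcol⟩, hrow⟩⟩
end

section
/- Let G = (X, E) be a directed graph in which every unit x satisfies |N_x| ≥ d_min with d_min ≥ 1, and every unit y satisfies |N⁻_y| ≤ d⁻_max. Let a = max_x α_x and b = min_y β_y, and assume a · d⁻_max ≤ b · d_min. Then an allocation state exists. -/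
open Finset

/-- Double counting: if every out-degree is at least `dmin` and every in-degree is
at most `dmax`, then `|A| ⬝ dmin ≤ |N(A)| ⬝ dmax`. -/
lemma alloc_double_count {X : Type*} [Fintype X] [DecidableEq X]
    (E : X → X → Prop) [DecidableRel E] (dmin dmax : ℕ)
    (hout : ∀ x : X, dmin ≤ (univ.filter fun y => E x y).card)
    (hin : ∀ y : X, (univ.filter fun x => E x y).card ≤ dmax)
    (A : Finset X) :
    A.card * dmin ≤ (A.biUnion (fun x => univ.filter (fun y => E x y))).card * dmax := by
  classical
  set NA := A.biUnion (fun x => univ.filter (fun y => E x y)) with hNA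
  set F := (A ×ˢ NA).filter (fun p => E p.1 p.2) with hF
  have hmem1 : ∀ p ∈ F, p.1 ∈ A := fun p hp => (mem_product.1 (mem_filter.1 hp).1).1
  have hmem2 : ∀ p ∈ F, p.2 ∈ NA := fun p hp => (mem_product.1 (mem_filter.1 hp).1).2
  have row : F.card = ∑ x ∈ A, (NA.filter (fun y => E x y)).card := by
    rw [Finset.card_eq_sum_card_fiberwise (f := Prod.fst) (t := A) hmem1]
    refine Finset.sum_congr rfl fun x hx => ?_
    refine Finset.card_bij' (fun p _ => p.2) (fun y _ => (x, y)) ?_ ?_ ?_ ?_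
    · intro p hp
      simp only [mem_filter] at hp ⊢
      obtain ⟨hpF, hp1⟩ := hp
      exact ⟨hmem2 p hpF, hp1 ▸ (mem_filter.1 hpF).2⟩
    · intro y hy
      exact mem_filter.2 ⟨mem_filter.2 ⟨mem_product.2 ⟨hx, (mem_filter.1 hy).1⟩,
        (mem_filter.1 hy).2⟩, rfl⟩
    · intro p hp
      obtain ⟨p1, p2⟩ := p
      have := (mem_filter.1 hp).2
      simp only at this
      simp [this]
    · intro y hy; rfl
  have col : F.card = ∑ y ∈ NA, (A.filter (fun x => E x y)).card := by
    rw [Finset.card_eq_sum_card_fiberwise (f := Prod.snd) (t := NA) hmem2]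
    refine Finset.sum_congr rfl fun y hy => ?_
    refine Finset.card_bij' (fun p _ => p.1) (fun x _ => (x, y)) ?_ ?_ ?_ ?_
    · intro p hp
      simp only [mem_filter] at hp ⊢
      obtain ⟨hpF, hp2⟩ := hp
      exact ⟨hmem1 p hpF, hp2 ▸ (mem_filter.1 hpF).2⟩
    · intro x hxm
      exact mem_filter.2 ⟨mem_filter.2 ⟨mem_product.2 ⟨(mem_filter.1 hxm).1, hy⟩,
        (mem_filter.1 hxm).2⟩, rfl⟩
    · intro p hp
      obtain ⟨p1, p2⟩ := p
      have := (mem_filter.1 hp).2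
      simp only at this
      simp [this]
    · intro x hxm; rfl
  have hNx : ∀ x ∈ A, NA.filter (fun y => E x y) = univ.filter (fun y => E x y) := by
    intro x hx
    ext y
    simp only [mem_filter, mem_univ, true_and, and_iff_right_iff_imp]
    intro hE
    exact mem_biUnion.2 ⟨x, hx, mem_filter.2 ⟨mem_univ y, hE⟩⟩
  calc A.card * dmin ≤ ∑ x ∈ A, (NA.filter (fun y => E x y)).card := by
        apply Finset.card_nsmul_le_sum
        intro x hx
        rw [hNx x hx]; exact hout x
    _ = F.card := row.symm
    _ = ∑ y ∈ NA, (A.filter (fun x => E x y)).card := col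
    _ ≤ ∑ y ∈ NA, dmax := Finset.sum_le_sum fun y _ =>
        (Finset.card_le_card (Finset.filter_subset_filter _ (subset_univ A))).trans (hin y)
    _ = NA.card * dmax := by rw [Finset.sum_const, smul_eq_mul]

/-- if every out-degree is at least `dmin ≥ 1`, every in-degree is
at most `dmax`, and `(max_x α_x) · dmax ≤ (min_y β_y) · dmin`, then an
allocation state exists. -/
theorem allocation_exists_of_degrees {X : Type*} [Fintype X] [DecidableEq X]
    [Nonempty X] (E : X → X → Prop) [DecidableRel E] (α β : X → ℕ)
    (dmin dmax : ℕ) (hdmin : 1 ≤ dmin)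
    (hout : ∀ x : X, dmin ≤ (univ.filter fun y => E x y).card)
    (hin : ∀ y : X, (univ.filter fun x => E x y).card ≤ dmax)
    (h : (univ.sup α) * dmax ≤ (univ.inf' univ_nonempty β) * dmin) :
    ∃ W : X → X → ℕ, IsAlloc E α β W := by
  classical
  set a := univ.sup α with ha
  set b := univ.inf' univ_nonempty β with hb
  let t : (Σ x : X, Fin (α x)) → Finset (Σ y : X, Fin (β y)) :=
    fun p => (univ.filter (fun y => E p.1 y)).sigma (fun y => (univ : Finset (Fin (β y))))
  have hall : ∀ s : Finset (Σ x : X, Fin (α x)), s.card ≤ (s.biUnion t).card := by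
    intro s
    set A := s.image Sigma.fst with hA
    set NA := A.biUnion (fun x => univ.filter (fun y => E x y)) with hNA
    have h1 : s.card ≤ ∑ x ∈ A, α x := by
      have : s ⊆ A.sigma (fun x => (univ : Finset (Fin (α x)))) := by
        intro p hp
        simp only [mem_sigma, mem_univ, and_true, hA, mem_image]
        exact ⟨p, hp, rfl⟩
      simpa [Finset.card_sigma] using Finset.card_le_card this
    have h2 : ∑ x ∈ A, α x ≤ A.card * a := by
      apply Finset.sum_le_card_nsmul
      intro x _
      exact Finset.le_sup (mem_univ x)
    have h3 : ∑ y ∈ NA, β y ≤ (s.biUnion t).card := by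
      have hsub : NA.sigma (fun y => (univ : Finset (Fin (β y)))) ⊆ s.biUnion t := by
        intro q hq
        simp only [mem_sigma, mem_univ, and_true] at hq
        rw [hNA, mem_biUnion] at hq
        obtain ⟨x, hxA, hx⟩ := hq
        rw [hA, mem_image] at hxA
        obtain ⟨p, hps, hpx⟩ := hxA
        rw [mem_biUnion]
        refine ⟨p, hps, ?_⟩
        simp only [t, mem_sigma, mem_univ, and_true, hpx]
        exact hx
      simpa [Finset.card_sigma] using Finset.card_le_card hsub
    have h4 : NA.card * b ≤ ∑ y ∈ NA, β y := by
      apply Finset.card_nsmul_le_sum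
      intro y _
      exact Finset.inf'_le β (mem_univ y)
    have h5 : A.card * dmin ≤ NA.card * dmax :=
      alloc_double_count E dmin dmax hout hin A
    have key : s.card * dmin ≤ (s.biUnion t).card * dmin := by
      calc s.card * dmin ≤ (A.card * a) * dmin := Nat.mul_le_mul_right _ (h1.trans h2)
        _ = (A.card * dmin) * a := by ring
        _ ≤ (NA.card * dmax) * a := Nat.mul_le_mul_right _ h5
        _ = NA.card * (a * dmax) := by ring
        _ ≤ NA.card * (b * dmin) := Nat.mul_le_mul_left _ h
        _ = (NA.card * b) * dmin := by ring
        _ ≤ (∑ y ∈ NA, β y) * dmin := Nat.mul_le_mul_right _ h4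
        _ ≤ (s.biUnion t).card * dmin := Nat.mul_le_mul_right _ h3
    exact Nat.le_of_mul_le_mul_right key hdmin
  obtain ⟨f, hfinj, hft⟩ := (Finset.all_card_le_biUnion_card_iff_exists_injective t).1 hall
  have hfE : ∀ p, E p.1 (f p).1 := by
    intro p
    have := hft p
    simp only [t, mem_sigma, mem_univ, and_true, mem_filter, true_and] at this
    exact this
  refine ⟨fun x y => (univ.filter (fun i : Fin (α x) => (f ⟨x, i⟩).1 = y)).card, ?_, ?_⟩
  · refine ⟨?_, ?_, ?_⟩
    · -- off-edge zero
      intro x y hxy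
      rw [Finset.card_eq_zero, Finset.filter_eq_empty_iff]
      intro i _ hi
      exact hxy (hi ▸ hfE ⟨x, i⟩)
    ·
      intro x
      have := Finset.card_eq_sum_card_fiberwise
        (f := fun i : Fin (α x) => (f ⟨x, i⟩).1) (s := univ) (t := univ)
        (fun i _ => mem_univ _)
      simp only [card_univ, Fintype.card_fin] at this
      exact le_of_eq this.symm
    · -- column sums ≤ β
      intro y
      have hsum : ∑ x, (univ.filter (fun i : Fin (α x) => (f ⟨x, i⟩).1 = y)).card
          = ((univ : Finset X).sigma
              (fun x => univ.filter (fun i : Fin (α x) => (f ⟨x, i⟩).1 = y))).card := by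
        rw [Finset.card_sigma]
      rw [hsum]
      have hg : ∀ p ∈ (univ : Finset X).sigma
          (fun x => univ.filter (fun i : Fin (α x) => (f ⟨x, i⟩).1 = y)),
          f p ∈ (univ : Finset (Σ y : X, Fin (β y))).filter (fun q => q.1 = y) := by
        intro p hp
        obtain ⟨x, i⟩ := p
        simp only [mem_sigma, mem_univ, true_and, mem_filter] at hp ⊢
        exact hp
      have hle := Finset.card_le_card_of_injOn f hg (hfinj.injOn)
      have hcard : ((univ : Finset (Σ y : X, Fin (β y))).filter (fun q => q.1 = y)).card
          = β y := by
        have : (univ : Finset (Σ y : X, Fin (β y))).filter (fun q => q.1 = y)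
            = ({y} : Finset X).sigma (fun z => (univ : Finset (Fin (β z)))) := by
          ext q
          obtain ⟨z, j⟩ := q
          simp [mem_sigma]
        rw [this, Finset.card_sigma]
        simp
      rw [hcard] at hle
      exact hle
  · intro x
    have := Finset.card_eq_sum_card_fiberwise
      (f := fun i : Fin (α x) => (f ⟨x, i⟩).1) (s := univ) (t := univ)
      (fun i _ => mem_univ _)
    simp only [card_univ, Fintype.card_fin] at this
    exact this.symm
end

section
/- For every pair of partial allocation states W, W' ∈ 𝒲_p and every unit x̄ ∈ X such that W_{xy} = W'_{xy} for all x ≠ x̄ and all y, one has U_{x̄}(W') − U_{x̄}(W) = Ψ(W') − Ψ(W); that is, the game with utilities U_x is a potential game with potential function Ψ. -/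
open Finset

/-- The separable functional `Ψ(W) = Σ_x f_x(W_{x·}) + Σ_y g_y(W_{·y})`. -/
def Psi {X : Type*} [Fintype X] (f g : X → (X → ℕ) → ℝ) (W : X → X → ℕ) : ℝ :=
  ∑ x, f x (W x) + ∑ y, g y (fun x => W x y)

/-- The utility of unit `x`: `U_x(W) = f_x(W_{x·}) + Σ_{y ∈ N_x} g_y(W_{·y})`. -/
def Util {X : Type*} [Fintype X] (E : X → X → Prop) [DecidableRel E]
    (f g : X → (X → ℕ) → ℝ) (x : X) (W : X → X → ℕ) : ℝ :=
  f x (W x) + ∑ y ∈ univ.filter (fun y => E x y), g y (fun x' => W x' y)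

/-- the game with utilities `U_x` is a potential game with
potential `Ψ`: if the partial allocation states `W, W'` agree on every row
`x ≠ xbar`, then `U_{xbar}(W') − U_{xbar}(W) = Ψ(W') − Ψ(W)`. -/
theorem potential_game {X : Type*} [Fintype X] [DecidableEq X]
    (E : X → X → Prop) [DecidableRel E] (α β : X → ℕ)
    (f g : X → (X → ℕ) → ℝ) (W W' : X → X → ℕ)
    (hW : IsPartialAlloc E α β W) (hW' : IsPartialAlloc E α β W')
    (xbar : X) (hrow : ∀ x, x ≠ xbar → ∀ y, W' x y = W x y) :
    Util E f g xbar W' - Util E f g xbar W = Psi f g W' - Psi f g W := by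
  have hf : ∑ x, f x (W' x) - ∑ x, f x (W x) = f xbar (W' xbar) - f xbar (W xbar) := by
    rw [← Finset.sum_sub_distrib]
    rw [Finset.sum_eq_single xbar]
    · intro b _ hb
      rw [funext (hrow b hb)]; ring
    · intro h; exact absurd (Finset.mem_univ xbar) h
  have hcol : ∀ y, ¬ E xbar y → (fun x' => W' x' y) = (fun x' => W x' y) := by
    intro y hy; funext x'
    by_cases h : x' = xbar
    · subst h; rw [hW.1 _ _ hy, hW'.1 _ _ hy]
    · exact hrow x' h y
  have hg : (∑ y, g y (fun x => W' x y)) - ∑ y, g y (fun x => W x y) =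
      ∑ y ∈ univ.filter (fun y => E xbar y),
        (g y (fun x' => W' x' y) - g y (fun x' => W x' y)) := by
    rw [← Finset.sum_sub_distrib]
    refine (Finset.sum_subset (Finset.filter_subset _ _) ?_).symm
    intro y _ hy
    simp only [Finset.mem_filter, Finset.mem_univ, true_and] at hy
    rw [hcol y hy]; ring
  simp only [Util, Psi, Finset.sum_sub_distrib] at *
  linarith
end

section
/- If W* ∈ 𝒲_p maximizes Ψ over the set 𝒲_p of partial allocation states, then W* is a (generalized) Nash equilibrium: for every unit x̄ ∈ X and every W' ∈ 𝒲_p with W'_{xy} = W*_{xy} for all x ≠ x̄ and all y, one has U_{x̄}(W*) ≥ U_{x̄}(W'). -/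
open Finset

/-- a maximizer `W*` of `Ψ` over the set of partial allocation
states is a (generalized) Nash equilibrium: no unit `xbar` can strictly improve
its utility by unilaterally changing its row. -/
theorem maximizer_is_nash {X : Type*} [Fintype X] [DecidableEq X]
    (E : X → X → Prop) [DecidableRel E] (α β : X → ℕ)
    (f g : X → (X → ℕ) → ℝ) (Wstar : X → X → ℕ)
    (hWstar : IsPartialAlloc E α β Wstar)
    (hmax : ∀ W : X → X → ℕ, IsPartialAlloc E α β W → Psi f g W ≤ Psi f g Wstar) :
    ∀ (xbar : X) (W' : X → X → ℕ), IsPartialAlloc E α β W' →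
      (∀ x, x ≠ xbar → ∀ y, W' x y = Wstar x y) →
      Util E f g xbar W' ≤ Util E f g xbar Wstar := by
  intro xbar W' hW' heq
  have hrows : ∀ x ∈ univ.erase xbar, f x (W' x) = f x (Wstar x) := by
    intro x hx
    have hne := (Finset.mem_erase.mp hx).1
    congr 1
    funext y
    exact heq x hne y
  have hcols : ∀ y ∈ univ.filter (fun y => ¬ E xbar y),
      g y (fun x' => W' x' y) = g y (fun x' => Wstar x' y) := by
    intro y hy
    have hnE := (Finset.mem_filter.mp hy).2
    congr 1
    funext x
    by_cases hx : x = xbar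
    · subst hx; rw [hW'.1 _ _ hnE, hWstar.1 _ _ hnE]
    · exact heq x hx y
  have key : Psi f g W' - Util E f g xbar W'
      = Psi f g Wstar - Util E f g xbar Wstar := by
    unfold Psi Util
    have h1 : ∀ (W : X → X → ℕ), ∑ x, f x (W x)
        = f xbar (W xbar) + ∑ x ∈ univ.erase xbar, f x (W x) := fun W =>
      (Finset.add_sum_erase univ (fun x => f x (W x)) (mem_univ xbar)).symm
    have h2 : ∀ (W : X → X → ℕ), ∑ y, g y (fun x' => W x' y) =
        ∑ y ∈ univ.filter (fun y => E xbar y), g y (fun x' => W x' y) +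
        ∑ y ∈ univ.filter (fun y => ¬ E xbar y), g y (fun x' => W x' y) :=
      fun W => (Finset.sum_filter_add_sum_filter_not univ _ _).symm
    rw [h1 W', h1 Wstar, h2 W', h2 Wstar,
        Finset.sum_congr rfl hrows, Finset.sum_congr rfl hcols]
    ring
  have hm := hmax W' hW'
  linarith [key]
end

section
/- Assume the specific functional form and that C^{all} > 2((max_x α_x)·|C^{agg}| + (max_y β_y)·C^{con}). Then the utilities are monotone with respect to removal of data: if W, W' ∈ 𝒲_p satisfy W'_{xy} = W_{xy} for all x ≠ x̄ and all y, W'_{x̄y} ≤ W_{x̄y} for every y, and W' ≠ W (so that W'^{x̄} < W^{x̄}), then U_{x̄}(W') < U_{x̄}(W). -/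
open Finset

/-- The utility of unit `x` for the specific functional form:
`f_x(W_{x·}) = C^{all} Σ_y W_{xy} + C^{agg} Σ_y W_{xy}²` and
`g_y(W_{·y}) = −C^{con} (Σ_x W_{xy})²`. -/
def UtilSpec {X : Type*} [Fintype X] (E : X → X → Prop) [DecidableRel E]
    (Call Cagg Ccon : ℝ) (x : X) (W : X → X → ℕ) : ℝ :=
  (Call * ∑ y, (W x y : ℝ) + Cagg * ∑ y, (W x y : ℝ) ^ 2) +
    ∑ y ∈ univ.filter (fun y => E x y), -(Ccon * (∑ x', (W x' y : ℝ)) ^ 2)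

/-- if `C^{all} > 2((max_x α_x)|C^{agg}| + (max_y β_y)C^{con})`,
then utilities are strictly monotone w.r.t. removal of data: removing some of
the data allocated by a unit `xbar` strictly decreases its utility. -/
theorem utility_monotone {X : Type*} [Fintype X] [DecidableEq X] [Nonempty X]
    (E : X → X → Prop) [DecidableRel E] (α β : X → ℕ)
    (Call Cagg Ccon : ℝ) (hCall : 0 < Call) (hCcon : 0 < Ccon)
    (hmono : 2 * (((univ.sup α : ℕ) : ℝ) * |Cagg| + ((univ.sup β : ℕ) : ℝ) * Ccon) < Call)
    (W W' : X → X → ℕ)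
    (hW : IsPartialAlloc E α β W) (hW' : IsPartialAlloc E α β W')
    (xbar : X) (hoff : ∀ x, x ≠ xbar → ∀ y, W' x y = W x y)
    (hle : ∀ y, W' xbar y ≤ W xbar y) (hne : W' ≠ W) :
    UtilSpec E Call Cagg Ccon xbar W' < UtilSpec E Call Cagg Ccon xbar W := by
  classical
  obtain ⟨hW0, hWr, hWc⟩ := hW
  obtain ⟨hW'0, hW'r, hW'c⟩ := hW'
  set A : ℝ := ((univ.sup α : ℕ) : ℝ) with hA
  set B : ℝ := ((univ.sup β : ℕ) : ℝ) with hB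
  have hAnn : 0 ≤ A := by positivity
  have hBnn : 0 ≤ B := by positivity
  have hdnn : ∀ y, (0:ℝ) ≤ (W xbar y : ℝ) - W' xbar y := by
    intro y
    have : (W' xbar y : ℝ) ≤ W xbar y := by exact_mod_cast hle y
    linarith
  set D : ℝ := ∑ y, ((W xbar y : ℝ) - W' xbar y) with hD
  have hDnn : 0 ≤ D := Finset.sum_nonneg fun y _ => hdnn y
  -- D ≥ 1
  have hD1 : 1 ≤ D := by
    have hlt : ∑ y, W' xbar y < ∑ y, W xbar y := by
      have hne' : ∃ y, W' xbar y ≠ W xbar y := by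
        by_contra h
        push_neg at h
        apply hne
        funext x y
        by_cases hx : x = xbar
        · subst hx; exact h y
        · exact hoff x hx y
      obtain ⟨y0, hy0⟩ := hne'
      exact Finset.sum_lt_sum (fun y _ => hle y)
        ⟨y0, mem_univ y0, lt_of_le_of_ne (hle y0) hy0⟩
    have hc : ((∑ y, W' xbar y : ℕ) : ℝ) + 1 ≤ ((∑ y, W xbar y : ℕ) : ℝ) := by
      exact_mod_cast hlt
    have : D = ((∑ y, W xbar y : ℕ) : ℝ) - ((∑ y, W' xbar y : ℕ) : ℝ) := by
      rw [hD, Finset.sum_sub_distrib]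
      push_cast
      ring
    linarith [this, hc]
  -- row entries bounded by A
  have hrowW : ∀ y, (W xbar y : ℝ) ≤ A := by
    intro y
    have h1 : W xbar y ≤ ∑ y', W xbar y' :=
      Finset.single_le_sum (fun y' _ => Nat.zero_le _) (mem_univ y)
    have h2 : W xbar y ≤ univ.sup α := le_trans h1 (le_trans (hWr xbar) (Finset.le_sup (mem_univ xbar)))
    rw [hA]; exact_mod_cast h2
  have hrowW' : ∀ y, (W' xbar y : ℝ) ≤ A := by
    intro y
    have h1 : W' xbar y ≤ ∑ y', W' xbar y' :=
      Finset.single_le_sum (fun y' _ => Nat.zero_le _) (mem_univ y)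
    have h2 : W' xbar y ≤ univ.sup α := le_trans h1 (le_trans (hW'r xbar) (Finset.le_sup (mem_univ xbar)))
    rw [hA]; exact_mod_cast h2
  -- column sums
  set S : X → ℝ := fun y => ∑ x', (W x' y : ℝ) with hS
  set S' : X → ℝ := fun y => ∑ x', (W' x' y : ℝ) with hS'
  have hcolW : ∀ y, S y ≤ B := by
    intro y
    have h2 : ∑ x', W x' y ≤ univ.sup β := le_trans (hWc y) (Finset.le_sup (mem_univ y))
    have : S y = ((∑ x', W x' y : ℕ) : ℝ) := by rw [hS]; push_cast; ring
    rw [this, hB]; exact_mod_cast h2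
  have hSnn' : ∀ y, 0 ≤ S' y := fun y => Finset.sum_nonneg fun x _ => Nat.cast_nonneg _
  have hSdiff : ∀ y, S y - S' y = (W xbar y : ℝ) - W' xbar y := by
    intro y
    rw [hS, hS']
    rw [← Finset.sum_sub_distrib]
    rw [Finset.sum_eq_single xbar]
    · intro x _ hx
      rw [hoff x hx y]; ring
    · intro h; exact absurd (mem_univ xbar) h
  -- T1
  set T1 : ℝ := ∑ y, ((W xbar y : ℝ) ^ 2 - (W' xbar y : ℝ) ^ 2) with hT1
  have hT1nn : 0 ≤ T1 := by
    apply Finset.sum_nonneg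
    intro y _
    have := hdnn y
    nlinarith [Nat.cast_nonneg (α := ℝ) (W' xbar y)]
  have hT1le : T1 ≤ 2 * A * D := by
    rw [hT1, hD, Finset.mul_sum]
    apply Finset.sum_le_sum
    intro y _
    have h1 := hdnn y
    have h2 := hrowW y
    have h3 := hrowW' y
    nlinarith
  -- T2
  set T2 : ℝ := ∑ y ∈ univ.filter (fun y => E xbar y), (S y ^ 2 - S' y ^ 2) with hT2
  have hT2nn : 0 ≤ T2 := by
    apply Finset.sum_nonneg
    intro y _
    have h1 := hSdiff y
    have h2 := hdnn y
    have h3 := hSnn' y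
    nlinarith
  have hT2le : T2 ≤ 2 * B * D := by
    have step1 : T2 ≤ ∑ y ∈ univ.filter (fun y => E xbar y), 2 * B * ((W xbar y : ℝ) - W' xbar y) := by
      apply Finset.sum_le_sum
      intro y _
      have h1 := hSdiff y
      have h2 := hdnn y
      have h3 := hSnn' y
      have h4 := hcolW y
      nlinarith
    have step2 : ∑ y ∈ univ.filter (fun y => E xbar y), 2 * B * ((W xbar y : ℝ) - W' xbar y)
        ≤ ∑ y, 2 * B * ((W xbar y : ℝ) - W' xbar y) := by
      apply Finset.sum_le_sum_of_subset_of_nonneg (Finset.filter_subset _ _)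
      intro y _ _
      have := hdnn y
      positivity
    calc T2 ≤ _ := step1
      _ ≤ _ := step2
      _ = 2 * B * D := by rw [hD, Finset.mul_sum]
  -- key identity
  have key : UtilSpec E Call Cagg Ccon xbar W - UtilSpec E Call Cagg Ccon xbar W'
      = Call * D + Cagg * T1 - Ccon * T2 := by
    have hDalt : D = (∑ y, (W xbar y : ℝ)) - ∑ y, (W' xbar y : ℝ) := by
      rw [hD, Finset.sum_sub_distrib]
    have hT1alt : T1 = (∑ y, (W xbar y : ℝ) ^ 2) - ∑ y, (W' xbar y : ℝ) ^ 2 := by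
      rw [hT1, Finset.sum_sub_distrib]
    have hT2alt : T2 = (∑ y ∈ univ.filter (fun y => E xbar y), (∑ x', (W x' y : ℝ)) ^ 2)
        - ∑ y ∈ univ.filter (fun y => E xbar y), (∑ x', (W' x' y : ℝ)) ^ 2 := by
      rw [hT2]; simp only [hS, hS']; rw [Finset.sum_sub_distrib]
    unfold UtilSpec
    rw [hDalt, hT1alt, hT2alt]
    simp only [Finset.sum_neg_distrib, ← Finset.mul_sum]
    ring
  -- assemble
  have hCaggT1 : -(|Cagg| * (2 * A * D)) ≤ Cagg * T1 := by
    rcases abs_cases Cagg with ⟨h1, h2⟩ | ⟨h1, h2⟩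
    · nlinarith
    · nlinarith
  have hfin : 0 < UtilSpec E Call Cagg Ccon xbar W - UtilSpec E Call Cagg Ccon xbar W' := by
    rw [key]
    have h1 : Ccon * T2 ≤ Ccon * (2 * B * D) := by nlinarith
    nlinarith [mul_le_mul_of_nonneg_right (le_of_lt hmono) hDnn]
  linarith
end

section
/- Suppose (G, α, β) satisfies the existence condition. Let W ∈ 𝒲_p be a partial allocation state and let x̄ ∈ X be a unit with W^{x̄} < α_{x̄}. Then there exist ȳ ∈ N_{x̄}, an integer t ≥ 0, pairwise distinct resources y_0, y_1, …, y_t ∈ X with y_0 = ȳ, and pairwise distinct units x_0, …, x_{t−1} ∈ X such that: (Sb) for every k = 0, …, t−1 one has W_{x_k y_k} > 0 and (x_k, y_{k+1}) ∈ E (i.e. y_k →_{x_k} y_{k+1} in H_W); and (Sc) W_{y_k} = β_{y_k} for every k = 0, …, t−1, while W_{y_t} < β_{y_t}. -/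
open Finset

/-- under the existence condition, for every partial allocation
state `W` and every unit `xbar` not fully allocated there are `ȳ ∈ N_{xbar}`
and a sequence `ȳ = y_0 →_{x_0} y_1 →_{x_1} ⋯ →_{x_{t-1}} y_t` in `H_W` with
pairwise distinct `y_k`'s and pairwise distinct `x_k`'s, all `y_0, …, y_{t-1}`
saturated and `y_t` not saturated. -/
theorem augmenting_sequence_exists {X : Type*} [Fintype X] [DecidableEq X]
    (E : X → X → Prop) [DecidableRel E] (α β : X → ℕ)
    (hex : ∀ D : Finset X, ∑ x ∈ D, α x ≤ ∑ y ∈ NSet E D, β y)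
    (W : X → X → ℕ) (hW : IsPartialAlloc E α β W)
    (xbar : X) (hxbar : ∑ y, W xbar y < α xbar) :
    ∃ ybar : X, E xbar ybar ∧
      ∃ (t : ℕ) (ys : Fin (t + 1) → X) (xs : Fin t → X),
        Function.Injective ys ∧ Function.Injective xs ∧ ys 0 = ybar ∧
        (∀ k : Fin t, 0 < W (xs k) (ys k.castSucc) ∧ E (xs k) (ys k.succ)) ∧
        (∀ k : Fin t, ∑ x, W x (ys k.castSucc) = β (ys k.castSucc)) ∧
        ∑ x, W x (ys (Fin.last t)) < β (ys (Fin.last t)) := by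
  classical
  obtain ⟨hW0, hWrow, hWcol⟩ := hW
  -- the auxiliary relation: edges of `H_W`
  set R : X → X → Prop := fun y1 y2 => ∃ x, 0 < W x y1 ∧ E x y2 with hR
  -- `Good t` : there is a length-`t` walk in `H_W` from a neighbor of `xbar`
  -- to an unsaturated resource
  set Good : ℕ → Prop := fun t => ∃ ys xs : ℕ → X, E xbar (ys 0) ∧
      (∀ k < t, 0 < W (xs k) (ys k) ∧ E (xs k) (ys (k + 1))) ∧
      ∑ x, W x (ys t) < β (ys t) with hGooddef
  -- Step A: some `Good t` holds.
  have hstepA : ∃ t, Good t := by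
    -- reachable set
    set S : Finset X :=
      univ.filter (fun y => ∃ y0, E xbar y0 ∧ Relation.ReflTransGen R y0 y) with hSdef
    -- Hall-type counting: some reachable resource is unsaturated
    have hS : ∃ y ∈ S, ∑ x, W x y < β y := by
      by_contra hcon
      push_neg at hcon
      have hsat : ∀ y ∈ S, ∑ x, W x y = β y := fun y hy =>
        le_antisymm (hWcol y) (hcon y hy)
      set D : Finset X :=
        univ.filter (fun x => x = xbar ∨ ∃ y ∈ S, 0 < W x y) with hDdef
      have hxD : xbar ∈ D := by simp [hDdef]
      have hND : NSet E D ⊆ S := by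
        intro y hy
        simp only [NSet, mem_filter, mem_univ, true_and] at hy
        obtain ⟨x, hxmem, hxy⟩ := hy
        simp only [hDdef, mem_filter, mem_univ, true_and] at hxmem
        rcases hxmem with rfl | ⟨y', hy'S, hy'⟩
        · simp only [hSdef, mem_filter, mem_univ, true_and]
          exact ⟨y, hxy, Relation.ReflTransGen.refl⟩
        · simp only [hSdef, mem_filter, mem_univ, true_and] at hy'S ⊢
          obtain ⟨y0, hy0, hrt⟩ := hy'S
          exact ⟨y0, hy0, hrt.tail ⟨x, hy', hxy⟩⟩
      have h1 : ∑ x ∈ D, α x ≤ ∑ y ∈ S, β y :=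
        le_trans (hex D) (sum_le_sum_of_subset hND)
      have h2 : ∑ y ∈ S, β y = ∑ x ∈ D, ∑ y ∈ S, W x y := by
        have e1 : ∑ y ∈ S, β y = ∑ y ∈ S, ∑ x, W x y :=
          sum_congr rfl fun y hy => (hsat y hy).symm
        rw [e1, Finset.sum_comm]
        refine (sum_subset (subset_univ D) ?_).symm
        intro x _ hx
        apply Finset.sum_eq_zero
        intro y hy
        simp only [hDdef, mem_filter, mem_univ, true_and] at hx
        push_neg at hx
        by_contra hW'
        exact absurd (Nat.pos_of_ne_zero hW') (by simpa using hx.2 y hy)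
      have h3 : ∑ x ∈ D, ∑ y ∈ S, W x y < ∑ x ∈ D, α x := by
        apply Finset.sum_lt_sum (fun x _ => le_trans
          (sum_le_sum_of_subset (subset_univ S)) (hWrow x))
        exact ⟨xbar, hxD, lt_of_le_of_lt (sum_le_sum_of_subset (subset_univ S)) hxbar⟩
      omega
    obtain ⟨y, hyS, hylt⟩ := hS
    simp only [hSdef, mem_filter, mem_univ, true_and] at hyS
    obtain ⟨y0, hy0, hrt⟩ := hyS
    -- convert the reflexive-transitive chain into an indexed walk
    have hwalk : ∀ z : X, Relation.ReflTransGen R y0 z →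
        ∃ (t : ℕ) (ys xs : ℕ → X), ys 0 = y0 ∧ ys t = z ∧
          ∀ k < t, 0 < W (xs k) (ys k) ∧ E (xs k) (ys (k + 1)) := by
      intro z h
      induction h with
      | refl => exact ⟨0, fun _ => y0, fun _ => y0, rfl, rfl, by omega⟩
      | @tail b c hbc hcd ih =>
        obtain ⟨t, ys, xs, h0, hend, hedges⟩ := ih
        obtain ⟨x, hx1, hx2⟩ := hcd
        refine ⟨t + 1, fun k => if k ≤ t then ys k else c,
          fun k => if k < t then xs k else x, ?_, ?_, ?_⟩
        · simpa using h0
        · simp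
        · intro k hk
          rcases Nat.lt_or_ge k t with hkt | hkt
          · simp only [if_pos hkt.le, if_pos hkt, if_pos (Nat.succ_le_of_lt hkt)]
            exact hedges k hkt
          · have hkeq : k = t := by omega
            subst hkeq
            simp only [le_refl, if_pos, lt_irrefl, if_neg, Nat.not_succ_le_self]
            rw [hend]
            exact ⟨hx1, hx2⟩
    obtain ⟨t, ys, xs, h0, hend, hedges⟩ := hwalk y hrt
    exact ⟨t, ys, xs, h0 ▸ hy0, hedges, hend ▸ hylt⟩
  -- Step B: take a minimal such `t`
  obtain ⟨t, ht, hmin⟩ : ∃ t, Good t ∧ ∀ s < t, ¬ Good s :=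
    ⟨Nat.find hstepA, Nat.find_spec hstepA, fun s hs => Nat.find_min hstepA hs⟩
  obtain ⟨ys, xs, hE0, hedge, hlast⟩ := ht
  -- all intermediate resources are saturated
  have hsat : ∀ k < t, ∑ x, W x (ys k) = β (ys k) := by
    intro k hk
    by_contra hne
    exact hmin k hk ⟨ys, xs, hE0, fun j hj => hedge j (by omega),
      lt_of_le_of_ne (hWcol _) hne⟩
  -- the resources along the walk are pairwise distinct
  have hysinj : ∀ i j, i < j → j ≤ t → ys i ≠ ys j := by
    intro i j hij hjt heq
    set d := j - i with hd
    have hd1 : 1 ≤ d := by omega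
    set t' := t - d with ht'
    have ht't : t' < t := by omega
    refine hmin t' ht't ⟨fun k => if k ≤ i then ys k else ys (k + d),
      fun k => if k < i then xs k else xs (k + d), ?_, ?_, ?_⟩
    · simpa using hE0
    · have hys' : ∀ k, i ≤ k →
          (if k ≤ i then ys k else ys (k + d)) = ys (k + d) := by
        intro k hik
        rcases Nat.lt_or_ge i k with h | h
        · rw [if_neg (by omega)]
        · have : k = i := by omega
          subst this
          rw [if_pos le_rfl, heq]
          congr 1
          omega
      intro k hk
      beta_reduce
      rcases Nat.lt_or_ge k i with hki | hki
      · simp only [if_pos hki.le, if_pos hki, if_pos (Nat.succ_le_of_lt hki)]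
        exact hedge k (by omega)
      · rw [hys' k hki, if_neg (by omega : ¬ k < i),
          hys' (k + 1) (by omega)]
        have := hedge (k + d) (by omega)
        constructor
        · exact this.1
        · have : E (xs (k + d)) (ys (k + d + 1)) := this.2
          convert this using 2
          omega
    · beta_reduce
      have hit' : i ≤ t' := by omega
      rcases Nat.lt_or_ge i t' with h | h
      · rw [if_neg (by omega)]
        have : t' + d = t := by omega
        rw [this]
        exact hlast
      · have : t' = i := by omega
        rw [if_pos (by omega), this, heq]
        have : j = t := by omega
        rw [this]
        exact hlast
  -- the units along the walk are pairwise distinct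
  have hxsinj : ∀ i j, i < j → j < t → xs i ≠ xs j := by
    intro i j hij hjt heq
    set d := j - i with hd
    have hd1 : 1 ≤ d := by omega
    set t' := t - d with ht'
    have ht't : t' < t := by omega
    refine hmin t' ht't ⟨fun k => if k ≤ i then ys k else ys (k + d),
      fun k => if k < i then xs k else xs (k + d), ?_, ?_, ?_⟩
    · simpa using hE0
    · intro k hk
      beta_reduce
      rcases Nat.lt_or_ge k i with hki | hki
      · simp only [if_pos hki.le, if_pos hki, if_pos (Nat.succ_le_of_lt hki)]
        exact hedge k (by omega)
      · rcases Nat.lt_or_ge i k with hik | hik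
        · rw [if_neg (by omega : ¬ k ≤ i), if_neg (by omega : ¬ k < i),
            if_neg (by omega : ¬ k + 1 ≤ i)]
          have := hedge (k + d) (by omega)
          refine ⟨this.1, ?_⟩
          have h2 : E (xs (k + d)) (ys (k + d + 1)) := this.2
          convert h2 using 2
          omega
        · have : k = i := by omega
          subst this
          rw [if_pos le_rfl, if_neg (lt_irrefl _), if_neg (by omega : ¬ k + 1 ≤ k)]
          have hkd : k + d = j := by omega
          rw [hkd]
          refine ⟨?_, ?_⟩
          · rw [← heq]
            exact (hedge k (by omega)).1
          · have h2 := (hedge j hjt).2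
            convert h2 using 2
            omega
    · beta_reduce
      rw [if_neg (by omega : ¬ t' ≤ i)]
      have : t' + d = t := by omega
      rw [this]
      exact hlast
  -- assemble the conclusion
  refine ⟨ys 0, hE0, t, fun k => ys k, fun k => xs k, ?_, ?_, ?_, ?_, ?_, ?_⟩
  · intro a b hab
    by_contra hne
    rcases lt_trichotomy (a : ℕ) (b : ℕ) with h | h | h
    · exact hysinj a b h (Nat.lt_succ_iff.mp b.isLt) hab
    · exact hne (Fin.ext h)
    · exact hysinj b a h (Nat.lt_succ_iff.mp a.isLt) hab.symm
  · intro a b hab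
    by_contra hne
    rcases lt_trichotomy (a : ℕ) (b : ℕ) with h | h | h
    · exact hxsinj a b h b.isLt hab
    · exact hne (Fin.ext h)
    · exact hxsinj b a h a.isLt hab.symm
  · rfl
  · intro k
    have := hedge k k.isLt
    simpa [Fin.coe_castSucc, Fin.val_succ] using this
  · intro k
    have := hsat k k.isLt
    simpa [Fin.coe_castSucc] using this
  · simpa [Fin.val_last] using hlast
end

section
/- Suppose (G, α, β) satisfies the existence condition. Let W ∈ 𝒲_p be a partial allocation state and let x̄ ∈ X be a unit with W^{x̄} < α_{x̄}. Then there exist ȳ ∈ N_{x̄} and a resource y' ∈ X reachable from ȳ by a directed path in the graph H_W (possibly y' = ȳ) such that W_{y'} < β_{y'}. -/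
open Finset

/-- The edge relation of the graph `H_W` on resources: `y₁ →_x y₂` iff some
unit `x` has `W_{x y₁} > 0` and `(x, y₂) ∈ E`. -/
def HEdge {X : Type*} (E : X → X → Prop) (W : X → X → ℕ) (y₁ y₂ : X) : Prop :=
  ∃ x, 0 < W x y₁ ∧ E x y₂

/-- under the existence condition, for every partial allocation
state `W` and every unit `xbar` not fully allocated there exist `ȳ ∈ N_{xbar}`
and a resource `y'` reachable from `ȳ` in `H_W` with `W_{y'} < β_{y'}`. -/
theorem reachable_unsaturated_resource {X : Type*} [Fintype X] [DecidableEq X]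
    (E : X → X → Prop) [DecidableRel E] (α β : X → ℕ)
    (hex : ∀ D : Finset X, ∑ x ∈ D, α x ≤ ∑ y ∈ NSet E D, β y)
    (W : X → X → ℕ) (hW : IsPartialAlloc E α β W)
    (xbar : X) (hxbar : ∑ y, W xbar y < α xbar) :
    ∃ ybar : X, E xbar ybar ∧
      ∃ y' : X, Relation.ReflTransGen (HEdge E W) ybar y' ∧
        ∑ x, W x y' < β y' := by
  classical
  by_contra h
  push_neg at h
  obtain ⟨hzero, hrow, hcol⟩ := hW
  -- S : resources reachable from some neighbor of xbar
  set S : Finset X :=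
    univ.filter (fun y => ∃ ybar, E xbar ybar ∧ Relation.ReflTransGen (HEdge E W) ybar y)
    with hS
  -- D : xbar together with units putting positive weight in S
  set D : Finset X := insert xbar (univ.filter (fun x => ∃ y ∈ S, 0 < W x y)) with hD
  have hNsub : NSet E D ⊆ S := by
    intro y hy
    simp only [NSet, mem_filter, mem_univ, true_and] at hy
    obtain ⟨x, hxD, hxy⟩ := hy
    simp only [hS, mem_filter, mem_univ, true_and]
    rcases Finset.mem_insert.mp hxD with rfl | hx
    · exact ⟨y, hxy, Relation.ReflTransGen.refl⟩
    · simp only [mem_filter, mem_univ, true_and] at hx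
      obtain ⟨y₁, hy₁S, hpos⟩ := hx
      simp only [hS, mem_filter, mem_univ, true_and] at hy₁S
      obtain ⟨ybar, hEyb, hreach⟩ := hy₁S
      exact ⟨ybar, hEyb, hreach.tail ⟨x, hpos, hxy⟩⟩
  have hSsat : ∀ y ∈ S, β y ≤ ∑ x, W x y := by
    intro y hy
    simp only [hS, mem_filter, mem_univ, true_and] at hy
    obtain ⟨ybar, hEyb, hreach⟩ := hy
    exact h ybar hEyb y hreach
  have key : ∑ x ∈ D, α x ≤ ∑ x ∈ D, ∑ y, W x y := by
    calc ∑ x ∈ D, α x ≤ ∑ y ∈ NSet E D, β y := hex D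
      _ ≤ ∑ y ∈ S, β y := Finset.sum_le_sum_of_subset hNsub
      _ ≤ ∑ y ∈ S, ∑ x, W x y := Finset.sum_le_sum hSsat
      _ = ∑ x, ∑ y ∈ S, W x y := Finset.sum_comm
      _ = ∑ x ∈ D, ∑ y ∈ S, W x y := by
          refine (Finset.sum_subset (Finset.subset_univ D) ?_).symm
          intro x _ hxD
          refine Finset.sum_eq_zero fun y hy => ?_
          by_contra hne
          exact hxD (Finset.mem_insert.mpr (Or.inr (by
            simp only [mem_filter, mem_univ, true_and]
            exact ⟨y, hy, Nat.pos_of_ne_zero hne⟩)))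
      _ ≤ ∑ x ∈ D, ∑ y, W x y :=
          Finset.sum_le_sum fun x _ =>
            Finset.sum_le_sum_of_subset (Finset.subset_univ S)
  have hlt : ∑ x ∈ D, ∑ y, W x y < ∑ x ∈ D, α x :=
    Finset.sum_lt_sum (fun x _ => hrow x) ⟨xbar, Finset.mem_insert_self _ _, hxbar⟩
  exact absurd key (not_le.mpr hlt)
end

section
/- Assume (G, α, β) satisfies the existence condition and let (M_{x̄}(W)) be an admissible family. Then for every partial allocation state W ∈ 𝒲_p there exists a directed path in the transition graph ℒ_p from W to some allocation state W' ∈ 𝒲. -/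
open Finset

/-- Row sum `W^x`. -/
def rowSum {X : Type*} [Fintype X] (W : X → X → ℕ) (x : X) : ℕ := ∑ y, W x y

/-- Column sum `W_y`. -/
def colSum {X : Type*} [Fintype X] (W : X → X → ℕ) (y : X) : ℕ := ∑ x, W x y

/-- An admissible family of move sets `M_{x̄}(W)`:
every `W' ∈ M_{x̄}(W)` is a partial allocation state differing from `W` only in
row `x̄`, with row sum not decreased, and `W' ≠ W`; moreover
(i) a not fully allocated unit can always newly allocate some `n ≥ 1` atoms
into an unsaturated neighboring resource;
(ii) a unit can always move one atom from a used resource to a different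
unsaturated neighboring resource;
(iii) on allocation states, moves are reversible. -/
def IsAdmissible {X : Type*} [Fintype X] [DecidableEq X]
    (E : X → X → Prop) (α β : X → ℕ)
    (M : X → (X → X → ℕ) → Finset (X → X → ℕ)) : Prop :=
  (∀ (xbar : X) (W : X → X → ℕ), IsPartialAlloc E α β W → ∀ W' ∈ M xbar W,
      IsPartialAlloc E α β W' ∧ (∀ x, x ≠ xbar → ∀ y, W' x y = W x y) ∧
      rowSum W xbar ≤ rowSum W' xbar ∧ W' ≠ W) ∧
  (∀ (xbar : X) (W : X → X → ℕ), IsPartialAlloc E α β W →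
      rowSum W xbar < α xbar → ∀ y, E xbar y → colSum W y < β y →
      ∃ n : ℕ, 1 ≤ n ∧
        (fun x' y' => W x' y' + if x' = xbar ∧ y' = y then n else 0) ∈ M xbar W) ∧
  (∀ (xbar : X) (W : X → X → ℕ), IsPartialAlloc E α β W →
      ∀ y' y'' : X, y' ≠ y'' → 0 < W xbar y' → E xbar y'' → colSum W y'' < β y'' →
      (fun x z => if x = xbar ∧ z = y' then W x z - 1
        else if x = xbar ∧ z = y'' then W x z + 1 else W x z) ∈ M xbar W) ∧
  (∀ (xbar : X) (W W' : X → X → ℕ), IsAlloc E α β W → IsAlloc E α β W' →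
      (W' ∈ M xbar W ↔ W ∈ M xbar W'))

/-- One step of the transition graph `ℒ_p`: some unit `x̄` moves from `W` to
`W' ∈ M_{x̄}(W)`. -/
def MoveStep {X : Type*} (M : X → (X → X → ℕ) → Finset (X → X → ℕ))
    (W W' : X → X → ℕ) : Prop :=
  ∃ xbar : X, W' ∈ M xbar W


open Finset

section Aux

variable {X : Type*} [Fintype X] [DecidableEq X]

/-- Resources reachable from `xbar` by an alternating path of given length. -/
inductive Reach (E : X → X → Prop) (W : X → X → ℕ) (xbar : X) : X → ℕ → Prop
  | base {y : X} : E xbar y → Reach E W xbar y 0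
  | step {y₀ y x : X} {k : ℕ} : Reach E W xbar y₀ k → 0 < W x y₀ → E x y →
      Reach E W xbar y (k + 1)

/-- total deficiency -/
def defic (α : X → ℕ) (W : X → X → ℕ) : ℕ := ∑ x, (α x - rowSum W x)

lemma sum_succ_eq {f g : X → ℕ} {a : X} (ha : g a + 1 = f a)
    (h : ∀ z, z ≠ a → g z = f z) : (∑ z, g z) + 1 = ∑ z, f z := by
  have : ∀ z, g z + (if z = a then 1 else 0) = f z := by
    intro z
    by_cases hz : z = a
    · subst hz; simpa using ha
    · simp [hz, h z hz]
  calc (∑ z, g z) + 1 = ∑ z, (g z + if z = a then 1 else 0) := by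
        rw [Finset.sum_add_distrib]
        simp
    _ = ∑ z, f z := by simp only [this]

lemma sum_shift {f : X → ℕ} {a b : X} (hab : a ≠ b) (hfa : 1 ≤ f a) :
    (∑ z, (if z = a then f z - 1 else if z = b then f z + 1 else f z)) = ∑ z, f z := by
  have key : ∀ z, (if z = a then f z - 1 else if z = b then f z + 1 else f z)
      + (if z = a then 1 else 0) = f z + (if z = b then 1 else 0) := by
    intro z
    by_cases hz : z = a
    · subst hz; simp [hab, Ne.symm hab]; omega
    · by_cases hz' : z = b <;> simp [hz, hz', Ne.symm hab]
  have := congrArg (Finset.sum univ) (funext key)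
  rw [Finset.sum_add_distrib, Finset.sum_add_distrib] at this
  simp only [Finset.sum_ite_eq', Finset.mem_univ, if_true] at this
  omega

lemma reach_transfer {E : X → X → Prop} {W W₁ : X → X → ℕ} {xbar y₀ : X}
    (h : ∀ x z, z ≠ y₀ → 0 < W x z → 0 < W₁ x z) :
    ∀ {y k}, Reach E W xbar y k →
      (∃ k', k' ≤ k ∧ Reach E W₁ xbar y₀ k') ∨ (∃ k', k' ≤ k ∧ Reach E W₁ xbar y k') := by
  intro y k hr
  induction hr with
  | base hE => exact Or.inr ⟨0, le_refl 0, Reach.base hE⟩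
  | @step y₁ y x k hr₁ hpos hE IH =>
      rcases IH with ⟨k', hk', hr'⟩ | ⟨k', hk', hr'⟩
      · exact Or.inl ⟨k', hk'.trans (Nat.le_succ k), hr'⟩
      · by_cases hy : y₁ = y₀
        · subst hy; exact Or.inl ⟨k', hk'.trans (Nat.le_succ k), hr'⟩
        · exact Or.inr ⟨k' + 1, Nat.succ_le_succ hk', Reach.step hr' (h x y₁ hy hpos) hE⟩

/-- Hall-type argument: a deficient unit can reach an unsaturated resource. -/
lemma exists_unsat_reach {E : X → X → Prop} [DecidableRel E] {α β : X → ℕ}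
    (hex : ∀ D : Finset X, ∑ x ∈ D, α x ≤ ∑ y ∈ NSet E D, β y)
    {W : X → X → ℕ} (hW : IsPartialAlloc E α β W) {xbar : X}
    (hdef : rowSum W xbar < α xbar) :
    ∃ y k, Reach E W xbar y k ∧ colSum W y < β y := by
  classical
  by_contra hcon
  push_neg at hcon
  set D : Finset X := univ.filter
      (fun x => x = xbar ∨ ∃ y, (∃ k, Reach E W xbar y k) ∧ 0 < W x y) with hD
  have hxbarD : xbar ∈ D := by simp [hD]
  have hreachN : ∀ y ∈ NSet E D, ∃ k, Reach E W xbar y k := by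
    intro y hy
    simp only [NSet, mem_filter, mem_univ, true_and] at hy
    obtain ⟨x, hxD, hE⟩ := hy
    simp only [hD, mem_filter, mem_univ, true_and] at hxD
    rcases hxD with rfl | ⟨y', ⟨k, hr⟩, hpos⟩
    · exact ⟨0, Reach.base hE⟩
    · exact ⟨k + 1, Reach.step hr hpos hE⟩
  have h1 : ∑ y ∈ NSet E D, β y ≤ ∑ y ∈ NSet E D, colSum W y := by
    apply Finset.sum_le_sum
    intro y hy
    obtain ⟨k, hr⟩ := hreachN y hy
    exact hcon y k hr
  have h2 : ∑ y ∈ NSet E D, colSum W y = ∑ x ∈ D, ∑ y ∈ NSet E D, W x y := by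
    have hcs : ∀ y ∈ NSet E D, colSum W y = ∑ x ∈ D, W x y := by
      intro y hy
      rw [colSum]
      symm
      apply Finset.sum_subset (Finset.subset_univ D)
      intro x _ hxD
      by_contra hpos
      apply hxD
      simp only [hD, mem_filter, mem_univ, true_and]
      exact Or.inr ⟨y, hreachN y hy, Nat.pos_of_ne_zero hpos⟩
    rw [Finset.sum_congr rfl hcs, Finset.sum_comm]
  have h3 : ∀ x, ∑ y ∈ NSet E D, W x y ≤ rowSum W x := by
    intro x
    exact Finset.sum_le_sum_of_subset (Finset.subset_univ _)
  have h4 : ∑ x ∈ D, rowSum W x < ∑ x ∈ D, α x := by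
    apply Finset.sum_lt_sum
    · intro i _; exact hW.2.1 i
    · exact ⟨xbar, hxbarD, hdef⟩
  have := hex D
  have h5 : ∑ x ∈ D, ∑ y ∈ NSet E D, W x y ≤ ∑ x ∈ D, rowSum W x :=
    Finset.sum_le_sum fun i _ => h3 i
  omega

end Aux

section Aug

variable {X : Type*} [Fintype X] [DecidableEq X]

lemma augment {E : X → X → Prop} {α β : X → ℕ}
    {M : X → (X → X → ℕ) → Finset (X → X → ℕ)} (hM : IsAdmissible E α β M)
    (xbar : X) :
    ∀ k (W : X → X → ℕ), IsPartialAlloc E α β W → rowSum W xbar < α xbar →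
      ∀ y, Reach E W xbar y k → colSum W y < β y →
      ∃ W', Relation.ReflTransGen (MoveStep M) W W' ∧ IsPartialAlloc E α β W' ∧
        defic α W' < defic α W := by
  intro k
  induction k using Nat.strong_induction_on with
  | _ k IH =>
    intro W hW hdef y hreach hunsat
    cases hreach with
    | base hE =>
      obtain ⟨n, hn, hmem⟩ := hM.2.1 xbar W hW hdef y hE hunsat
      set W' : X → X → ℕ :=
        fun x' y' => W x' y' + if x' = xbar ∧ y' = y then n else 0 with hW'def
      have hW' : IsPartialAlloc E α β W' := (hM.1 xbar W hW W' hmem).1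
      refine ⟨W', Relation.ReflTransGen.single ⟨xbar, hmem⟩, hW', ?_⟩
      have hrow : ∀ x, rowSum W' x = rowSum W x + if x = xbar then n else 0 := by
        intro x
        simp only [rowSum, hW'def, Finset.sum_add_distrib]
        congr 1
        by_cases hx : x = xbar <;> simp [hx]
      have hle : rowSum W' xbar ≤ α xbar := hW'.2.1 xbar
      apply Finset.sum_lt_sum
      · intro i _
        rw [hrow i]
        split <;> omega
      · refine ⟨xbar, Finset.mem_univ xbar, ?_⟩
        have hle' : rowSum W xbar + n ≤ α xbar := by
          rw [hrow xbar] at hle; simpa using hle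
        rw [hrow xbar]
        split
        · exact Nat.sub_lt_sub_left hdef (Nat.lt_add_of_pos_right hn)
        · exact absurd rfl (by assumption)
    | @step y₀ y x k₀ hr₀ hpos hE =>
      by_cases hy₀ : colSum W y₀ < β y₀
      · exact IH k₀ (Nat.lt_succ_self k₀) W hW hdef y₀ hr₀ hy₀
      · push_neg at hy₀
        have hne : y₀ ≠ y := by
          rintro rfl; exact absurd hunsat (not_lt.mpr hy₀)
        obtain hmem := hM.2.2.1 x W hW y₀ y hne hpos hE hunsat
        set W₁ : X → X → ℕ := fun x' z => if x' = x ∧ z = y₀ then W x' z - 1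
          else if x' = x ∧ z = y then W x' z + 1 else W x' z with hW₁def
        have hW₁ : IsPartialAlloc E α β W₁ := (hM.1 x W hW W₁ hmem).1
        -- reachability transfers
        have htrans : ∀ x' z, z ≠ y₀ → 0 < W x' z → 0 < W₁ x' z := by
          intro x' z hz hp
          simp only [hW₁def, hz, and_false, if_false]
          split <;> omega
        have hreach₁ : ∃ k', k' ≤ k₀ ∧ Reach E W₁ xbar y₀ k' := by
          rcases reach_transfer htrans hr₀ with h | h <;> exact h
        obtain ⟨k', hk', hr₁⟩ := hreach₁
        -- column sums
        have hcolβ : colSum W y₀ ≤ β y₀ := hW.2.2 y₀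
        have hcW : 0 < colSum W y₀ := by
          rw [colSum]
          exact lt_of_lt_of_le hpos (Finset.single_le_sum (f := fun x' => W x' y₀)
            (fun i _ => Nat.zero_le _) (Finset.mem_univ x))
        have hcol₁ : colSum W₁ y₀ + 1 = colSum W y₀ := by
          apply sum_succ_eq (a := x)
          · have hx : W₁ x y₀ = W x y₀ - 1 := by simp [hW₁def]
            omega
          · intro z hz
            simp only [hW₁def]
            simp [hz, Ne.symm hne]
        have hunsat₁ : colSum W₁ y₀ < β y₀ := by omega
        -- row sums are preserved
        have hrow : ∀ x', rowSum W₁ x' = rowSum W x' := by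
          intro x'
          by_cases hx : x' = x
          · subst hx
            simp only [rowSum, hW₁def, true_and]
            exact sum_shift (Ne.symm hne).symm hpos
          · simp only [rowSum, hW₁def, hx, false_and, if_false]
        have hdef₁ : rowSum W₁ xbar < α xbar := by rw [hrow]; exact hdef
        obtain ⟨W', hpath, hW'p, hlt⟩ :=
          IH k' (Nat.lt_succ_of_le hk') W₁ hW₁ hdef₁ y₀ hr₁ hunsat₁
        refine ⟨W', Relation.ReflTransGen.head ⟨x, hmem⟩ hpath, hW'p, ?_⟩
        have : defic α W₁ = defic α W := by
          unfold defic
          exact Finset.sum_congr rfl fun i _ => by rw [hrow i]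
        omega

end Aug


/-- under the existence condition, for any admissible family,
from every partial allocation state there is a path in `ℒ_p` to some
allocation state. -/
theorem path_to_allocation {X : Type*} [Fintype X] [DecidableEq X]
    (E : X → X → Prop) [DecidableRel E] (α β : X → ℕ)
    (hex : ∀ D : Finset X, ∑ x ∈ D, α x ≤ ∑ y ∈ NSet E D, β y)
    (M : X → (X → X → ℕ) → Finset (X → X → ℕ))
    (hM : IsAdmissible E α β M)
    (W : X → X → ℕ) (hW : IsPartialAlloc E α β W) :
    ∃ W' : X → X → ℕ, IsAlloc E α β W' ∧
      Relation.ReflTransGen (MoveStep M) W W' := by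
  classical
  suffices h : ∀ n (W : X → X → ℕ), defic α W = n → IsPartialAlloc E α β W →
      ∃ W', IsAlloc E α β W' ∧ Relation.ReflTransGen (MoveStep M) W W' from
    h _ W rfl hW
  intro n
  induction n using Nat.strong_induction_on with
  | _ n IH =>
    intro W hn hWp
    by_cases hall : ∀ x, rowSum W x = α x
    · exact ⟨W, ⟨hWp, hall⟩, Relation.ReflTransGen.refl⟩
    · push_neg at hall
      obtain ⟨xbar, hxbar⟩ := hall
      have hdef : rowSum W xbar < α xbar := lt_of_le_of_ne (hWp.2.1 xbar) hxbar
      obtain ⟨y, k, hreach, hunsat⟩ := exists_unsat_reach hex hWp hdef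
      obtain ⟨W₁, hpath, hW₁, hlt⟩ := augment hM xbar k W hWp hdef y hreach hunsat
      obtain ⟨W', hW', hpath'⟩ := IH (defic α W₁) (hn ▸ hlt) W₁ rfl hW₁
      exact ⟨W', hW', hpath.trans hpath'⟩
end

section
/- Suppose (G, α, β) satisfies the strict existence condition and let W ∈ 𝒲 be an allocation state. Then for every resource ȳ ∈ X with β_{ȳ} ≥ 1 there exist an integer t ≥ 0, pairwise distinct resources y_0, y_1, …, y_t ∈ X with y_0 = ȳ, and pairwise distinct units x_0, …, x_{t−1} ∈ X such that: for every k = 0, …, t−1 one has W_{x_k y_k} > 0 and (x_k, y_{k+1}) ∈ E (i.e. y_k →_{x_k} y_{k+1} in H_W); W_{y_k} = β_{y_k} for every k = 0, …, t−1; and W_{y_t} < β_{y_t}. -/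
open Finset

/-- under the strict existence condition, for every allocation
state `W` and every resource `ȳ` with `β_{ȳ} ≥ 1` there is a sequence
`ȳ = y_0 →_{x_0} y_1 →_{x_1} ⋯ →_{x_{t-1}} y_t` in `H_W` with pairwise
distinct `y_k`'s and pairwise distinct `x_k`'s, all of `y_0, …, y_{t-1}`
saturated and `y_t` not saturated. -/
theorem augmenting_sequence_exists_strict {X : Type*} [Fintype X] [DecidableEq X]
    (E : X → X → Prop) [DecidableRel E] (α β : X → ℕ)
    (hstrict : ∀ D : Finset X, D.Nonempty →
      ∑ x ∈ D, α x < ∑ y ∈ NSet E D, β y)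
    (W : X → X → ℕ) (hW : IsAlloc E α β W)
    (ybar : X) (hybar : 1 ≤ β ybar) :
    ∃ (t : ℕ) (ys : Fin (t + 1) → X) (xs : Fin t → X),
      Function.Injective ys ∧ Function.Injective xs ∧ ys 0 = ybar ∧
      (∀ k : Fin t, 0 < W (xs k) (ys k.castSucc) ∧ E (xs k) (ys k.succ)) ∧
      (∀ k : Fin t, ∑ x, W x (ys k.castSucc) = β (ys k.castSucc)) ∧
      ∑ x, W x (ys (Fin.last t)) < β (ys (Fin.last t)) := by
  classical
  obtain ⟨⟨hE0, hrow, hcol⟩, hsum⟩ := hW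
  set HW : X → X → Prop := fun y1 y2 => ∃ x, 0 < W x y1 ∧ E x y2 with hHWdef
  -- Step 1: some unsaturated resource is reachable from ybar
  have step1 : ∃ y, Relation.ReflTransGen HW ybar y ∧ ∑ x, W x y < β y := by
    by_contra hcon
    push_neg at hcon
    set R : Finset X := univ.filter (fun y => Relation.ReflTransGen HW ybar y) with hR
    have hmemR : ∀ y, y ∈ R ↔ Relation.ReflTransGen HW ybar y := by
      intro y; simp [hR]
    have hsat : ∀ y ∈ R, ∑ x, W x y = β y := by
      intro y hy
      exact le_antisymm (hcol y) (hcon y ((hmemR y).1 hy))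
    set D : Finset X := univ.filter (fun x => ∃ y ∈ R, 0 < W x y) with hD
    have hmemD : ∀ x, x ∈ D ↔ ∃ y ∈ R, 0 < W x y := by
      intro x; simp [hD]
    have hybarR : ybar ∈ R := (hmemR ybar).2 Relation.ReflTransGen.refl
    have hclos : ∀ x ∈ D, ∀ y, 0 < W x y → y ∈ R := by
      intro x hx y hy
      obtain ⟨y0, hy0R, hy0⟩ := (hmemD x).1 hx
      have hExy : E x y := by
        by_contra hne
        exact absurd (hE0 x y hne) (by omega)
      exact (hmemR y).2 (((hmemR y0).1 hy0R).tail ⟨x, hy0, hExy⟩)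
    have hDne : D.Nonempty := by
      have h1 : ∑ x, W x ybar = β ybar := hsat ybar hybarR
      have h2 : ∃ x, 0 < W x ybar := by
        by_contra hno
        push_neg at hno
        simp only [Nat.le_zero] at hno
        rw [Finset.sum_eq_zero (fun x _ => hno x)] at h1
        omega
      obtain ⟨x, hx⟩ := h2
      exact ⟨x, (hmemD x).2 ⟨ybar, hybarR, hx⟩⟩
    have hND : NSet E D ⊆ R := by
      intro y hy
      simp only [NSet, mem_filter, mem_univ, true_and] at hy
      obtain ⟨x, hxD, hxy⟩ := hy
      obtain ⟨y0, hy0R, hy0⟩ := (hmemD x).1 hxD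
      exact (hmemR y).2 (((hmemR y0).1 hy0R).tail ⟨x, hy0, hxy⟩)
    have key : ∑ x ∈ D, α x = ∑ y ∈ R, β y := by
      have e1 : ∑ x ∈ D, α x = ∑ x ∈ D, ∑ y ∈ R, W x y := by
        refine Finset.sum_congr rfl (fun x hx => ?_)
        rw [← hsum x]
        rw [← Finset.sum_filter_add_sum_filter_not univ (fun y => y ∈ R) (W x)]
        have hz : ∑ y ∈ univ.filter (fun y => y ∉ R), W x y = 0 := by
          refine Finset.sum_eq_zero (fun y hy => ?_)
          simp only [mem_filter, mem_univ, true_and] at hy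
          by_contra h
          exact hy (hclos x hx y (by omega))
        rw [hz, add_zero]
        refine Finset.sum_congr ?_ (fun _ _ => rfl)
        ext y; simp
      have e2 : ∑ y ∈ R, β y = ∑ y ∈ R, ∑ x ∈ D, W x y := by
        refine Finset.sum_congr rfl (fun y hy => ?_)
        rw [← hsat y hy]
        rw [← Finset.sum_filter_add_sum_filter_not univ (fun x => x ∈ D) (fun x => W x y)]
        have hz : ∑ x ∈ univ.filter (fun x => x ∉ D), W x y = 0 := by
          refine Finset.sum_eq_zero (fun x hx => ?_)
          simp only [mem_filter, mem_univ, true_and] at hx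
          by_contra h
          exact hx ((hmemD x).2 ⟨y, hy, by omega⟩)
        rw [hz, add_zero]
        refine Finset.sum_congr ?_ (fun _ _ => rfl)
        ext x; simp
      rw [e1, e2, Finset.sum_comm]
    have hlt := hstrict D hDne
    have hle : ∑ y ∈ NSet E D, β y ≤ ∑ y ∈ R, β y :=
      Finset.sum_le_sum_of_subset hND
    omega
  -- Step 2: convert reachability to a Fin-indexed path
  have step2 : ∀ y, Relation.ReflTransGen HW ybar y →
      ∃ t, ∃ ys : Fin (t+1) → X, ∃ xs : Fin t → X,
        ys 0 = ybar ∧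
        (∀ k : Fin t, 0 < W (xs k) (ys k.castSucc) ∧ E (xs k) (ys k.succ)) ∧
        ys (Fin.last t) = y := by
    intro y hy
    induction hy with
    | refl => exact ⟨0, fun _ => ybar, Fin.elim0, rfl, fun k => k.elim0, rfl⟩
    | @tail b c hab hbc ih =>
        obtain ⟨t, ys, xs, h0, hedge, hlast⟩ := ih
        obtain ⟨x, hx1, hx2⟩ := hbc
        refine ⟨t + 1, Fin.snoc ys c, Fin.snoc xs x, ?_, ?_, ?_⟩
        · rw [← Fin.castSucc_zero, Fin.snoc_castSucc]
          exact h0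
        · intro k
          refine Fin.lastCases ?_ ?_ k
          · constructor
            · rw [Fin.snoc_last, Fin.snoc_castSucc, hlast]
              exact hx1
            · rw [Fin.snoc_last, Fin.succ_last, Fin.snoc_last]
              exact hx2
          · intro i
            constructor
            · simp only [Fin.snoc_castSucc]
              exact (hedge i).1
            · rw [Fin.succ_castSucc]
              simp only [Fin.snoc_castSucc]
              exact (hedge i).2
        · rw [Fin.snoc_last]
  -- The predicate: a path from ybar to an unsaturated resource of length t
  set Q : ℕ → Prop := fun t =>
    ∃ ys : Fin (t+1) → X, ∃ xs : Fin t → X,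
      ys 0 = ybar ∧
      (∀ k : Fin t, 0 < W (xs k) (ys k.castSucc) ∧ E (xs k) (ys k.succ)) ∧
      ∑ x, W x (ys (Fin.last t)) < β (ys (Fin.last t)) with hQdef
  have hQex : ∃ t, Q t := by
    obtain ⟨y, hy, huns⟩ := step1
    obtain ⟨t, ys, xs, h0, hedge, hlast⟩ := step2 y hy
    exact ⟨t, ys, xs, h0, hedge, by rw [hlast]; exact huns⟩
  set t₀ := Nat.find hQex with ht₀
  obtain ⟨ys, xs, h0, hedge, hlast⟩ : Q t₀ := Nat.find_spec hQex
  have hmin : ∀ m, m < t₀ → ¬ Q m := fun m hm => Nat.find_min hQex hm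
  have yext : ∀ a b : Fin (t₀+1), a.val = b.val → ys a = ys b :=
    fun a b h => congrArg ys (Fin.ext h)
  have xext : ∀ a b : Fin t₀, a.val = b.val → xs a = xs b :=
    fun a b h => congrArg xs (Fin.ext h)
  -- saturation of intermediate resources (via truncation + minimality)
  have hsat : ∀ k : Fin t₀, ∑ x, W x (ys k.castSucc) = β (ys k.castSucc) := by
    intro k
    refine le_antisymm (hcol _) ?_
    by_contra hlt
    push_neg at hlt
    refine hmin k.val k.isLt ?_
    obtain ⟨ys', hys'⟩ : ∃ f : Fin (k.val + 1) → X,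
        ∀ m : Fin (k.val + 1), f m = ys ⟨m.val, by omega⟩ := ⟨_, fun m => rfl⟩
    obtain ⟨xs', hxs'⟩ : ∃ f : Fin k.val → X,
        ∀ m : Fin k.val, f m = xs ⟨m.val, by omega⟩ := ⟨_, fun m => rfl⟩
    refine ⟨ys', xs', ?_, ?_, ?_⟩
    · rw [hys' 0]
      exact (yext _ 0 (by simp)).trans h0
    · intro m
      have hm : m.val < t₀ := by omega
      rw [hxs' m, hys' m.castSucc, hys' m.succ]
      constructor
      · have h' := (hedge ⟨m.val, hm⟩).1
        rwa [xext ⟨m.val, hm⟩ ⟨m.val, by omega⟩ rfl,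
          yext (Fin.castSucc ⟨m.val, hm⟩) ⟨(Fin.castSucc m).val, by omega⟩
            (by show m.val = (Fin.castSucc m).val; simp)] at h'
      · have h' := (hedge ⟨m.val, hm⟩).2
        rwa [xext ⟨m.val, hm⟩ ⟨m.val, by omega⟩ rfl,
          yext (Fin.succ ⟨m.val, hm⟩) ⟨(Fin.succ m).val, by omega⟩
            (by show m.val + 1 = (Fin.succ m).val; simp)] at h'
    · rw [hys' (Fin.last k.val)]
      have e : ys ⟨(Fin.last k.val).val, by omega⟩ = ys k.castSucc :=
        yext _ _ (by simp)
      rw [e]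
      exact hlt
  -- the splice lemma: a strictly shorter path exists, hence False by minimality
  have splice : ∀ a b : ℕ, ∀ hab : a < b, ∀ hbt : b ≤ t₀,
      (∀ hb : b < t₀, 0 < W (xs ⟨b, hb⟩) (ys ⟨a, by omega⟩)) →
      (b = t₀ → ys ⟨a, by omega⟩ = ys (Fin.last t₀)) → False := by
    intro a b hab hbt h1 h2
    set d := b - a with hd
    have hd1 : 1 ≤ d := by omega
    have hdt : d ≤ t₀ := by omega
    refine hmin (t₀ - d) (by omega) ?_
    obtain ⟨ys', hys'⟩ : ∃ f : Fin (t₀ - d + 1) → X,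
        ∀ m : Fin (t₀ - d + 1), f m = if _ : m.val ≤ a then ys ⟨m.val, by omega⟩
          else ys ⟨m.val + d, by omega⟩ := ⟨_, fun m => rfl⟩
    obtain ⟨xs', hxs'⟩ : ∃ f : Fin (t₀ - d) → X,
        ∀ m : Fin (t₀ - d), f m = if _ : m.val < a then xs ⟨m.val, by omega⟩
          else xs ⟨m.val + d, by omega⟩ := ⟨_, fun m => rfl⟩
    refine ⟨ys', xs', ?_, ?_, ?_⟩
    · rw [hys' 0]
      simp only [Fin.val_zero]
      simp only [Nat.zero_le, ↓reduceDIte]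
      exact (yext _ 0 (by simp)).trans h0
    · intro k
      have hk : k.val < t₀ - d := k.isLt
      rw [hxs' k, hys' k.castSucc, hys' k.succ]
      simp only [Fin.coe_castSucc, Fin.val_succ]
      rcases lt_trichotomy k.val a with hka | hka | hka
      · -- k.val < a
        rw [dif_pos hka, dif_pos (le_of_lt hka), dif_pos (Nat.succ_le_of_lt hka)]
        have hm : k.val < t₀ := by omega
        constructor
        · have h' := (hedge ⟨k.val, hm⟩).1
          rwa [xext ⟨k.val, hm⟩ ⟨k.val, by omega⟩ rfl,
            yext (Fin.castSucc ⟨k.val, hm⟩) ⟨k.val, by omega⟩ rfl] at h'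
        · have h' := (hedge ⟨k.val, hm⟩).2
          rwa [xext ⟨k.val, hm⟩ ⟨k.val, by omega⟩ rfl,
            yext (Fin.succ ⟨k.val, hm⟩) ⟨k.val + 1, by omega⟩ rfl] at h'
      · -- k.val = a : the boundary edge
        have hb : b < t₀ := by omega
        have hnlt : ¬ k.val < a := by omega
        have hle : k.val ≤ a := le_of_eq hka
        have hnle : ¬ k.val + 1 ≤ a := by omega
        rw [dif_neg hnlt, dif_pos hle, dif_neg hnle]
        constructor
        · rw [xext ⟨k.val + d, by omega⟩ ⟨b, hb⟩ (by show k.val + d = b; omega),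
            yext ⟨k.val, by omega⟩ ⟨a, by omega⟩ (by show k.val = a; omega)]
          exact h1 hb
        · rw [xext ⟨k.val + d, by omega⟩ ⟨b, hb⟩ (by show k.val + d = b; omega),
            yext ⟨k.val + 1 + d, by omega⟩ ⟨b + 1, by omega⟩
              (by show k.val + 1 + d = b + 1; omega)]
          have h' := (hedge ⟨b, hb⟩).2
          rwa [yext (Fin.succ ⟨b, hb⟩) ⟨b + 1, by omega⟩ rfl] at h'
      · -- k.val > a
        have hnlt : ¬ k.val < a := by omega
        have hnle : ¬ k.val ≤ a := by omega
        have hnle' : ¬ k.val + 1 ≤ a := by omega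
        rw [dif_neg hnlt, dif_neg hnle, dif_neg hnle']
        have hm : k.val + d < t₀ := by omega
        constructor
        · have h' := (hedge ⟨k.val + d, hm⟩).1
          rwa [xext ⟨k.val + d, hm⟩ ⟨k.val + d, by omega⟩ rfl,
            yext (Fin.castSucc ⟨k.val + d, hm⟩) ⟨k.val + d, by omega⟩ rfl] at h'
        · have h' := (hedge ⟨k.val + d, hm⟩).2
          rwa [xext ⟨k.val + d, hm⟩ ⟨k.val + d, by omega⟩ rfl,
            yext (Fin.succ ⟨k.val + d, hm⟩) ⟨k.val + 1 + d, by omega⟩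
              (by show k.val + d + 1 = k.val + 1 + d; omega)] at h'
    · rw [hys' (Fin.last (t₀ - d))]
      simp only [Fin.val_last]
      rcases Nat.lt_or_ge a (t₀ - d) with hc | hc
      · have hnle : ¬ t₀ - d ≤ a := by omega
        rw [dif_neg hnle]
        have e : ys ⟨t₀ - d + d, by omega⟩ = ys (Fin.last t₀) :=
          yext _ _ (by simp [Fin.val_last]; omega)
        rw [e]
        exact hlast
      · -- then t₀ - d = a and b = t₀
        have ha : t₀ - d ≤ a := hc
        have hb : b = t₀ := by omega
        rw [dif_pos ha]
        have e : ys ⟨t₀ - d, by omega⟩ = ys ⟨a, by omega⟩ :=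
          yext _ _ (by show t₀ - d = a; omega)
        rw [e, h2 hb]
        exact hlast
  -- injectivity of ys
  have hysinj : Function.Injective ys := by
    have key : ∀ i j : Fin (t₀+1), i.val < j.val → ys i ≠ ys j := by
      intro i j hij heq
      refine splice i.val j.val hij (by omega) ?_ ?_
      · intro hb
        have h' := (hedge ⟨j.val, hb⟩).1
        rwa [yext (Fin.castSucc ⟨j.val, hb⟩) j rfl, ← heq,
          yext i ⟨i.val, by omega⟩ rfl] at h'
      · intro hbt
        rw [yext ⟨i.val, by omega⟩ i rfl, heq]
        exact yext _ _ (by simp [Fin.val_last, hbt])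
    intro i j heq
    rcases lt_trichotomy i.val j.val with h | h | h
    · exact absurd heq (key i j h)
    · exact Fin.ext h
    · exact absurd heq.symm (key j i h)
  -- injectivity of xs
  have hxsinj : Function.Injective xs := by
    have key : ∀ i j : Fin t₀, i.val < j.val → xs i ≠ xs j := by
      intro i j hij heq
      refine splice i.val j.val hij (by omega) ?_ ?_
      · intro hb
        have h' := (hedge i).1
        rwa [heq, xext j ⟨j.val, hb⟩ rfl,
          yext (Fin.castSucc i) ⟨i.val, by omega⟩ rfl] at h'
      · intro hbt
        exact absurd hbt (by omega)
    intro i j heq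
    rcases lt_trichotomy i.val j.val with h | h | h
    · exact absurd heq (key i j h)
    · exact Fin.ext h
    · exact absurd heq.symm (key j i h)
  exact ⟨t₀, ys, xs, hysinj, hxsinj, h0, hedge, hsat, hlast⟩
end

section
/- Let (M_{x̄}(W)) be an admissible family and let {W¹, W²} be a minimal pair of allocation states. If y ∈ X is such that W¹_y < β_y (i.e. Σ_x W¹_{xy} < β_y), then W¹_{xy} = W²_{xy} for all x ∈ X. -/
open Finset

/-- The distance `δ(W¹, W²) = Σ_{x,y} |W¹_{xy} − W²_{xy}|`. -/
def allocDist {X : Type*} [Fintype X] (W1 W2 : X → X → ℕ) : ℕ :=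
  ∑ x, ∑ y, Nat.dist (W1 x y) (W2 x y)


lemma exists_surplus {X : Type*} [Fintype X] (A B : X → ℕ)
    (hsum : ∑ b, A b = ∑ b, B b) (y : X) (h : A y < B y) : ∃ y', B y' < A y' := by
  by_contra h'
  push_neg at h'
  have := Finset.sum_lt_sum (fun i (_ : i ∈ Finset.univ) => h' i)
    ⟨y, Finset.mem_univ y, h⟩
  omega

lemma allocDist_comm {X : Type*} [Fintype X] (W V : X → X → ℕ) :
    allocDist W V = allocDist V W := by
  simp [allocDist, Nat.dist_comm]

lemma move_dist_lt {X : Type*} [Fintype X] [DecidableEq X] (W V : X → X → ℕ)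
    (x y y' : X) (h1 : W x y' < V x y') (h2 : V x y < W x y) :
    allocDist W (fun a b => if a = x ∧ b = y' then V a b - 1
      else if a = x ∧ b = y then V a b + 1 else V a b) < allocDist W V := by
  have hyy : y ≠ y' := by rintro rfl; omega
  unfold allocDist
  apply Finset.sum_lt_sum
  · intro a _
    apply Finset.sum_le_sum
    intro b _
    simp only [Nat.dist]
    split_ifs with hb hc
    · obtain ⟨rfl, rfl⟩ := hb; omega
    · obtain ⟨rfl, rfl⟩ := hc; omega
    · omega
  · refine ⟨x, Finset.mem_univ x, ?_⟩
    apply Finset.sum_lt_sum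
    · intro b _
      simp only [Nat.dist]
      split_ifs with hb hc
      · obtain ⟨-, rfl⟩ := hb; omega
      · obtain ⟨-, rfl⟩ := hc; omega
      · omega
    · refine ⟨y, Finset.mem_univ y, ?_⟩
      simp only [Nat.dist]
      split_ifs with hb hc
      · exact absurd hb.2 hyy
      · omega
      · exact absurd (by simp) hc

/-- if `{W¹, W²}` is a minimal pair of allocation states (no pair
of states reachable from them in `ℒ` is strictly closer) and the resource `y`
is unsaturated under `W¹`, then the columns of `W¹` and `W²` at `y` agree. -/
theorem minimal_pair_column_eq {X : Type*} [Fintype X] [DecidableEq X]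
    (E : X → X → Prop) (α β : X → ℕ)
    (M : X → (X → X → ℕ) → Finset (X → X → ℕ))
    (hM : IsAdmissible E α β M)
    (W1 W2 : X → X → ℕ) (h1 : IsAlloc E α β W1) (h2 : IsAlloc E α β W2)
    (hmin : ∀ W1' W2' : X → X → ℕ,
      Relation.ReflTransGen (MoveStep M) W1 W1' →
      Relation.ReflTransGen (MoveStep M) W2 W2' →
      allocDist W1 W2 ≤ allocDist W1' W2')
    (y : X) (hy : colSum W1 y < β y) :
    ∀ x : X, W1 x y = W2 x y := by
  have hclaimA : ∀ x0, W2 x0 y ≤ W1 x0 y := by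
    intro x0
    by_contra hlt
    push_neg at hlt
    have hE : E x0 y := by
      by_contra hE
      have := h2.1.1 x0 y hE
      omega
    obtain ⟨y', hy'⟩ := exists_surplus (W1 x0) (W2 x0)
      (by rw [h1.2 x0, h2.2 x0]) y hlt
    have hne' : y' ≠ y := by rintro rfl; omega
    have hmem := hM.2.2.1 x0 W1 h1.1 y' y hne' (by omega) hE hy
    have hle := hmin _ W2 (Relation.ReflTransGen.single ⟨x0, hmem⟩)
      Relation.ReflTransGen.refl
    have hlt2 := move_dist_lt W2 W1 x0 y y' hy' hlt
    rw [allocDist_comm W2, allocDist_comm W2 W1] at hlt2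
    omega
  have hcol2 : colSum W2 y < β y := by
    have h := Finset.sum_le_sum (s := Finset.univ) (fun a _ => hclaimA a)
    simp only [colSum] at hy ⊢
    omega
  intro x
  by_contra hne
  have hlt : W2 x y < W1 x y := (hclaimA x).lt_of_ne (fun h => hne h.symm)
  have hE : E x y := by
    by_contra hE
    have := h1.1.1 x y hE
    omega
  obtain ⟨y', hy'⟩ := exists_surplus (W2 x) (W1 x)
    (by rw [h1.2 x, h2.2 x]) y hlt
  have hne' : y' ≠ y := by rintro rfl; omega
  have hmem := hM.2.2.1 x W2 h2.1 y' y hne' (by omega) hE hcol2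
  have hle := hmin W1 _ Relation.ReflTransGen.refl
    (Relation.ReflTransGen.single ⟨x, hmem⟩)
  have hlt2 := move_dist_lt W1 W2 x y y' hy' hlt
  omega
end

section
/- If (G, α, β) satisfies the strict existence condition and (M_{x̄}(W)) is an admissible family, then the graph ℒ on the set 𝒲 of allocation states is connected: any two allocation states are joined by a path in ℒ. -/
open Finset

set_option linter.unusedSectionVars false

section Proof

variable {X : Type*} [Fintype X] [DecidableEq X] {E : X → X → Prop} [DecidableRel E]
  {α β : X → ℕ} {M : X → (X → X → ℕ) → Finset (X → X → ℕ)}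

/-- The elementary transfer move of rule (ii). -/
def mv (W : X → X → ℕ) (xbar y' y'' : X) : X → X → ℕ :=
  fun x z => if x = xbar ∧ z = y' then W x z - 1
    else if x = xbar ∧ z = y'' then W x z + 1 else W x z

lemma mv_int {W : X → X → ℕ} {xb a b : X} (hab : a ≠ b) (ha : 0 < W xb a) (p q : X) :
    (mv W xb a b p q : ℤ) = (W p q : ℤ) + (if p = xb ∧ q = b then 1 else 0)
      - (if p = xb ∧ q = a then 1 else 0) := by
  simp only [mv]
  split_ifs with h1 h2 h3
  · exact absurd h2.2 (by obtain ⟨rfl, rfl⟩ := h1; exact hab)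
  · obtain ⟨rfl, rfl⟩ := h1; omega
  · omega
  · omega

lemma rowSum_int (W : X → X → ℕ) (p : X) : (rowSum W p : ℤ) = ∑ y, (W p y : ℤ) := by
  unfold rowSum; push_cast; ring

lemma colSum_int (W : X → X → ℕ) (y : X) : (colSum W y : ℤ) = ∑ x, (W x y : ℤ) := by
  unfold colSum; push_cast; ring

lemma rowSum_mv (W : X → X → ℕ) {xb a b : X} (hab : a ≠ b) (ha : 0 < W xb a) (p : X) :
    rowSum (mv W xb a b) p = rowSum W p := by
  have : (rowSum (mv W xb a b) p : ℤ) = (rowSum W p : ℤ) := by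
    rw [rowSum_int, rowSum_int]
    rw [Finset.sum_congr rfl (fun y _ => mv_int hab ha p y)]
    rw [Finset.sum_sub_distrib, Finset.sum_add_distrib]
    by_cases hp : p = xb <;> simp [hp]
  exact_mod_cast this

lemma colSum_mv_int (W : X → X → ℕ) {xb a b : X} (hab : a ≠ b) (ha : 0 < W xb a) (y : X) :
    (colSum (mv W xb a b) y : ℤ) = (colSum W y : ℤ) + (if y = b then 1 else 0)
      - (if y = a then 1 else 0) := by
  rw [colSum_int, colSum_int]
  rw [Finset.sum_congr rfl (fun x _ => mv_int hab ha x y)]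
  rw [Finset.sum_sub_distrib, Finset.sum_add_distrib]
  by_cases h1 : y = a
  · subst h1
    simp [hab]
  · by_cases h2 : y = b
    · subst h2
      simp [Ne.symm hab]
    · simp [h1, h2]

lemma alloc_mv {W : X → X → ℕ} (hW : IsAlloc E α β W) {xb a b : X} (hab : a ≠ b)
    (ha : 0 < W xb a) (hEb : E xb b) (hb : colSum W b < β b) :
    IsAlloc E α β (mv W xb a b) := by
  obtain ⟨⟨hP1, _, hP3⟩, hrow⟩ := hW
  have hrow' : ∀ p, rowSum (mv W xb a b) p = α p := by
    intro p; rw [rowSum_mv W hab ha p]; exact hrow p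
  refine ⟨⟨?_, ?_, ?_⟩, hrow'⟩
  · intro p q hE
    simp only [mv]
    by_cases h1 : p = xb ∧ q = a
    · obtain ⟨rfl, rfl⟩ := h1
      simp [hP1 p q hE]
    · by_cases h2 : p = xb ∧ q = b
      · exact absurd (h2.1 ▸ h2.2 ▸ hEb) hE
      · simp [h1, h2, hP1 p q hE]
  · intro p; exact le_of_eq (hrow' p)
  · intro y
    have h := colSum_mv_int W hab ha y
    have h3 : colSum W y ≤ β y := hP3 y
    have h4 : colSum W b < β b := hb
    show colSum (mv W xb a b) y ≤ β y
    by_cases h1 : y = a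
    · subst h1; simp [hab] at h; omega
    · by_cases h2 : y = b
      · subst h2; simp [h1] at h; omega
      · simp [h1, h2] at h; omega

lemma step_mv
    (hmove : ∀ (xbar : X) (W : X → X → ℕ), IsPartialAlloc E α β W →
      ∀ y' y'' : X, y' ≠ y'' → 0 < W xbar y' → E xbar y'' → colSum W y'' < β y'' →
      (fun x z => if x = xbar ∧ z = y' then W x z - 1
        else if x = xbar ∧ z = y'' then W x z + 1 else W x z) ∈ M xbar W)
    {W : X → X → ℕ} (hW : IsAlloc E α β W) {xb a b : X} (hab : a ≠ b)
    (ha : 0 < W xb a) (hEb : E xb b) (hb : colSum W b < β b) :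
    MoveStep M W (mv W xb a b) :=
  ⟨xb, hmove xb W hW.1 a b hab ha hEb hb⟩

end Proof

section Chains

variable {X : Type*} [Fintype X] [DecidableEq X] {E : X → X → Prop} [DecidableRel E]
  {α β : X → ℕ} {M : X → (X → X → ℕ) → Finset (X → X → ℕ)}

/-- Abbreviation for the guaranteed rule-(ii) moves. -/
def HMove (E : X → X → Prop) (α β : X → ℕ) (M : X → (X → X → ℕ) → Finset (X → X → ℕ))
    [Fintype X] [DecidableEq X] : Prop :=
  ∀ (xbar : X) (W : X → X → ℕ), IsPartialAlloc E α β W →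
      ∀ y' y'' : X, y' ≠ y'' → 0 < W xbar y' → E xbar y'' → colSum W y'' < β y'' →
      (fun x z => if x = xbar ∧ z = y' then W x z - 1
        else if x = xbar ∧ z = y'' then W x z + 1 else W x z) ∈ M xbar W

lemma step_mv' (hmove : HMove E α β M)
    {W : X → X → ℕ} (hW : IsAlloc E α β W) {xb a b : X} (hab : a ≠ b)
    (ha : 0 < W xb a) (hEb : E xb b) (hb : colSum W b < β b) :
    MoveStep M W (mv W xb a b) :=
  ⟨xb, hmove xb W hW.1 a b hab ha hEb hb⟩

/-- Chain lemma "U" : exporting a hole from `c 0` to `c k` along a path,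
moving one atom backwards along each edge. -/
lemma chainU (hmove : HMove E α β M) :
    ∀ (k : ℕ) (V : X → X → ℕ) (c x : ℕ → X), IsAlloc E α β V →
    (∀ i j, i ≤ k → j ≤ k → i < j → c i ≠ c j) →
    (∀ j, j < k → 0 < V (x j) (c (j + 1))) →
    (∀ j, j < k → E (x j) (c j)) →
    colSum V (c 0) < β (c 0) →
    ∃ F, Relation.ReflTransGen (MoveStep M) V F ∧ IsAlloc E α β F ∧
      (∀ p q, (F p q : ℤ) = (V p q : ℤ) + ∑ j ∈ Finset.range k,
        ((if p = x j ∧ q = c j then (1:ℤ) else 0) - (if p = x j ∧ q = c (j + 1) then (1:ℤ) else 0))) ∧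
      (∀ y, (colSum F y : ℤ) = (colSum V y : ℤ) + (if y = c 0 then 1 else 0)
          - (if y = c k then 1 else 0)) := by
  intro k
  induction k with
  | zero =>
    intro V c x hV _ _ _ _
    exact ⟨V, Relation.ReflTransGen.refl, hV, by simp, by simp⟩
  | succ k ih =>
    intro V c x hV hinj hpos hE hhole
    have h01 : c 1 ≠ c 0 := fun h => (hinj 0 1 (by omega) (by omega) (by omega)) h.symm
    have hp0 : 0 < V (x 0) (c 1) := hpos 0 (by omega)
    have hE0 : E (x 0) (c 0) := hE 0 (by omega)
    set V1 := mv V (x 0) (c 1) (c 0) with hV1def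
    have hstep : MoveStep M V V1 := step_mv' hmove hV h01 hp0 hE0 hhole
    have hall1 : IsAlloc E α β V1 := alloc_mv hV h01 hp0 hE0 hhole
    have hcol1 : ∀ y, (colSum V1 y : ℤ) = (colSum V y : ℤ) + (if y = c 0 then 1 else 0)
        - (if y = c 1 then 1 else 0) := colSum_mv_int V h01 hp0
    have hent1 : ∀ p q, (V1 p q : ℤ) = (V p q : ℤ) + (if p = x 0 ∧ q = c 0 then 1 else 0)
        - (if p = x 0 ∧ q = c 1 then 1 else 0) := mv_int h01 hp0
    have hpos1 : ∀ j, j < k → 0 < V1 (x (j+1)) (c (j+1+1)) := by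
      intro j hj
      show 0 < V1 (x (j+1)) (c (j+2))
      have h2 : ¬(x (j+1) = x 0 ∧ c (j+2) = c 0) := by
        rintro ⟨-, h⟩; exact (hinj 0 (j+2) (by omega) (by omega) (by omega)) h.symm
      have h3 : ¬(x (j+1) = x 0 ∧ c (j+2) = c 1) := by
        rintro ⟨-, h⟩; exact (hinj 1 (j+2) (by omega) (by omega) (by omega)) h.symm
      have heq := hent1 (x (j+1)) (c (j+2))
      rw [if_neg h2, if_neg h3] at heq
      have hp : 0 < V (x (j+1)) (c (j+2)) := hpos (j+1) (by omega)
      omega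
    have hhole1 : colSum V1 (c 1) < β (c 1) := by
      have heq := hcol1 (c 1)
      rw [if_neg h01, if_pos rfl] at heq
      have hle : colSum V (c 1) ≤ β (c 1) := hV.1.2.2 (c 1)
      omega
    obtain ⟨F, hrtg, hallF, hentF, hcolF⟩ := ih V1 (fun n => c (n+1)) (fun n => x (n+1)) hall1
      (fun i j hi hj hij => hinj (i+1) (j+1) (by omega) (by omega) (by omega))
      hpos1 (fun j hj => hE (j+1) (by omega)) hhole1
    refine ⟨F, Relation.ReflTransGen.head hstep hrtg, hallF, ?_, ?_⟩
    · intro p q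
      have hF := hentF p q
      rw [hF, hent1 p q, Finset.sum_range_succ']
      ring
    · intro y
      have hF := hcolF y
      rw [hF, hcol1 y]
      ring

/-- Chain lemma "R" : importing a hole from `c k` to `c 0` along a path,
moving one atom forward along each edge. -/
lemma chainR (hmove : HMove E α β M) :
    ∀ (k : ℕ) (V : X → X → ℕ) (c x : ℕ → X), IsAlloc E α β V →
    (∀ i j, i ≤ k → j ≤ k → i < j → c i ≠ c j) →
    (∀ j, j < k → 0 < V (x j) (c j)) →
    (∀ j, j < k → E (x j) (c (j + 1))) →
    colSum V (c k) < β (c k) →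
    ∃ F, Relation.ReflTransGen (MoveStep M) V F ∧ IsAlloc E α β F ∧
      (∀ p q, (F p q : ℤ) = (V p q : ℤ) + ∑ j ∈ Finset.range k,
        ((if p = x j ∧ q = c (j + 1) then (1:ℤ) else 0) - (if p = x j ∧ q = c j then (1:ℤ) else 0))) ∧
      (∀ y, (colSum F y : ℤ) = (colSum V y : ℤ) + (if y = c k then 1 else 0)
          - (if y = c 0 then 1 else 0)) := by
  intro k
  induction k with
  | zero =>
    intro V c x hV _ _ _ _
    exact ⟨V, Relation.ReflTransGen.refl, hV, by simp, by simp⟩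
  | succ k ih =>
    intro V c x hV hinj hpos hE hhole
    have hkk : c k ≠ c (k+1) := hinj k (k+1) (by omega) (by omega) (by omega)
    have hpk : 0 < V (x k) (c k) := hpos k (by omega)
    have hEk : E (x k) (c (k+1)) := hE k (by omega)
    set V1 := mv V (x k) (c k) (c (k+1)) with hV1def
    have hstep : MoveStep M V V1 := step_mv' hmove hV hkk hpk hEk hhole
    have hall1 : IsAlloc E α β V1 := alloc_mv hV hkk hpk hEk hhole
    have hcol1 : ∀ y, (colSum V1 y : ℤ) = (colSum V y : ℤ) + (if y = c (k+1) then 1 else 0)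
        - (if y = c k then 1 else 0) := colSum_mv_int V hkk hpk
    have hent1 : ∀ p q, (V1 p q : ℤ) = (V p q : ℤ) + (if p = x k ∧ q = c (k+1) then 1 else 0)
        - (if p = x k ∧ q = c k then 1 else 0) := mv_int hkk hpk
    have hpos1 : ∀ j, j < k → 0 < V1 (x j) (c j) := by
      intro j hj
      have h2 : ¬(x j = x k ∧ c j = c (k+1)) := by
        rintro ⟨-, h⟩; exact (hinj j (k+1) (by omega) (by omega) (by omega)) h
      have h3 : ¬(x j = x k ∧ c j = c k) := by
        rintro ⟨-, h⟩; exact (hinj j k (by omega) (by omega) (by omega)) h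
      have heq := hent1 (x j) (c j)
      rw [if_neg h2, if_neg h3] at heq
      have hp := hpos j (by omega)
      omega
    have hhole1 : colSum V1 (c k) < β (c k) := by
      have heq := hcol1 (c k)
      rw [if_neg hkk, if_pos rfl] at heq
      have hle : colSum V (c k) ≤ β (c k) := hV.1.2.2 (c k)
      omega
    obtain ⟨F, hrtg, hallF, hentF, hcolF⟩ := ih V1 c x hall1
      (fun i j hi hj hij => hinj i j (by omega) (by omega) hij)
      hpos1 (fun j hj => hE j (by omega)) hhole1
    refine ⟨F, Relation.ReflTransGen.head hstep hrtg, hallF, ?_, ?_⟩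
    · intro p q
      rw [hentF p q, hent1 p q, Finset.sum_range_succ]
      ring
    · intro y
      rw [hcolF y, hcol1 y]
      ring

end Chains

section Composite

variable {X : Type*} [Fintype X] [DecidableEq X] {E : X → X → Prop} [DecidableRel E]
  {α β : X → ℕ} {M : X → (X → X → ℕ) → Finset (X → X → ℕ)}

lemma sum_ite_unique {k : ℕ} (P : ℕ → Prop) [DecidablePred P]
    (h : ∀ i j, i < k → j < k → P i → P j → i = j) :
    ∑ j ∈ Finset.range k, (if P j then (1:ℤ) else 0)
      = if ∃ j ∈ Finset.range k, P j then 1 else 0 := by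
  by_cases hex : ∃ j ∈ Finset.range k, P j
  · obtain ⟨j0, hj0, hP⟩ := hex
    rw [if_pos ⟨j0, hj0, hP⟩, Finset.sum_eq_single j0]
    · exact if_pos hP
    · intro b hb hbne
      rw [if_neg]
      intro hPb
      exact hbne (h b j0 (Finset.mem_range.mp hb) (Finset.mem_range.mp hj0) hPb hP)
    · intro h'; exact absurd hj0 h'
  · rw [if_neg hex, Finset.sum_eq_zero]
    intro j hj
    rw [if_neg (fun hP => hex ⟨j, hj, hP⟩)]

lemma sum_range_reflect' (f g : ℕ → ℤ) (n : ℕ) (h : ∀ j, j < n → f j = g (n - 1 - j)) :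
    ∑ j ∈ Finset.range n, f j = ∑ j ∈ Finset.range n, g j := by
  rw [Finset.sum_congr rfl (fun j hj => h j (Finset.mem_range.mp hj))]
  exact Finset.sum_range_reflect g n

lemma composite (hmove : HMove E α β M)
    {W W' : X → X → ℕ} (hW : IsAlloc E α β W) (hW' : IsAlloc E α β W')
    (m : ℕ) (hm : 2 ≤ m) (z u : ℕ → X)
    (hzper : ∀ n, z (n + m) = z n)
    (hsur : ∀ n, W' (u n) (z n) < W (u n) (z n))
    (hdef : ∀ n, W (u n) (z (n + 1)) < W' (u n) (z (n + 1)))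
    (hinjz : ∀ i j, i < m → j < m → i < j → z i ≠ z j)
    (k : ℕ) (hk : 1 ≤ k) (c x : ℕ → X) (hc0 : c 0 = z 0)
    (hcpos : ∀ j, j < k → 0 < W (x j) (c j))
    (hcE : ∀ j, j < k → E (x j) (c (j + 1)))
    (hck : colSum W (c k) < β (c k))
    (hcinj : ∀ i j, i ≤ k → j ≤ k → i < j → c i ≠ c j)
    (hcz : ∀ j, 1 ≤ j → j ≤ k → ∀ i, i < m → c j ≠ z i) :
    ∃ F, Relation.ReflTransGen (MoveStep M) W F ∧ IsAlloc E α β F ∧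
      (∀ p q, (F p q : ℤ) = (W p q : ℤ) + ∑ i ∈ Finset.range m,
        ((if p = u i ∧ q = z (i + 1) then (1:ℤ) else 0)
          - (if p = u i ∧ q = z i then (1:ℤ) else 0))) := by
  -- basic facts
  have hzm : z m = z 0 := by have := hzper 0; simpa using this
  have hEdef : ∀ n, E (u n) (z (n + 1)) := by
    intro n
    by_contra h
    have h0 := hW'.1.1 _ _ h
    have := hdef n
    omega
  have hEback : ∀ j, j < k → E (x j) (c j) := by
    intro j hj
    by_contra h
    have h0 := hW.1.1 _ _ h
    have := hcpos j hj
    omega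
  have hzne : ∀ i j, i < m → j < m → i ≠ j → z i ≠ z j := by
    intro i j hi hj hne
    rcases Nat.lt_or_ge i j with h | h
    · exact hinjz i j hi hj h
    · exact (hinjz j i hj hi (by omega)).symm
  have hzinj' : ∀ i j, i < m → j < m → z i = z j → i = j := by
    intro i j hi hj h
    by_contra hne
    exact hzne i j hi hj hne h
  have hcinj' : ∀ i j, i ≤ k → j ≤ k → c i = c j → i = j := by
    intro i j hi hj h
    by_contra hne
    rcases Nat.lt_or_ge i j with hlt | hge
    · exact hcinj i j hi hj hlt h
    · exact hcinj j i hj hi (by omega) h.symm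
  have hforbid : ∀ i j, u i = u j → z i = z (j + 1) → False := by
    intro i j hu hz
    have h1 := hsur i
    have h2 := hdef j
    rw [hu, hz] at h1
    omega
  have hcznotz : ∀ j, 1 ≤ j → j ≤ k → ∀ i, i ≤ m → c j ≠ z i := by
    intro j h1 h2 i hi
    rcases Nat.lt_or_ge i m with h | h
    · exact hcz j h1 h2 i h
    · have : i = m := by omega
      subst this
      rw [hzm]
      exact hcz j h1 h2 0 (by omega)
  have hc0z : ∀ i, 1 ≤ i → i < m → c 0 ≠ z i := by
    intro i h1 h2
    rw [hc0]
    exact hinjz 0 i (by omega) h2 (by omega)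
  -- Step A : import the hole along c (from c k to c 0 = z 0)
  obtain ⟨V1, hrtg1, hall1, hent1, hcol1⟩ := chainR hmove k W c x hW hcinj hcpos hcE hck
  have e1 : ∀ p q, (V1 p q : ℤ) = (W p q : ℤ)
      + (if ∃ j ∈ Finset.range k, p = x j ∧ q = c (j + 1) then (1:ℤ) else 0)
      - (if ∃ j ∈ Finset.range k, p = x j ∧ q = c j then (1:ℤ) else 0) := by
    intro p q
    rw [hent1 p q, Finset.sum_sub_distrib,
      sum_ite_unique _ (fun i j hi hj hPi hPj => by
        have := hcinj' (i+1) (j+1) (by omega) (by omega) (hPi.2.symm.trans hPj.2)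
        omega),
      sum_ite_unique _ (fun i j hi hj hPi hPj => by
        exact hcinj' i j (by omega) (by omega) (hPi.2.symm.trans hPj.2))]
    ring
  -- entries of V1 away from the path columns
  have h1out : ∀ p q, (∀ j, j ≤ k → q ≠ c j) → (V1 p q : ℤ) = (W p q : ℤ) := by
    intro p q hq
    have h1 : ¬∃ j ∈ Finset.range k, p = x j ∧ q = c (j + 1) := by
      rintro ⟨j, hj, -, hcq⟩
      exact hq (j+1) (by have := Finset.mem_range.mp hj; omega) hcq
    have h2 : ¬∃ j ∈ Finset.range k, p = x j ∧ q = c j := by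
      rintro ⟨j, hj, -, hcq⟩
      exact hq j (by have := Finset.mem_range.mp hj; omega) hcq
    rw [e1 p q, if_neg h1, if_neg h2]
    ring
  -- key positivity along the path in V1
  have hmid : ∀ j, j < k → 1 ≤ V1 (x j) (c (j + 1)) := by
    intro j hj
    have h := e1 (x j) (c (j+1))
    rw [if_pos ⟨j, Finset.mem_range.mpr hj, rfl, rfl⟩] at h
    by_cases hex : ∃ j' ∈ Finset.range k, x j = x j' ∧ c (j + 1) = c j'
    · obtain ⟨j', hj', hxx, hcc⟩ := hex
      have hj'k := Finset.mem_range.mp hj'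
      have hWeq : W (x j) (c (j+1)) = W (x j') (c j') := by rw [hxx, hcc]
      have hp := hcpos j' hj'k
      rw [if_pos ⟨j', hj', hxx, hcc⟩] at h
      omega
    · rw [if_neg hex] at h
      omega
  -- Step B : rotate the cycle along chainU (all moves except the one out of z 0)
  have hinjrot : ∀ i j, i ≤ m - 1 → j ≤ m - 1 → i < j → z (m - i) ≠ z (m - j) := by
    intro i j hi hj hij
    rcases Nat.eq_zero_or_pos i with rfl | hipos
    · have h0 : m - 0 = m := rfl
      rw [h0, hzm]
      exact hzne 0 (m - j) (by omega) (by omega) (by omega)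
    · exact hzne (m - i) (m - j) (by omega) (by omega) (by omega)
  have hposrot : ∀ j, j < m - 1 → 0 < V1 (u (m - 1 - j)) (z (m - (j + 1))) := by
    intro j hj
    have hidx : m - (j + 1) = m - 1 - j := by omega
    rw [hidx]
    have hi1 : 1 ≤ m - 1 - j := by omega
    have him : m - 1 - j < m := by omega
    have hnotc : ∀ j', j' ≤ k → z (m - 1 - j) ≠ c j' := by
      intro j' hj'
      rcases Nat.eq_zero_or_pos j' with rfl | hpos'
      · exact fun h => hc0z (m - 1 - j) hi1 him h.symm
      · exact fun h => hcz j' hpos' hj' (m - 1 - j) him h.symm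
    have h := h1out (u (m - 1 - j)) (z (m - 1 - j)) hnotc
    have hs := hsur (m - 1 - j)
    omega
  have hErot : ∀ j, j < m - 1 → E (u (m - 1 - j)) (z (m - j)) := by
    intro j hj
    rw [show m - j = (m - 1 - j) + 1 by omega]
    exact hEdef (m - 1 - j)
  have hhole1 : colSum V1 (z (m - 0)) < β (z (m - 0)) := by
    show colSum V1 (z m) < β (z m)
    rw [hzm]
    have h := hcol1 (z 0)
    rw [if_neg (fun hh => (hcz k hk le_rfl 0 (by omega)) hh.symm), if_pos hc0.symm] at h
    have hle : colSum W (z 0) ≤ β (z 0) := hW.1.2.2 (z 0)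
    omega
  obtain ⟨V2, hrtg2, hall2, hent2, hcol2⟩ := chainU hmove (m - 1) V1
    (fun j => z (m - j)) (fun j => u (m - 1 - j)) hall1 hinjrot hposrot hErot hhole1

  have h2out : ∀ p q, (∀ i, i ≤ m → q ≠ z i) → (V2 p q : ℤ) = (V1 p q : ℤ) := by
    intro p q hq
    rw [hent2 p q, Finset.sum_eq_zero, add_zero]
    intro j hj
    rw [if_neg (fun hh => hq (m - j) (by omega) hh.2),
        if_neg (fun hh => hq (m - (j + 1)) (by omega) hh.2)]
    ring
  have hcolV2z1 : colSum V2 (z 1) < β (z 1) := by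
    have h := hcol2 (z 1)
    have hne1 : z 1 ≠ z (m - 0) := by
      have h0 : m - 0 = m := rfl
      rw [h0, hzm]
      exact hzne 1 0 (by omega) (by omega) (by omega)
    have heq1 : z 1 = z (m - (m - 1)) := by
      rw [show m - (m - 1) = 1 by omega]
    rw [if_neg hne1, if_pos heq1] at h
    have h' := hcol1 (z 1)
    rw [if_neg (fun hh => (hcz k hk le_rfl 1 (by omega)) hh.symm),
        if_neg (fun hh => (hc0z 1 (by omega) (by omega)) hh.symm)] at h'
    have hle : colSum W (z 1) ≤ β (z 1) := hW.1.2.2 (z 1)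
    omega
  have hmid2 : ∀ j, j < k → (V2 (x j) (c (j + 1)) : ℤ) = (V1 (x j) (c (j + 1)) : ℤ) := by
    intro j hj
    exact h2out _ _ (fun i hi hq => (hcznotz (j+1) (by omega) (by omega) i hi) hq)
  have hz01 : z 0 ≠ z 1 := hzne 0 1 (by omega) (by omega) (by omega)
  have hEz1 : E (u 0) (z 1) := hEdef 0
  rcases eq_or_ne (x 0) (u 0) with hvar | hvar
  · -- variant case : x 0 = u 0 ; the last rotation move starts from c 1
    have hc1z1 : c 1 ≠ z 1 := hcz 1 le_rfl hk 1 (by omega)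
    have hpos2c1 : 0 < V2 (u 0) (c 1) := by
      have h2 := h2out (u 0) (c 1) (fun i hi => hcznotz 1 (by omega) hk i hi)
      have h' := e1 (u 0) (c 1)
      rw [if_pos ⟨0, Finset.mem_range.mpr (by omega), hvar.symm, rfl⟩] at h'
      by_cases hex : ∃ j ∈ Finset.range k, u 0 = x j ∧ c 1 = c j
      · obtain ⟨j, hj, hux, hcc⟩ := hex
        have hjk := Finset.mem_range.mp hj
        have hWeq : W (u 0) (c 1) = W (x j) (c j) := by rw [hux, hcc]
        have hp := hcpos j hjk
        rw [if_pos ⟨j, hj, hux, hcc⟩] at h'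
        omega
      · rw [if_neg hex] at h'
        omega
    set V3 := mv V2 (u 0) (c 1) (z 1) with hV3def
    have hstep3 : MoveStep M V2 V3 := step_mv' hmove hall2 hc1z1 hpos2c1 hEz1 hcolV2z1
    have hall3 : IsAlloc E α β V3 := alloc_mv hall2 hc1z1 hpos2c1 hEz1 hcolV2z1
    have e3 : ∀ p q, (V3 p q : ℤ) = (V2 p q : ℤ) + (if p = u 0 ∧ q = z 1 then 1 else 0)
        - (if p = u 0 ∧ q = c 1 then 1 else 0) := mv_int hc1z1 hpos2c1
    have col3 : ∀ y, (colSum V3 y : ℤ) = (colSum V2 y : ℤ) + (if y = z 1 then 1 else 0)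
        - (if y = c 1 then 1 else 0) := colSum_mv_int V2 hc1z1 hpos2c1
    have hpos3 : ∀ j, j < k - 1 → 0 < V3 (x (j + 1)) (c (j + 1 + 1)) := by
      intro j hj
      show 0 < V3 (x (j + 1)) (c (j + 2))
      have h := e3 (x (j + 1)) (c (j + 2))
      rw [if_neg (fun hh => (hcz (j + 2) (by omega) (by omega) 1 (by omega)) hh.2),
          if_neg (fun hh => (hcinj 1 (j + 2) hk (by omega) (by omega)) hh.2.symm)] at h
      have h2 : (V2 (x (j + 1)) (c (j + 2)) : ℤ) = (V1 (x (j + 1)) (c (j + 2)) : ℤ) :=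
        hmid2 (j + 1) (by omega)
      have h1 : 1 ≤ V1 (x (j + 1)) (c (j + 2)) := hmid (j + 1) (by omega)
      omega
    have hole3 : colSum V3 (c 1) < β (c 1) := by
      have h := col3 (c 1)
      rw [if_neg hc1z1, if_pos rfl] at h
      have h2 := hcol2 (c 1)
      have hneA : c 1 ≠ z (m - 0) := hcznotz 1 (by omega) hk (m - 0) (by omega)
      have hneB : c 1 ≠ z (m - (m - 1)) := by
        rw [show m - (m - 1) = 1 by omega]
        exact hc1z1
      rw [if_neg hneA, if_neg hneB] at h2
      have h1 := hcol1 (c 1)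
      by_cases hk1 : k = 1
      · subst hk1
        rw [if_pos rfl, if_neg (fun hh => (hcinj 0 1 (by omega) hk (by omega)) hh.symm)] at h1
        omega
      · rw [if_neg (fun hh => (hcinj 1 k hk le_rfl (by omega)) hh),
            if_neg (fun hh => (hcinj 0 1 (by omega) hk (by omega)) hh.symm)] at h1
        have hle : colSum W (c 1) ≤ β (c 1) := hW.1.2.2 (c 1)
        omega
    obtain ⟨F, hrtg4, hall4, hent4, -⟩ := chainU hmove (k - 1) V3
      (fun n => c (n + 1)) (fun n => x (n + 1)) hall3
      (fun i j hi hj hij => hcinj (i + 1) (j + 1) (by omega) (by omega) (by omega))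
      hpos3 (fun j hj => hEback (j + 1) (by omega)) hole3
    refine ⟨F, hrtg1.trans (hrtg2.trans (Relation.ReflTransGen.head hstep3 hrtg4)), hall4, ?_⟩
    intro p q
    rw [hent4 p q, e3 p q, hent2 p q, hent1 p q]
    have hsplit : (∑ j ∈ Finset.range k, ((if p = x j ∧ q = c (j + 1) then (1:ℤ) else 0)
          - (if p = x j ∧ q = c j then (1:ℤ) else 0)))
        = (∑ j ∈ Finset.range (k - 1), ((if p = x (j + 1) ∧ q = c (j + 1 + 1) then (1:ℤ) else 0)
            - (if p = x (j + 1) ∧ q = c (j + 1) then (1:ℤ) else 0)))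
          + ((if p = x 0 ∧ q = c (0 + 1) then (1:ℤ) else 0)
            - (if p = x 0 ∧ q = c 0 then (1:ℤ) else 0)) := by
      conv_lhs => rw [show k = (k - 1) + 1 by omega, Finset.sum_range_succ']
    have hcancel2 : (∑ j ∈ Finset.range (k - 1),
          ((if p = x (j + 1) ∧ q = c (j + 1 + 1) then (1:ℤ) else 0)
            - (if p = x (j + 1) ∧ q = c (j + 1) then (1:ℤ) else 0)))
        + (∑ j ∈ Finset.range (k - 1),
          ((if p = x (j + 1) ∧ q = c (j + 1) then (1:ℤ) else 0)
            - (if p = x (j + 1) ∧ q = c (j + 1 + 1) then (1:ℤ) else 0))) = 0 := by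
      rw [← Finset.sum_add_distrib]
      exact Finset.sum_eq_zero (fun j hj => by ring)
    have hx0 : (if p = x 0 ∧ q = c (0 + 1) then (1:ℤ) else 0)
        = (if p = u 0 ∧ q = c 1 then (1:ℤ) else 0) := by
      rw [hvar]
    have hc00 : (if p = x 0 ∧ q = c 0 then (1:ℤ) else 0)
        = (if p = u 0 ∧ q = z 0 then (1:ℤ) else 0) := by rw [hvar, hc0]
    have hrot : (∑ j ∈ Finset.range (m - 1), ((if p = u (m - 1 - j) ∧ q = z (m - j) then (1:ℤ) else 0)
          - (if p = u (m - 1 - j) ∧ q = z (m - (j + 1)) then (1:ℤ) else 0)))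
        + ((if p = u 0 ∧ q = z 1 then (1:ℤ) else 0) - (if p = u 0 ∧ q = z 0 then (1:ℤ) else 0))
        = ∑ i ∈ Finset.range m, ((if p = u i ∧ q = z (i + 1) then (1:ℤ) else 0)
          - (if p = u i ∧ q = z i then (1:ℤ) else 0)) := by
      have hreflect : (∑ j ∈ Finset.range (m - 1),
            ((if p = u (m - 1 - j) ∧ q = z (m - j) then (1:ℤ) else 0)
              - (if p = u (m - 1 - j) ∧ q = z (m - (j + 1)) then (1:ℤ) else 0)))
          = ∑ j ∈ Finset.range (m - 1),
            ((if p = u (j + 1) ∧ q = z (j + 1 + 1) then (1:ℤ) else 0)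
              - (if p = u (j + 1) ∧ q = z (j + 1) then (1:ℤ) else 0)) := by
        refine sum_range_reflect' _
          (fun i => (if p = u (i + 1) ∧ q = z (i + 1 + 1) then (1:ℤ) else 0)
            - (if p = u (i + 1) ∧ q = z (i + 1) then (1:ℤ) else 0)) _ ?_
        intro j hj
        rw [show m - 1 - 1 - j + 1 = m - 1 - j by omega,
            show m - 1 - j + 1 = m - j by omega,
            show m - (j + 1) = m - 1 - j by omega]
      rw [hreflect]
      conv_rhs => rw [show m = (m - 1) + 1 by omega, Finset.sum_range_succ']
      try ring
    linarith [hsplit, hcancel2, hrot, hx0, hc00]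
  · -- main case : x 0 ≠ u 0
    have hpos20 : 0 < V2 (u 0) (z 0) := by
      have h := hent2 (u 0) (z 0)
      rw [Finset.sum_eq_zero, add_zero] at h
      · have h' := e1 (u 0) (z 0)
        have hA : ¬∃ j ∈ Finset.range k, u 0 = x j ∧ z 0 = c (j + 1) := by
          rintro ⟨j, hj, -, hzc⟩
          exact (hcz (j+1) (by omega) (by have := Finset.mem_range.mp hj; omega) 0
            (by omega)) hzc.symm
        have hB : ¬∃ j ∈ Finset.range k, u 0 = x j ∧ z 0 = c j := by
          rintro ⟨j, hj, hux, hzc⟩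
          rcases Nat.eq_zero_or_pos j with rfl | hj1
          · exact hvar hux.symm
          · exact (hcz j hj1 (by have := Finset.mem_range.mp hj; omega) 0 (by omega)) hzc.symm
        rw [if_neg hA, if_neg hB] at h'
        have hs := hsur 0
        omega
      · intro j hj
        have hjm := Finset.mem_range.mp hj
        have hB : ¬(u 0 = u (m - 1 - j) ∧ z 0 = z (m - (j + 1))) := by
          rintro ⟨-, hzz⟩
          exact (hzne 0 (m - (j + 1)) (by omega) (by omega) (by omega)) hzz
        have hA : ¬(u 0 = u (m - 1 - j) ∧ z 0 = z (m - j)) := by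
          rintro ⟨huu, hzz⟩
          rcases Nat.eq_zero_or_pos j with rfl | hj1
          · have h0 : m - 0 = m := rfl
            rw [h0] at hzz
            exact hforbid 0 (m - 1) (by simpa using huu)
              (by rw [show m - 1 + 1 = m by omega]; exact hzz)
          · exact (hzne 0 (m - j) (by omega) (by omega) (by omega)) hzz
        rw [if_neg hA, if_neg hB]
        ring
    set V3 := mv V2 (u 0) (z 0) (z 1) with hV3def
    have hstep3 : MoveStep M V2 V3 := step_mv' hmove hall2 hz01 hpos20 hEz1 hcolV2z1
    have hall3 : IsAlloc E α β V3 := alloc_mv hall2 hz01 hpos20 hEz1 hcolV2z1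
    have e3 : ∀ p q, (V3 p q : ℤ) = (V2 p q : ℤ) + (if p = u 0 ∧ q = z 1 then 1 else 0)
        - (if p = u 0 ∧ q = z 0 then 1 else 0) := mv_int hz01 hpos20
    have col3 : ∀ y, (colSum V3 y : ℤ) = (colSum V2 y : ℤ) + (if y = z 1 then 1 else 0)
        - (if y = z 0 then 1 else 0) := colSum_mv_int V2 hz01 hpos20
    have hpos3 : ∀ j, j < k → 0 < V3 (x j) (c (j + 1)) := by
      intro j hj
      have h := e3 (x j) (c (j + 1))
      rw [if_neg (fun hh => (hcz (j+1) (by omega) (by omega) 1 (by omega)) hh.2),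
          if_neg (fun hh => (hcz (j+1) (by omega) (by omega) 0 (by omega)) hh.2)] at h
      have h2 := hmid2 j hj
      have h1 := hmid j hj
      omega
    have hole3 : colSum V3 (c 0) < β (c 0) := by
      have h := col3 (c 0)
      rw [if_neg (fun hh => (hc0z 1 (by omega) (by omega)) hh), if_pos hc0] at h
      have h2 := hcol2 (c 0)
      have heqA : c 0 = z (m - 0) := by
        rw [hc0, show m - 0 = m from rfl, hzm]
      have hneB : c 0 ≠ z (m - (m - 1)) := by
        rw [show m - (m - 1) = 1 by omega]
        exact fun hh => (hc0z 1 (by omega) (by omega)) hh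
      rw [if_pos heqA, if_neg hneB] at h2
      have h1 := hcol1 (c 0)
      rw [if_neg (fun hh => (hcinj 0 k (by omega) le_rfl (by omega)) hh), if_pos rfl] at h1
      have hle : colSum W (c 0) ≤ β (c 0) := hW.1.2.2 (c 0)
      omega
    obtain ⟨F, hrtg4, hall4, hent4, -⟩ := chainU hmove k V3 c x hall3 hcinj hpos3 hEback hole3
    refine ⟨F, hrtg1.trans (hrtg2.trans (Relation.ReflTransGen.head hstep3 hrtg4)), hall4, ?_⟩
    intro p q
    rw [hent4 p q, e3 p q, hent2 p q, hent1 p q]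
    have hcancel : (∑ j ∈ Finset.range k, ((if p = x j ∧ q = c (j + 1) then (1:ℤ) else 0)
          - (if p = x j ∧ q = c j then (1:ℤ) else 0)))
        + (∑ j ∈ Finset.range k, ((if p = x j ∧ q = c j then (1:ℤ) else 0)
          - (if p = x j ∧ q = c (j + 1) then (1:ℤ) else 0))) = 0 := by
      rw [← Finset.sum_add_distrib]
      exact Finset.sum_eq_zero (fun j hj => by ring)
    have hrot : (∑ j ∈ Finset.range (m - 1), ((if p = u (m - 1 - j) ∧ q = z (m - j) then (1:ℤ) else 0)
          - (if p = u (m - 1 - j) ∧ q = z (m - (j + 1)) then (1:ℤ) else 0)))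
        + ((if p = u 0 ∧ q = z 1 then (1:ℤ) else 0) - (if p = u 0 ∧ q = z 0 then (1:ℤ) else 0))
        = ∑ i ∈ Finset.range m, ((if p = u i ∧ q = z (i + 1) then (1:ℤ) else 0)
          - (if p = u i ∧ q = z i then (1:ℤ) else 0)) := by
      have hreflect : (∑ j ∈ Finset.range (m - 1),
            ((if p = u (m - 1 - j) ∧ q = z (m - j) then (1:ℤ) else 0)
              - (if p = u (m - 1 - j) ∧ q = z (m - (j + 1)) then (1:ℤ) else 0)))
          = ∑ j ∈ Finset.range (m - 1),
            ((if p = u (j + 1) ∧ q = z (j + 1 + 1) then (1:ℤ) else 0)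
              - (if p = u (j + 1) ∧ q = z (j + 1) then (1:ℤ) else 0)) := by
        refine sum_range_reflect' _
          (fun i => (if p = u (i + 1) ∧ q = z (i + 1 + 1) then (1:ℤ) else 0)
            - (if p = u (i + 1) ∧ q = z (i + 1) then (1:ℤ) else 0)) _ ?_
        intro j hj
        rw [show m - 1 - 1 - j + 1 = m - 1 - j by omega,
            show m - 1 - j + 1 = m - j by omega,
            show m - (j + 1) = m - 1 - j by omega]
      rw [hreflect]
      conv_rhs => rw [show m = (m - 1) + 1 by omega, Finset.sum_range_succ']
      try ring
    linarith [hcancel, hrot]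

end Composite

section Dist

variable {X : Type*} [Fintype X] [DecidableEq X] {E : X → X → Prop} [DecidableRel E]
  {α β : X → ℕ} {M : X → (X → X → ℕ) → Finset (X → X → ℕ)}

/-- ℓ¹ distance between states. -/
def adist (W W' : X → X → ℕ) : ℕ := ∑ p, ∑ q, ((W p q : ℤ) - (W' p q : ℤ)).natAbs

lemma adist_eq_zero {W W' : X → X → ℕ} (h : adist W W' = 0) : W = W' := by
  funext p q
  unfold adist at h
  have h1 := (Finset.sum_eq_zero_iff.mp h) p (Finset.mem_univ p)
  have h2 := (Finset.sum_eq_zero_iff.mp h1) q (Finset.mem_univ q)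
  omega

lemma adist_lt_pointwise {W F W' : X → X → ℕ} (p₀ q₀ : X)
    (hle : ∀ p q, ((F p q : ℤ) - (W' p q : ℤ)).natAbs ≤ ((W p q : ℤ) - (W' p q : ℤ)).natAbs)
    (hlt : ((F p₀ q₀ : ℤ) - (W' p₀ q₀ : ℤ)).natAbs < ((W p₀ q₀ : ℤ) - (W' p₀ q₀ : ℤ)).natAbs) :
    adist F W' < adist W W' := by
  unfold adist
  refine Finset.sum_lt_sum (fun p _ => Finset.sum_le_sum (fun q _ => hle p q))
    ⟨p₀, Finset.mem_univ _, Finset.sum_lt_sum (fun q _ => hle p₀ q)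
      ⟨q₀, Finset.mem_univ _, hlt⟩⟩

/-- Case A: some deficit entry sits in an unsaturated column; a single move
strictly decreases the distance. -/
lemma caseA (hmove : HMove E α β M)
    {W W' : X → X → ℕ} (hW : IsAlloc E α β W) (hW' : IsAlloc E α β W')
    {p0 y : X} (hdef : W p0 y < W' p0 y) (hcol : colSum W y < β y) :
    ∃ F, MoveStep M W F ∧ IsAlloc E α β F ∧ adist F W' < adist W W' := by
  have hrow : ∑ q, W p0 q = ∑ q, W' p0 q := by rw [hW.2 p0, hW'.2 p0]
  have hex : ∃ y₀, W' p0 y₀ < W p0 y₀ := by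
    by_contra h
    push_neg at h
    have h2 : (∑ q, W p0 q) < ∑ q, W' p0 q :=
      Finset.sum_lt_sum (fun q _ => h q) ⟨y, Finset.mem_univ y, hdef⟩
    omega
  obtain ⟨y₀, hy₀⟩ := hex
  have hy0y : y₀ ≠ y := by
    intro h
    rw [h] at hy₀
    omega
  have hpos : 0 < W p0 y₀ := by omega
  have hEy : E p0 y := by
    by_contra h
    have := hW'.1.1 p0 y h
    omega
  refine ⟨mv W p0 y₀ y, step_mv' hmove hW hy0y hpos hEy hcol,
    alloc_mv hW hy0y hpos hEy hcol, ?_⟩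
  have hent := mv_int hy0y hpos
  apply adist_lt_pointwise p0 y
  · intro p q
    have h := hent p q
    by_cases h1 : p = p0 ∧ q = y₀
    · obtain ⟨rfl, rfl⟩ := h1
      rw [if_neg (fun hh => hy0y hh.2), if_pos ⟨rfl, rfl⟩] at h
      omega
    · by_cases h2 : p = p0 ∧ q = y
      · obtain ⟨rfl, rfl⟩ := h2
        rw [if_pos ⟨rfl, rfl⟩, if_neg h1] at h
        omega
      · rw [if_neg h2, if_neg h1] at h
        omega
  · have h := hent p0 y
    rw [if_pos ⟨rfl, rfl⟩, if_neg (fun hh => hy0y hh.2.symm)] at h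
    omega

end Dist

section Free

variable {X : Type*} [Fintype X] [DecidableEq X] {E : X → X → Prop} [DecidableRel E]
  {α β : X → ℕ}

/-- A column from which a hole can eventually be produced. -/
inductive CanFree (E : X → X → Prop) (β : X → ℕ) (W : X → X → ℕ) [Fintype X] : X → Prop
  | base (y : X) : colSum W y < β y → CanFree E β W y
  | step (y c' : X) (x : X) : 0 < W x y → E x c' → CanFree E β W c' → CanFree E β W y

lemma canFree_of_pos
    (hstrict : ∀ D : Finset X, D.Nonempty → ∑ x ∈ D, α x < ∑ y ∈ NSet E D, β y)
    {W : X → X → ℕ} (hW : IsAlloc E α β W) (y₀ : X) (hpos : 0 < colSum W y₀) :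
    CanFree E β W y₀ := by
  by_contra hnc
  classical
  set T : Finset X := Finset.univ.filter (fun y => ¬ CanFree E β W y) with hT
  set D : Finset X := Finset.univ.filter (fun x => ∃ y ∈ T, 0 < W x y) with hD
  have hyT : y₀ ∈ T := by simp [hT, hnc]
  have hDne : D.Nonempty := by
    have hex : ∃ x, 0 < W x y₀ := by
      by_contra h
      push_neg at h
      have : colSum W y₀ = 0 := Finset.sum_eq_zero (fun x _ => by have := h x; omega)
      omega
    obtain ⟨x, hx⟩ := hex
    exact ⟨x, by simp [hD]; exact ⟨y₀, hyT, hx⟩⟩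
  have hND : ∀ y ∈ NSet E D, y ∈ T := by
    intro y hy
    rw [NSet, Finset.mem_filter] at hy
    obtain ⟨-, xx, hxD, hExy⟩ := hy
    rw [hD, Finset.mem_filter] at hxD
    obtain ⟨-, y', hy'T, hpos'⟩ := hxD
    by_contra hyT'
    have hcf : CanFree E β W y := by
      by_contra hc
      exact hyT' (by simp [hT, hc])
    have : CanFree E β W y' := CanFree.step y' y xx hpos' hExy hcf
    rw [hT, Finset.mem_filter] at hy'T
    exact hy'T.2 this
  have hsatT : ∀ y ∈ T, colSum W y = β y := by
    intro y hy
    rw [hT, Finset.mem_filter] at hy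
    have h1 : ¬ colSum W y < β y := fun h => hy.2 (CanFree.base y h)
    have h2 : colSum W y ≤ β y := hW.1.2.2 y
    omega
  -- count the mass in columns of N(D)
  have h1 : ∑ y ∈ NSet E D, β y = ∑ y ∈ NSet E D, colSum W y :=
    Finset.sum_congr rfl (fun y hy => (hsatT y (hND y hy)).symm)
  have h2 : ∀ y ∈ NSet E D, colSum W y = ∑ x ∈ D, W x y := by
    intro y hy
    refine (Finset.sum_subset (Finset.subset_univ D) ?_).symm
    intro xx _ hxD
    by_contra h0
    have hx : 0 < W xx y := by omega
    exact hxD (by rw [hD, Finset.mem_filter]; exact ⟨Finset.mem_univ _, y, hND y hy, hx⟩)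
  have h3 : ∀ x ∈ D, ∑ y ∈ NSet E D, W x y = α x := by
    intro xx hxD
    have h4 : ∑ y ∈ NSet E D, W xx y = ∑ y, W xx y := by
      refine Finset.sum_subset (Finset.subset_univ _) ?_
      intro y _ hyND
      by_contra h0
      have hx : 0 < W xx y := by omega
      have hExy : E xx y := by
        by_contra hE
        have := hW.1.1 xx y hE
        omega
      exact hyND (by rw [NSet, Finset.mem_filter]; exact ⟨Finset.mem_univ _, xx, hxD, hExy⟩)
    rw [h4]
    exact hW.2 xx
  have hfinal : ∑ y ∈ NSet E D, β y = ∑ x ∈ D, α x := by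
    rw [h1, Finset.sum_congr rfl h2, Finset.sum_comm, Finset.sum_congr rfl h3]
  have := hstrict D hDne
  omega

lemma canFree_path {W : X → X → ℕ} {y₀ : X} (h : CanFree E β W y₀) :
    ∃ (k : ℕ) (c x : ℕ → X), c 0 = y₀ ∧ (∀ j, j < k → 0 < W (x j) (c j))
      ∧ (∀ j, j < k → E (x j) (c (j + 1))) ∧ colSum W (c k) < β (c k) := by
  induction h with
  | base y hy =>
    exact ⟨0, (fun _ => y), (fun _ => y), rfl, fun j hj => absurd hj (by omega),
      fun j hj => absurd hj (by omega), hy⟩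
  | step y c' xx hpos hE hcf ih =>
    obtain ⟨k, cc, xc, hc0, hp, hE', hend⟩ := ih
    refine ⟨k + 1, (fun n => if n = 0 then y else cc (n - 1)),
      (fun n => if n = 0 then xx else xc (n - 1)), by simp, ?_, ?_, ?_⟩
    · intro j hj
      rcases Nat.eq_zero_or_pos j with rfl | hj0
      · simpa using hpos
      · have hjne : j ≠ 0 := by omega
        simp only [if_neg hjne]
        exact hp (j - 1) (by omega)
    · intro j hj
      rcases Nat.eq_zero_or_pos j with rfl | hj0
      · simp only [if_pos rfl, if_neg (by omega : (0:ℕ) + 1 ≠ 0)]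
        have : cc (0 + 1 - 1) = c' := by simpa using hc0
        rw [this]
        exact hE
      · have hjne : j ≠ 0 := by omega
        have hjne' : j + 1 ≠ 0 := by omega
        simp only [if_neg hjne, if_neg hjne']
        have hidx : j + 1 - 1 = (j - 1) + 1 := by omega
        rw [hidx]
        exact hE' (j - 1) (by omega)
    · have hne : k + 1 ≠ 0 := by omega
      simp only [if_neg hne]
      have hidx : k + 1 - 1 = k := by omega
      rw [hidx]
      exact hend

/-- Remove repetitions from a hole path. -/
lemma path_dedupe {W : X → X → ℕ} :
    ∀ (k : ℕ) (c x : ℕ → X), (∀ j, j < k → 0 < W (x j) (c j)) →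
    (∀ j, j < k → E (x j) (c (j + 1))) → colSum W (c k) < β (c k) →
    ∃ (k' : ℕ) (c' x' : ℕ → X), k' ≤ k ∧ c' 0 = c 0 ∧
      (∀ j, j < k' → 0 < W (x' j) (c' j)) ∧ (∀ j, j < k' → E (x' j) (c' (j + 1))) ∧
      colSum W (c' k') < β (c' k') ∧
      (∀ i j, i ≤ k' → j ≤ k' → i < j → c' i ≠ c' j) := by
  intro k
  induction k using Nat.strong_induction_on with
  | _ k ih =>
    intro c x hpos hE hend
    by_cases hrep : ∃ i j, i < j ∧ j ≤ k ∧ c i = c j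
    · obtain ⟨i, j, hij, hjk, hcc⟩ := hrep
      set d := j - i with hd
      have hd1 : 1 ≤ d := by omega
      -- spliced path
      set c2 : ℕ → X := fun n => if n ≤ i then c n else c (n + d) with hc2
      set x2 : ℕ → X := fun n => if n < i then x n else x (n + d) with hx2
      have hlen : k - d < k := by omega
      have hpos2 : ∀ n, n < k - d → 0 < W (x2 n) (c2 n) := by
        intro n hn
        rcases Nat.lt_or_ge n i with h | h
        · simp only [hc2, hx2, if_pos (le_of_lt h), if_pos h]
          exact hpos n (by omega)
        · rcases Nat.eq_or_lt_of_le h with heq | h'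
          · simp only [hc2, hx2, if_pos (by omega : n ≤ i), if_neg (by omega : ¬ n < i)]
            have hnd : n + d = j := by omega
            have hcnd : c n = c (n + d) := by
              rw [hnd, ← heq]
              exact hcc
            rw [hcnd]
            exact hpos (n + d) (by omega)
          · simp only [hc2, hx2, if_neg (by omega : ¬ n ≤ i), if_neg (by omega : ¬ n < i)]
            exact hpos (n + d) (by omega)
      have hE2 : ∀ n, n < k - d → E (x2 n) (c2 (n + 1)) := by
        intro n hn
        rcases Nat.lt_or_ge n i with h | h
        · rcases Nat.eq_or_lt_of_le (Nat.succ_le_of_lt h) with h1 | h1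
          · -- n + 1 = i
            simp only [hc2, hx2, if_pos (le_of_eq h1), if_pos h]
            exact hE n (by omega)
          · simp only [hc2, hx2, if_pos (by omega : n + 1 ≤ i), if_pos h]
            exact hE n (by omega)
        · simp only [hc2, hx2, if_neg (by omega : ¬ n + 1 ≤ i), if_neg (by omega : ¬ n < i)]
          have : n + 1 + d = n + d + 1 := by omega
          rw [this]
          exact hE (n + d) (by omega)
      have hend2 : colSum W (c2 (k - d)) < β (c2 (k - d)) := by
        rcases Nat.eq_or_lt_of_le (by omega : i ≤ k - d) with h | h
        · simp only [hc2, if_pos (le_of_eq h.symm)]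
          have h1 : c (k - d) = c j := by rw [← h]; exact hcc
          have h2 : j = k := by omega
          rw [h1, h2]
          exact hend
        · simp only [hc2, if_neg (by omega : ¬ k - d ≤ i)]
          have : k - d + d = k := by omega
          rw [this]
          exact hend
      obtain ⟨k', c', x', hk', hc0', hrest⟩ := ih (k - d) hlen c2 x2 hpos2 hE2 hend2
      refine ⟨k', c', x', by omega, ?_, hrest⟩
      rw [hc0']
      simp [hc2]
    · push_neg at hrep
      exact ⟨k, c, x, le_rfl, rfl, hpos, hE, hend, fun i j hi hj hij h => hrep i j hij hj h⟩

end Free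

section Cycle

variable {X : Type*} [Fintype X] [DecidableEq X] {E : X → X → Prop} [DecidableRel E]
  {α β : X → ℕ} {M : X → (X → X → ℕ) → Finset (X → X → ℕ)}

lemma cycle_exists {W W' : X → X → ℕ}
    (hstepcol : ∀ y, (∃ p, W p y < W' p y) → ∃ p', W' p' y < W p' y)
    (hsteprow : ∀ p, (∃ q, W' p q < W p q) → ∃ q', W p q' < W' p q')
    {p0 q0 : X} (hs0 : W' p0 q0 < W p0 q0) :
    ∃ (m : ℕ) (z u : ℕ → X), 2 ≤ m ∧ (∀ n, z (n + m) = z n) ∧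
      (∀ n, W' (u n) (z n) < W (u n) (z n)) ∧
      (∀ n, W (u n) (z (n + 1)) < W' (u n) (z (n + 1))) ∧
      (∀ i j, i < m → j < m → i < j → z i ≠ z j) := by
  classical
  have key : ∀ s : {e : X × X // W' e.1 e.2 < W e.1 e.2},
      ∃ s' : {e : X × X // W' e.1 e.2 < W e.1 e.2}, W s.1.1 s'.1.2 < W' s.1.1 s'.1.2 := by
    rintro ⟨⟨p, q⟩, hs⟩
    obtain ⟨q', hq'⟩ := hsteprow p ⟨q, hs⟩
    obtain ⟨p', hp'⟩ := hstepcol q' ⟨p, hq'⟩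
    exact ⟨⟨(p', q'), hp'⟩, hq'⟩
  choose g hg using key
  set seq : ℕ → {e : X × X // W' e.1 e.2 < W e.1 e.2} :=
    fun n => g^[n] ⟨(p0, q0), hs0⟩ with hseq
  set z0 : ℕ → X := fun n => (seq n).1.2 with hz0
  set u0 : ℕ → X := fun n => (seq n).1.1 with hu0
  have hsur0 : ∀ n, W' (u0 n) (z0 n) < W (u0 n) (z0 n) := fun n => (seq n).2
  have hdef0 : ∀ n, W (u0 n) (z0 (n + 1)) < W' (u0 n) (z0 (n + 1)) := by
    intro n
    have hsucc : seq (n + 1) = g (seq n) := Function.iterate_succ_apply' g n _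
    show W (seq n).1.1 ((seq (n + 1)).1.2) < W' (seq n).1.1 ((seq (n + 1)).1.2)
    rw [hsucc]
    exact hg (seq n)
  have hninj : ¬ Function.Injective (fun i : Fin (Fintype.card X + 1) => z0 i.1) := by
    intro hinj
    have h := Fintype.card_le_of_injective _ hinj
    simp only [Fintype.card_fin] at h
    omega
  obtain ⟨a, b, hfeq, hne⟩ := Function.not_injective_iff.mp hninj
  have hvne : a.1 ≠ b.1 := fun hv => hne (Fin.ext hv)
  have hexd : ∃ d, 0 < d ∧ ∃ n, z0 n = z0 (n + d) := by
    rcases Nat.lt_or_ge a.1 b.1 with h | h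
    · exact ⟨b.1 - a.1, by omega, a.1,
        by rw [show a.1 + (b.1 - a.1) = b.1 by omega]; exact hfeq⟩
    · exact ⟨a.1 - b.1, by omega, b.1,
        by rw [show b.1 + (a.1 - b.1) = a.1 by omega]; exact hfeq.symm⟩
  set m := Nat.find hexd with hm
  obtain ⟨hmpos, a₀, ha₀⟩ := Nat.find_spec hexd
  have hm2 : 2 ≤ m := by
    rcases Nat.lt_or_ge m 2 with h | h
    · exfalso
      rw [show a₀ + m = a₀ + 1 by omega] at ha₀
      have h1 := hsur0 a₀
      have h2 := hdef0 a₀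
      rw [← ha₀] at h2
      omega
    · exact h
  have hwin : ∀ i j, i < m → j < m → i < j → z0 (a₀ + i) ≠ z0 (a₀ + j) := by
    intro i j hi hj hij heq
    have hP : 0 < j - i ∧ ∃ n, z0 n = z0 (n + (j - i)) :=
      ⟨by omega, a₀ + i, by rw [show a₀ + i + (j - i) = a₀ + j by omega]; exact heq⟩
    exact (Nat.find_min hexd (by omega : j - i < m)) hP
  have hmodsucc : ∀ n, (n + 1) % m = if n % m + 1 = m then 0 else n % m + 1 := by
    intro n
    have h1 : (n + 1) % m = (n % m + 1) % m := by
      conv_lhs => rw [← Nat.mod_add_div n m]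
      rw [show n % m + m * (n / m) + 1 = n % m + 1 + m * (n / m) by ring,
        Nat.add_mul_mod_self_left]
    rw [h1]
    by_cases hc : n % m + 1 = m
    · rw [hc, Nat.mod_self]
      simp
    · have hlt : n % m + 1 < m := by
        have := Nat.mod_lt n (show 0 < m by omega)
        omega
      rw [Nat.mod_eq_of_lt hlt, if_neg hc]
  refine ⟨m, (fun n => z0 (a₀ + n % m)), (fun n => u0 (a₀ + n % m)), hm2, ?_, ?_, ?_, ?_⟩
  · intro n
    show z0 (a₀ + (n + m) % m) = z0 (a₀ + n % m)
    rw [Nat.add_mod_right]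
  · intro n
    exact hsur0 _
  · intro n
    show W (u0 (a₀ + n % m)) (z0 (a₀ + (n + 1) % m)) < W' (u0 (a₀ + n % m)) (z0 (a₀ + (n + 1) % m))
    by_cases hc : n % m + 1 = m
    · rw [hmodsucc n, if_pos hc]
      have hz : z0 (a₀ + 0) = z0 (a₀ + n % m + 1) := by
        rw [Nat.add_zero, show a₀ + n % m + 1 = a₀ + m by omega]
        exact ha₀
      rw [hz]
      exact hdef0 (a₀ + n % m)
    · rw [hmodsucc n, if_neg hc, show a₀ + (n % m + 1) = (a₀ + n % m) + 1 by omega]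
      exact hdef0 (a₀ + n % m)
  · intro i j hi hj hij
    show z0 (a₀ + i % m) ≠ z0 (a₀ + j % m)
    rw [Nat.mod_eq_of_lt hi, Nat.mod_eq_of_lt hj]
    exact hwin i j hi hj hij

lemma rot_dist_lt {W W' F : X → X → ℕ} (m : ℕ) (hm : 2 ≤ m) (z u : ℕ → X)
    (hzper : ∀ n, z (n + m) = z n)
    (hsur : ∀ n, W' (u n) (z n) < W (u n) (z n))
    (hdef : ∀ n, W (u n) (z (n + 1)) < W' (u n) (z (n + 1)))
    (hinjz : ∀ i j, i < m → j < m → i < j → z i ≠ z j)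
    (hF : ∀ p q, (F p q : ℤ) = (W p q : ℤ) + ∑ i ∈ Finset.range m,
        ((if p = u i ∧ q = z (i + 1) then (1:ℤ) else 0)
          - (if p = u i ∧ q = z i then (1:ℤ) else 0))) :
    adist F W' < adist W W' := by
  have hzm : z m = z 0 := by have := hzper 0; simpa using this
  have hzne : ∀ i j, i < m → j < m → i ≠ j → z i ≠ z j := by
    intro i j hi hj hne
    rcases Nat.lt_or_ge i j with h | h
    · exact hinjz i j hi hj h
    · exact (hinjz j i hj hi (by omega)).symm
  have hinj2 : ∀ i j, i < m → j < m → z (i + 1) = z (j + 1) → i = j := by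
    intro i j hi hj h
    by_cases hi1 : i + 1 = m <;> by_cases hj1 : j + 1 = m
    · omega
    · exfalso
      rw [hi1, hzm] at h
      exact (hzne 0 (j + 1) (by omega) (by omega) (by omega)) h
    · exfalso
      rw [hj1, hzm] at h
      exact (hzne 0 (i + 1) (by omega) (by omega) (by omega)) h.symm
    · by_contra hne
      exact (hzne (i + 1) (j + 1) (by omega) (by omega) (by omega)) h
  have e : ∀ p q, (F p q : ℤ) = (W p q : ℤ)
      + (if ∃ i ∈ Finset.range m, p = u i ∧ q = z (i + 1) then (1:ℤ) else 0)
      - (if ∃ i ∈ Finset.range m, p = u i ∧ q = z i then (1:ℤ) else 0) := by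
    intro p q
    rw [hF p q, Finset.sum_sub_distrib,
      sum_ite_unique _ (fun i j hi hj hPi hPj =>
        hinj2 i j hi hj (hPi.2.symm.trans hPj.2)),
      sum_ite_unique _ (fun i j hi hj hPi hPj => by
        by_contra hne
        exact (hzne i j hi hj hne) (hPi.2.symm.trans hPj.2))]
    ring
  have hA0 : ¬ ∃ i ∈ Finset.range m, u 0 = u i ∧ z 0 = z (i + 1) := by
    rintro ⟨i, hi, huu, hzz⟩
    have him := Finset.mem_range.mp hi
    by_cases hi1 : i + 1 = m
    · have h1 := hsur 0
      have h2 := hdef i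
      rw [← huu, ← hzz] at h2
      omega
    · exact (hzne 0 (i + 1) (by omega) (by omega) (by omega)) hzz
  apply adist_lt_pointwise (u 0) (z 0)
  · intro p q
    have h := e p q
    by_cases hA : ∃ i ∈ Finset.range m, p = u i ∧ q = z (i + 1) <;>
      by_cases hB : ∃ i ∈ Finset.range m, p = u i ∧ q = z i
    · rw [if_pos hA, if_pos hB] at h
      omega
    · rw [if_pos hA, if_neg hB] at h
      obtain ⟨i, hi, rfl, rfl⟩ := hA
      have := hdef i
      omega
    · rw [if_neg hA, if_pos hB] at h
      obtain ⟨i, hi, rfl, rfl⟩ := hB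
      have := hsur i
      omega
    · rw [if_neg hA, if_neg hB] at h
      omega
  · have h := e (u 0) (z 0)
    rw [if_neg hA0, if_pos ⟨0, Finset.mem_range.mpr (by omega), rfl, rfl⟩] at h
    have := hsur 0
    omega

end Cycle

section Main

variable {X : Type*} [Fintype X] [DecidableEq X] {E : X → X → Prop} [DecidableRel E]
  {α β : X → ℕ} {M : X → (X → X → ℕ) → Finset (X → X → ℕ)}

lemma exists_closer
    (hstrict : ∀ D : Finset X, D.Nonempty → ∑ x ∈ D, α x < ∑ y ∈ NSet E D, β y)
    (hmove : HMove E α β M)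
    {W W' : X → X → ℕ} (hW : IsAlloc E α β W) (hW' : IsAlloc E α β W')
    (hne : W ≠ W') :
    ∃ F, Relation.ReflTransGen (MoveStep M) W F ∧ IsAlloc E α β F ∧
      adist F W' < adist W W' := by
  by_cases hA : ∃ p y, W p y < W' p y ∧ colSum W y < β y
  · obtain ⟨p, y, h1, h2⟩ := hA
    obtain ⟨F, hstep, hall, hd⟩ := caseA hmove hW hW' h1 h2
    exact ⟨F, Relation.ReflTransGen.single hstep, hall, hd⟩
  · push_neg at hA
    have hsat : ∀ y, (∃ p, W p y < W' p y) → colSum W y = β y := by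
      intro y hy
      obtain ⟨p, hp⟩ := hy
      have h1 := hA p y hp
      have h2 : colSum W y ≤ β y := hW.1.2.2 y
      omega
    have hstepcol : ∀ y, (∃ p, W p y < W' p y) → ∃ p', W' p' y < W p' y := by
      intro y hy
      obtain ⟨p, hp⟩ := hy
      have h1 : colSum W' y ≤ β y := hW'.1.2.2 y
      have h1' : colSum W y = β y := hsat y ⟨p, hp⟩
      by_contra h
      push_neg at h
      have h2 : (∑ p', W p' y) < ∑ p', W' p' y :=
        Finset.sum_lt_sum (fun p' _ => h p') ⟨p, Finset.mem_univ p, hp⟩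
      have h3 : colSum W y < colSum W' y := h2
      omega
    have hsteprow : ∀ p, (∃ q, W' p q < W p q) → ∃ q', W p q' < W' p q' := by
      intro p hp
      obtain ⟨q, hq⟩ := hp
      by_contra h
      push_neg at h
      have h2 : (∑ q', W' p q') < ∑ q', W p q' :=
        Finset.sum_lt_sum (fun q' _ => h q') ⟨q, Finset.mem_univ q, hq⟩
      have h3 : (∑ q', W p q') = ∑ q', W' p q' := by rw [hW.2 p, hW'.2 p]
      omega
    have hs0 : ∃ p q, W' p q < W p q := by
      have hne' : ∃ p q, W p q ≠ W' p q := by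
        by_contra h
        push_neg at h
        exact hne (funext fun p => funext fun q => h p q)
      obtain ⟨p, q, hpq⟩ := hne'
      rcases Nat.lt_or_ge (W p q) (W' p q) with h | h
      · obtain ⟨p', hp'⟩ := hstepcol q ⟨p, h⟩
        exact ⟨p', q, hp'⟩
      · exact ⟨p, q, by omega⟩
    obtain ⟨pp, qq, hs0'⟩ := hs0
    obtain ⟨m, z, u, hm2, hzper, hsur, hdef, hinjz⟩ := cycle_exists hstepcol hsteprow hs0'
    have hzm : z m = z 0 := by have := hzper 0; simpa using this
    have hzmul : ∀ t n, z (n + t * m) = z n := by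
      intro t
      induction t with
      | zero => intro n; simp
      | succ t iht =>
        intro n
        rw [show n + (t + 1) * m = (n + t * m) + m by ring, hzper (n + t * m)]
        exact iht n
    have hzmod : ∀ a, z a = z (a % m) := by
      intro a
      have h := hzmul (a / m) (a % m)
      rw [Nat.mod_add_div'] at h
      exact h
    have hzsat : ∀ i, i < m → colSum W (z i) = β (z i) := by
      intro i hi
      rcases Nat.eq_zero_or_pos i with rfl | hipos
      · have hd := hdef (m - 1)
        rw [show m - 1 + 1 = m by omega, hzm] at hd
        exact hsat _ ⟨u (m - 1), hd⟩
      · have hd := hdef (i - 1)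
        rw [show i - 1 + 1 = i by omega] at hd
        exact hsat _ ⟨u (i - 1), hd⟩
    have hposz0 : 0 < colSum W (z 0) := by
      have h1 := hsur 0
      have h2 : W (u 0) (z 0) ≤ colSum W (z 0) :=
        Finset.single_le_sum (f := fun p => W p (z 0)) (fun p _ => Nat.zero_le _)
          (Finset.mem_univ (u 0))
      omega
    have hcf := canFree_of_pos hstrict hW (z 0) hposz0
    obtain ⟨k0, c0, x0, hc00, hp0, hE0, hend0⟩ := canFree_path hcf
    obtain ⟨k1, c1, x1, hk1, hc10, hp1, hE1, hend1, hinj1⟩ :=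
      path_dedupe k0 c0 x0 hp0 hE0 hend0
    classical
    set S : Finset ℕ := (Finset.range (k1 + 1)).filter (fun j => ∃ i, i < m ∧ c1 j = z i)
      with hS
    have hS0 : 0 ∈ S := by
      rw [hS, Finset.mem_filter]
      exact ⟨Finset.mem_range.mpr (by omega), 0, by omega, by rw [hc10, hc00]⟩
    have hSne : S.Nonempty := ⟨0, hS0⟩
    set jstar := S.max' hSne with hjstar
    have hjS : jstar ∈ S := S.max'_mem hSne
    rw [hS, Finset.mem_filter] at hjS
    obtain ⟨hjrange, e, hem, hje⟩ := hjS
    have hjk1 : jstar ≤ k1 := by have := Finset.mem_range.mp hjrange; omega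
    have hjlt : jstar < k1 := by
      rcases Nat.eq_or_lt_of_le hjk1 with h | h
      · exfalso
        rw [h] at hje
        rw [hje] at hend1
        have := hzsat e hem
        omega
      · exact h
    set k2 := k1 - jstar with hk2
    set c2 : ℕ → X := fun n => c1 (jstar + n) with hc2
    set x2 : ℕ → X := fun n => x1 (jstar + n) with hx2
    have hk21 : 1 ≤ k2 := by omega
    set z2 : ℕ → X := fun n => z (e + n) with hz2
    set u2 : ℕ → X := fun n => u (e + n) with hu2
    have hzper2 : ∀ n, z2 (n + m) = z2 n := by
      intro n
      show z (e + (n + m)) = z (e + n)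
      rw [show e + (n + m) = (e + n) + m by omega]
      exact hzper (e + n)
    have hsur2 : ∀ n, W' (u2 n) (z2 n) < W (u2 n) (z2 n) := fun n => hsur (e + n)
    have hdef2 : ∀ n, W (u2 n) (z2 (n + 1)) < W' (u2 n) (z2 (n + 1)) := by
      intro n
      show W (u (e + n)) (z (e + (n + 1))) < W' (u (e + n)) (z (e + (n + 1)))
      rw [show e + (n + 1) = (e + n) + 1 by omega]
      exact hdef (e + n)
    have hinjz2 : ∀ i j, i < m → j < m → i < j → z2 i ≠ z2 j := by
      intro i j hi hj hij heq
      have heq' : z ((e + i) % m) = z ((e + j) % m) := by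
        rw [← hzmod (e + i), ← hzmod (e + j)]
        exact heq
      have hrlt : (e + i) % m < m := Nat.mod_lt _ (by omega)
      have hslt : (e + j) % m < m := Nat.mod_lt _ (by omega)
      rcases eq_or_ne ((e + i) % m) ((e + j) % m) with hrs | hrs
      · have h2 : i ≡ j [MOD m] := Nat.ModEq.add_left_cancel' e hrs
        have h3 : i % m = j % m := h2
        rw [Nat.mod_eq_of_lt hi, Nat.mod_eq_of_lt hj] at h3
        omega
      · rcases Nat.lt_or_ge ((e + i) % m) ((e + j) % m) with hlt | hge
        · exact hinjz _ _ hrlt hslt hlt heq'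
        · exact hinjz _ _ hslt hrlt (by omega) heq'.symm
    have hc20 : c2 0 = z2 0 := by
      show c1 (jstar + 0) = z (e + 0)
      rw [Nat.add_zero, Nat.add_zero]
      exact hje
    have hp2 : ∀ j, j < k2 → 0 < W (x2 j) (c2 j) := fun j hj => hp1 (jstar + j) (by omega)
    have hE2 : ∀ j, j < k2 → E (x2 j) (c2 (j + 1)) := by
      intro j hj
      show E (x1 (jstar + j)) (c1 (jstar + (j + 1)))
      rw [show jstar + (j + 1) = (jstar + j) + 1 by omega]
      exact hE1 (jstar + j) (by omega)
    have hend2 : colSum W (c2 k2) < β (c2 k2) := by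
      show colSum W (c1 (jstar + k2)) < β (c1 (jstar + k2))
      rw [show jstar + k2 = k1 by omega]
      exact hend1
    have hinj2' : ∀ i j, i ≤ k2 → j ≤ k2 → i < j → c2 i ≠ c2 j :=
      fun i j hi hj hij => hinj1 (jstar + i) (jstar + j) (by omega) (by omega) (by omega)
    have hcz2 : ∀ j, 1 ≤ j → j ≤ k2 → ∀ i, i < m → c2 j ≠ z2 i := by
      intro j h1 h2 i hi heq
      have hmem : jstar + j ∈ S := by
        rw [hS, Finset.mem_filter]
        refine ⟨Finset.mem_range.mpr (by omega), (e + i) % m, Nat.mod_lt _ (by omega), ?_⟩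
        have : c1 (jstar + j) = z (e + i) := heq
        rw [this]
        exact hzmod (e + i)
      have hle := S.le_max' _ hmem
      rw [← hjstar] at hle
      omega
    obtain ⟨F, hrtg, hallF, hFform⟩ := composite hmove hW hW' m hm2 z2 u2 hzper2
      hsur2 hdef2 hinjz2 k2 hk21 c2 x2 hc20 hp2 hE2 hend2 hinj2' hcz2
    exact ⟨F, hrtg, hallF, rot_dist_lt m hm2 z2 u2 hzper2 hsur2 hdef2 hinjz2 hFform⟩

end Main


/-- under the strict existence condition, for any admissible
family the graph `ℒ` on the set of allocation states is connected: any two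
allocation states are joined by a path in `ℒ`. -/
theorem alloc_graph_connected {X : Type*} [Fintype X] [DecidableEq X]
    (E : X → X → Prop) [DecidableRel E] (α β : X → ℕ)
    (hstrict : ∀ D : Finset X, D.Nonempty →
      ∑ x ∈ D, α x < ∑ y ∈ NSet E D, β y)
    (M : X → (X → X → ℕ) → Finset (X → X → ℕ))
    (hM : IsAdmissible E α β M) :
    ∀ W W' : X → X → ℕ, IsAlloc E α β W → IsAlloc E α β W' →
      Relation.ReflTransGen (MoveStep M) W W' := by

  intro W W' hW hW'
  have hmove : HMove E α β M := hM.2.2.1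
  have main : ∀ n (V : X → X → ℕ), IsAlloc E α β V → adist V W' ≤ n →
      Relation.ReflTransGen (MoveStep M) V W' := by
    intro n
    induction n with
    | zero =>
      intro V hV hd
      have h0 : adist V W' = 0 := by omega
      rw [adist_eq_zero h0]
    | succ n ihn =>
      intro V hV hd
      by_cases hne : V = W'
      · rw [hne]
      · obtain ⟨F, hrtg, hallF, hdF⟩ := exists_closer hstrict hmove hV hW' hne
        exact hrtg.trans (ihn F hallF (by omega))
  exact main (adist W W') W hW le_rfl
end

section
/- Let (M_{x̄}(W)) be an admissible family, let γ > 0, and for an allocation state W ∈ 𝒲 and unit x̄ define Z_{x̄}(W) = Σ_{W̃ ∈ M_{x̄}(W)} exp(γ · U_{x̄}(W̃)) (a finite sum, since 𝒲_p is finite), and for W' ∈ M_{x̄}(W) define the noisy-best-response transition probability P_{x̄}(W → W') = exp(γ · U_{x̄}(W')) / max(Z_{x̄}(W), Z_{x̄}(W')). Then detailed balance with respect to the Gibbs weights exp(γΨ) holds: for all allocation states W, W' ∈ 𝒲 and every x̄ with W' ∈ M_{x̄}(W) (so that also W ∈ M_{x̄}(W')), one has exp(γ·Ψ(W)) · P_{x̄}(W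 → W') = exp(γ·Ψ(W')) · P_{x̄}(W' → W). -/
open Finset

/-- The normalizing constant `Z_{x̄}(W) = Σ_{W̃ ∈ M_{x̄}(W)} exp(γ U_{x̄}(W̃))`. -/
noncomputable def Zconst {X : Type*} [Fintype X] (E : X → X → Prop) [DecidableRel E]
    (f g : X → (X → ℕ) → ℝ) (γ : ℝ)
    (M : X → (X → X → ℕ) → Finset (X → X → ℕ)) (xbar : X) (W : X → X → ℕ) : ℝ :=
  ∑ Wt ∈ M xbar W, Real.exp (γ * Util E f g xbar Wt)

/-- The noisy best response transition probability
`P_{x̄}(W → W') = exp(γ U_{x̄}(W')) / max(Z_{x̄}(W), Z_{x̄}(W'))`. -/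
noncomputable def nbrProb {X : Type*} [Fintype X] (E : X → X → Prop) [DecidableRel E]
    (f g : X → (X → ℕ) → ℝ) (γ : ℝ)
    (M : X → (X → X → ℕ) → Finset (X → X → ℕ)) (xbar : X) (W W' : X → X → ℕ) : ℝ :=
  Real.exp (γ * Util E f g xbar W') /
    max (Zconst E f g γ M xbar W) (Zconst E f g γ M xbar W')

/-- detailed balance with respect to the Gibbs weights
`exp(γ Ψ)`: for allocation states `W, W'` with `W' ∈ M_{x̄}(W)`,
`exp(γΨ(W)) P_{x̄}(W → W') = exp(γΨ(W')) P_{x̄}(W' → W)`. -/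
theorem detailed_balance {X : Type*} [Fintype X] [DecidableEq X]
    (E : X → X → Prop) [DecidableRel E] (α β : X → ℕ)
    (f g : X → (X → ℕ) → ℝ) (γ : ℝ) (hγ : 0 < γ)
    (M : X → (X → X → ℕ) → Finset (X → X → ℕ))
    (hM : IsAdmissible E α β M)
    (W W' : X → X → ℕ) (hW : IsAlloc E α β W) (hW' : IsAlloc E α β W')
    (xbar : X) (hmem : W' ∈ M xbar W) :
    Real.exp (γ * Psi f g W) * nbrProb E f g γ M xbar W W' =
      Real.exp (γ * Psi f g W') * nbrProb E f g γ M xbar W' W := by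
  obtain ⟨hW'p, hdiff, -, -⟩ := hM.1 xbar W hW.1 W' hmem
  have hWz := hW.1.1
  have hW'z := hW'p.1
  have key : Psi f g W + Util E f g xbar W' = Psi f g W' + Util E f g xbar W := by
    unfold Psi Util
    rw [← Finset.sum_filter_add_sum_filter_not univ (fun y => E xbar y)
        (fun y => g y (fun x => W x y)),
      ← Finset.sum_filter_add_sum_filter_not univ (fun y => E xbar y)
        (fun y => g y (fun x => W' x y)),
      ← Finset.add_sum_erase univ (fun x => f x (W x)) (mem_univ xbar),
      ← Finset.add_sum_erase univ (fun x => f x (W' x)) (mem_univ xbar)]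
    have hf : ∑ x ∈ univ.erase xbar, f x (W x) = ∑ x ∈ univ.erase xbar, f x (W' x) := by
      refine Finset.sum_congr rfl fun x hx => ?_
      have h := hdiff x (mem_erase.mp hx).1
      rw [funext h]
    have hg : ∑ y ∈ univ.filter (fun y => ¬ E xbar y), g y (fun x => W x y) =
        ∑ y ∈ univ.filter (fun y => ¬ E xbar y), g y (fun x => W' x y) := by
      refine Finset.sum_congr rfl fun y hy => ?_
      have hne : ¬ E xbar y := (mem_filter.mp hy).2
      congr 1
      funext x
      by_cases hx : x = xbar
      · subst hx; rw [hWz _ _ hne, hW'z _ _ hne]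
      · exact (hdiff x hx y).symm
    rw [hf, hg]
    ring
  unfold nbrProb
  rw [max_comm (Zconst E f g γ M xbar W') (Zconst E f g γ M xbar W)]
  rw [div_eq_mul_inv, div_eq_mul_inv, ← mul_assoc, ← mul_assoc,
    ← Real.exp_add, ← Real.exp_add]
  congr 2
  linear_combination γ * key
end

section
/- Let G = (X, E) be an undirected s-regular graph with s ≥ 1, suppose α_x = a and β_x = b for every x ∈ X with 1 ≤ a ≤ b, and consider the specific functional Ψ with constants C^{all} > 0, C^{agg} > 0, C^{con} > 0 (the same C^{con} for every resource). Then an allocation state W ∈ 𝒲 maximizes Ψ over 𝒲 if and only if W is a matching allocation state; in particular the set of maximizers is nonempty and coincides with the set of matching allocation states. -/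
open Finset

/-- The specific functional
`Ψ(W) = Σ_x (C^{all} Σ_y W_{xy} + C^{agg} Σ_y W_{xy}²) − Σ_y C^{con}(Σ_x W_{xy})²`. -/
def PsiSpec {X : Type*} [Fintype X] (Call Cagg Ccon : ℝ) (W : X → X → ℕ) : ℝ :=
  ∑ x, (Call * ∑ y, (W x y : ℝ) + Cagg * ∑ y, (W x y : ℝ) ^ 2) -
    ∑ y, Ccon * (∑ x, (W x y : ℝ)) ^ 2

/-- A matching allocation state: an allocation state of the form
`W_{xy} = a` if `y = σ x` and `0` otherwise, for a permutation `σ` along edges. -/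
def IsMatchingAlloc {X : Type*} [Fintype X] [DecidableEq X] (E : X → X → Prop) (α β : X → ℕ)
    (a : ℕ) (W : X → X → ℕ) : Prop :=
  IsAlloc E α β W ∧
    ∃ σ : Equiv.Perm X, (∀ x, E x (σ x)) ∧
      ∀ x y, W x y = if y = σ x then a else 0

/-- Hall's theorem gives a permutation along the edges of a regular graph. -/
lemma exists_edge_perm {X : Type*} [Fintype X] [DecidableEq X]
    (E : X → X → Prop) [DecidableRel E] (s : ℕ) (hs : 1 ≤ s)
    (hsym : ∀ x y, E x y → E y x)
    (hreg : ∀ x, (univ.filter fun y => E x y).card = s) :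
    ∃ σ : Equiv.Perm X, ∀ x, E x (σ x) := by
  set N : X → Finset X := fun x => univ.filter fun y => E x y with hN
  have hall : ∀ S : Finset X, S.card ≤ (S.biUnion N).card := by
    intro S
    have key : s * S.card ≤ s * (S.biUnion N).card := by
      have h1 : s * S.card = ∑ x ∈ S, (N x).card := by
        simp [hN, hreg, mul_comm]
      have h2 : ∑ x ∈ S, (N x).card = ∑ y ∈ S.biUnion N, (S.filter fun x => E x y).card := by
        have : ∀ x ∈ S, (N x).card = ∑ y ∈ univ, if E x y then 1 else 0 := by
          intro x _; rw [Finset.card_filter]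
        rw [Finset.sum_congr rfl this, Finset.sum_comm]
        rw [← Finset.sum_subset (Finset.subset_univ (S.biUnion N))]
        · apply Finset.sum_congr rfl
          intro y _
          rw [Finset.card_filter]
        · intro y _ hy
          apply Finset.sum_eq_zero
          intro x hx
          simp only [ite_eq_right_iff]
          intro hE
          exact absurd (Finset.mem_biUnion.mpr ⟨x, hx, by simp [hN, hE]⟩) hy
      have h3 : ∀ y ∈ S.biUnion N, (S.filter fun x => E x y).card ≤ s := by
        intro y _
        rw [← hreg y]
        apply Finset.card_le_card
        intro x hx
        simp only [Finset.mem_filter] at hx ⊢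
        exact ⟨Finset.mem_univ _, hsym _ _ hx.2⟩
      calc s * S.card = _ := h1
        _ = _ := h2
        _ ≤ ∑ _y ∈ S.biUnion N, s := Finset.sum_le_sum h3
        _ = s * (S.biUnion N).card := by rw [Finset.sum_const, smul_eq_mul, mul_comm]
    exact Nat.le_of_mul_le_mul_left key hs
  obtain ⟨f, hfinj, hf⟩ := (Finset.all_card_le_biUnion_card_iff_exists_injective N).mp hall
  refine ⟨Equiv.ofBijective f (Finite.injective_iff_bijective.mp hfinj), fun x => ?_⟩
  have := hf x
  simp [hN] at this
  exact this

/-- A row of naturals summing to `a` whose squares sum to at least `a²`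
is concentrated at one point. -/
lemma row_conc {X : Type*} [Fintype X] [DecidableEq X] (a : ℕ) (ha : 1 ≤ a)
    (w : X → ℕ) (h1 : ∑ y, w y = a) (h2 : a ^ 2 ≤ ∑ y, (w y) ^ 2) :
    ∃ y, w y = a ∧ ∀ z, z ≠ y → w z = 0 := by
  have hle : ∀ y, w y ≤ a := fun y =>
    h1 ▸ Finset.single_le_sum (fun _ _ => Nat.zero_le _) (Finset.mem_univ y)
  have h3 : ∑ y, (w y) ^ 2 ≤ ∑ y, w y * a :=
    Finset.sum_le_sum fun y _ => by
      rw [pow_two]; exact Nat.mul_le_mul_left _ (hle y)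
  have h4 : ∑ y, w y * a = a ^ 2 := by rw [← Finset.sum_mul, h1, pow_two]
  have heq : ∑ y, (w y) ^ 2 = ∑ y, w y * a := le_antisymm h3 (h4 ▸ h2)
  have hdich : ∀ y, w y = 0 ∨ w y = a := by
    intro y
    have := (Finset.sum_eq_sum_iff_of_le fun y _ => by
      rw [pow_two]; exact Nat.mul_le_mul_left _ (hle y)).mp heq y (Finset.mem_univ y)
    rw [pow_two] at this
    rcases Nat.eq_zero_or_pos (w y) with h | h
    · exact Or.inl h
    · exact Or.inr (Nat.eq_of_mul_eq_mul_left h this)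
  have hex : ∃ y, w y = a := by
    by_contra hc
    push_neg at hc
    have : ∀ y, w y = 0 := fun y => (hdich y).resolve_right (hc y)
    rw [Finset.sum_eq_zero fun y _ => this y] at h1
    omega
  obtain ⟨y, hy⟩ := hex
  refine ⟨y, hy, fun z hz => ?_⟩
  have : ∑ x ∈ Finset.univ.erase y, w x = 0 := by
    have := Finset.add_sum_erase Finset.univ w (Finset.mem_univ y)
    omega
  exact Finset.sum_eq_zero_iff.mp this z (Finset.mem_erase.mpr ⟨hz, Finset.mem_univ z⟩)

/-- The fundamental identity for `Ψ` on allocation states with constant row sums. -/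
lemma psi_eq {X : Type*} [Fintype X] (Call Cagg Ccon : ℝ) (a : ℕ) (W : X → X → ℕ)
    (hrow : ∀ x, ∑ y, W x y = a) :
    PsiSpec Call Cagg Ccon W =
      (Fintype.card X : ℝ) * (Call * a + Cagg * (a:ℝ)^2 - Ccon * (a:ℝ)^2)
      - Cagg * ∑ x, ((a:ℝ)^2 - ∑ y, (W x y : ℝ)^2)
      - Ccon * ∑ y, ((∑ x, (W x y : ℝ)) - a)^2 := by
  have hrowR : ∀ x, ∑ y, (W x y : ℝ) = a := by
    intro x
    rw [← Nat.cast_sum, hrow]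
  have hcol : ∑ y, ∑ x, (W x y : ℝ) = (Fintype.card X : ℝ) * a := by
    rw [Finset.sum_comm]
    simp only [hrowR, Finset.sum_const, Finset.card_univ, nsmul_eq_mul]
  have e1 : ∑ x, (Call * ∑ y, (W x y : ℝ) + Cagg * ∑ y, (W x y : ℝ)^2)
      = (Fintype.card X : ℝ) * (Call * a) + Cagg * ∑ x, ∑ y, (W x y : ℝ)^2 := by
    simp only [hrowR]
    rw [Finset.sum_add_distrib, Finset.sum_const, Finset.card_univ, nsmul_eq_mul,
      ← Finset.mul_sum]
  have e3 : ∑ x, ((a:ℝ)^2 - ∑ y, (W x y : ℝ)^2)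
      = (Fintype.card X : ℝ) * (a:ℝ)^2 - ∑ x, ∑ y, (W x y : ℝ)^2 := by
    rw [Finset.sum_sub_distrib, Finset.sum_const, Finset.card_univ, nsmul_eq_mul]
  have e4 : ∑ y, ((∑ x, (W x y : ℝ)) - a)^2
      = ∑ y, (∑ x, (W x y : ℝ))^2 - 2 * a * ((Fintype.card X : ℝ) * a)
        + (Fintype.card X : ℝ) * (a:ℝ)^2 := by
    have h : ∀ y ∈ (univ : Finset X), ((∑ x, (W x y : ℝ)) - a)^2
        = (∑ x, (W x y : ℝ))^2 - 2 * (a:ℝ) * (∑ x, (W x y : ℝ)) + (a:ℝ)^2 := by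
      intro y _; ring
    rw [Finset.sum_congr rfl h, Finset.sum_add_distrib, Finset.sum_sub_distrib,
      ← Finset.mul_sum, hcol, Finset.sum_const, Finset.card_univ, nsmul_eq_mul]
  unfold PsiSpec
  rw [e1, e3, e4, ← Finset.mul_sum]
  ring

/-- on an undirected `s`-regular graph with `α ≡ a`, `β ≡ b`,
`1 ≤ a ≤ b`, and `C^{all}, C^{agg}, C^{con} > 0`, the maximizers of `Ψ` over
the set of allocation states are exactly the matching allocation states, and
they exist. -/
theorem maximizers_are_matchings {X : Type*} [Fintype X] [DecidableEq X]
    (E : X → X → Prop) [DecidableRel E] (s : ℕ) (hs : 1 ≤ s)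
    (hsym : ∀ x y, E x y → E y x) (hirr : ∀ x, ¬ E x x)
    (hreg : ∀ x, (univ.filter fun y => E x y).card = s)
    (a b : ℕ) (ha : 1 ≤ a) (hab : a ≤ b)
    (Call Cagg Ccon : ℝ) (hCall : 0 < Call) (hCagg : 0 < Cagg) (hCcon : 0 < Ccon) :
    (∃ W : X → X → ℕ, IsMatchingAlloc E (fun _ => a) (fun _ => b) a W) ∧
    ∀ W : X → X → ℕ, IsAlloc E (fun _ => a) (fun _ => b) W →
      ((∀ V : X → X → ℕ, IsAlloc E (fun _ => a) (fun _ => b) V →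
          PsiSpec Call Cagg Ccon V ≤ PsiSpec Call Cagg Ccon W) ↔
        IsMatchingAlloc E (fun _ => a) (fun _ => b) a W) := by
  classical
  set M : ℝ := (Fintype.card X : ℝ) * (Call * a + Cagg * (a:ℝ)^2 - Ccon * (a:ℝ)^2) with hM
  -- the two deficiency terms for an allocation W
  -- basic facts about matchings built from a permutation along edges
  have matching_of_perm : ∀ σ : Equiv.Perm X, (∀ x, E x (σ x)) →
      IsMatchingAlloc E (fun _ => a) (fun _ => b) a (fun x y => if y = σ x then a else 0) := by
    intro σ hσ
    have hrow : ∀ x, ∑ y, (if y = σ x then a else 0) = a := by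
      intro x; simp
    have hcolswap : ∀ y x, ((y = σ x) = (x = σ.symm y)) :=
      fun y x => propext (eq_comm.trans (σ.eq_symm_apply).symm)
    have hcol : ∀ y, ∑ x, (if y = σ x then a else 0) = a := by
      intro y
      simp only [hcolswap]
      simp
    refine ⟨⟨⟨fun x y hE => ?_, fun x => le_of_eq (hrow x), fun y => ?_⟩, hrow⟩,
      σ, hσ, fun x y => rfl⟩
    · have : y ≠ σ x := fun h => hE (h ▸ hσ x)
      simp [this]
    · rw [hcol]; exact hab
  -- Ψ of any matching equals M
  have psi_matching : ∀ W : X → X → ℕ,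
      IsMatchingAlloc E (fun _ => a) (fun _ => b) a W → PsiSpec Call Cagg Ccon W = M := by
    intro W ⟨hW, σ, hσ, hform⟩
    rw [psi_eq Call Cagg Ccon a W hW.2, hM]
    have hP : ∀ x, ∑ y, (W x y : ℝ)^2 = (a:ℝ)^2 := by
      intro x
      have : ∀ y, (W x y : ℝ)^2 = if y = σ x then (a:ℝ)^2 else 0 := by
        intro y
        rw [hform x y]; split <;> simp
      simp only [this]
      simp
    have hQ : ∀ y, ∑ x, (W x y : ℝ) = (a:ℝ) := by
      intro y
      have hcolswap : ∀ x, ((y = σ x) = (x = σ.symm y)) :=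
        fun x => propext (eq_comm.trans (σ.eq_symm_apply).symm)
      have : ∀ x, (W x y : ℝ) = if x = σ.symm y then (a:ℝ) else 0 := by
        intro x
        rw [hform x y]
        rcases eq_or_ne x (σ.symm y) with h | h
        · subst h; simp
        · have hne : y ≠ σ x := fun hy => h (by rw [hy]; simp)
          simp [hne, h]
      simp only [this]
      simp
    have z1 : ∑ x, ((a:ℝ)^2 - ∑ y, (W x y : ℝ)^2) = 0 :=
      Finset.sum_eq_zero fun x _ => by rw [hP x]; ring
    have z2 : ∑ y, ((∑ x, (W x y : ℝ)) - a)^2 = 0 :=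
      Finset.sum_eq_zero fun y _ => by rw [hQ y]; ring
    rw [z1, z2]
    ring
  -- Ψ of any allocation is at most M
  have psi_le : ∀ V : X → X → ℕ, IsAlloc E (fun _ => a) (fun _ => b) V →
      PsiSpec Call Cagg Ccon V ≤ M := by
    intro V hV
    rw [psi_eq Call Cagg Ccon a V hV.2, hM]
    have hrowR : ∀ x, ∑ y, (V x y : ℝ) = a := by
      intro x; rw [← Nat.cast_sum, hV.2 x]
    have hP : (0:ℝ) ≤ ∑ x, ((a:ℝ)^2 - ∑ y, (V x y : ℝ)^2) := by
      apply Finset.sum_nonneg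
      intro x _
      have := Finset.sum_sq_le_sq_sum_of_nonneg
        (f := fun y => (V x y : ℝ)) (s := univ) (fun y _ => by positivity)
      rw [hrowR x] at this
      linarith
    have hQ : (0:ℝ) ≤ ∑ y, ((∑ x, (V x y : ℝ)) - a)^2 :=
      Finset.sum_nonneg fun y _ => sq_nonneg _
    nlinarith [mul_nonneg hCagg.le hP, mul_nonneg hCcon.le hQ]
  obtain ⟨σ₀, hσ₀⟩ := exists_edge_perm E s hs hsym hreg
  have hex : ∃ W : X → X → ℕ, IsMatchingAlloc E (fun _ => a) (fun _ => b) a W :=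
    ⟨_, matching_of_perm σ₀ hσ₀⟩
  refine ⟨hex, fun W hW => ⟨fun hmax => ?_, fun hmatch V hV => ?_⟩⟩
  · -- maximizer ⇒ matching
    obtain ⟨W₀, hW₀⟩ := hex
    have hge : M ≤ PsiSpec Call Cagg Ccon W := by
      rw [← psi_matching W₀ hW₀]
      exact hmax W₀ hW₀.1
    rw [psi_eq Call Cagg Ccon a W hW.2, hM] at hge
    have hrowR : ∀ x, ∑ y, (W x y : ℝ) = a := by
      intro x; rw [← Nat.cast_sum, hW.2 x]
    have hPterm : ∀ x ∈ (univ : Finset X), (0:ℝ) ≤ (a:ℝ)^2 - ∑ y, (W x y : ℝ)^2 := by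
      intro x _
      have := Finset.sum_sq_le_sq_sum_of_nonneg
        (f := fun y => (W x y : ℝ)) (s := univ) (fun y _ => by positivity)
      rw [hrowR x] at this
      linarith
    have hQterm : ∀ y ∈ (univ : Finset X), (0:ℝ) ≤ ((∑ x, (W x y : ℝ)) - a)^2 :=
      fun y _ => sq_nonneg _
    have hP : (0:ℝ) ≤ ∑ x, ((a:ℝ)^2 - ∑ y, (W x y : ℝ)^2) := Finset.sum_nonneg hPterm
    have hQ : (0:ℝ) ≤ ∑ y, ((∑ x, (W x y : ℝ)) - a)^2 := Finset.sum_nonneg hQterm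
    have hP0 : ∑ x, ((a:ℝ)^2 - ∑ y, (W x y : ℝ)^2) = 0 := by
      nlinarith [mul_nonneg hCagg.le hP, mul_nonneg hCcon.le hQ]
    have hQ0 : ∑ y, ((∑ x, (W x y : ℝ)) - a)^2 = 0 := by
      nlinarith [mul_nonneg hCagg.le hP, mul_nonneg hCcon.le hQ]
    -- each row is concentrated
    have hrowsq : ∀ x, a ^ 2 ≤ ∑ y, (W x y) ^ 2 := by
      intro x
      have := (Finset.sum_eq_zero_iff_of_nonneg hPterm).mp hP0 x (Finset.mem_univ x)
      have h2 : ∑ y, (W x y : ℝ)^2 = (a:ℝ)^2 := by linarith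
      have : ((∑ y, (W x y)^2 : ℕ) : ℝ) = ((a^2 : ℕ) : ℝ) := by
        push_cast
        rw [h2]
      exact le_of_eq (Nat.cast_injective this).symm
    choose f hf1 hf2 using fun x => row_conc a ha (W x) (hW.2 x) (hrowsq x)
    -- each column sums to a
    have hcolN : ∀ y, ∑ x, W x y = a := by
      intro y
      have := (Finset.sum_eq_zero_iff_of_nonneg hQterm).mp hQ0 y (Finset.mem_univ y)
      have h2 : (∑ x, (W x y : ℝ)) = (a:ℝ) := by
        have := sq_eq_zero_iff.mp this
        linarith
      have : ((∑ x, W x y : ℕ) : ℝ) = ((a : ℕ) : ℝ) := by push_cast; rw [h2]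
      exact Nat.cast_injective this
    -- f is injective
    have hinj : Function.Injective f := by
      intro x1 x2 h
      by_contra hne
      have hsub : ∑ x ∈ ({x1, x2} : Finset X), W x (f x2) ≤ ∑ x, W x (f x2) :=
        Finset.sum_le_sum_of_subset (Finset.subset_univ _)
      rw [Finset.sum_pair hne, hcolN (f x2)] at hsub
      have e1 : W x1 (f x2) = a := by rw [← h]; exact hf1 x1
      rw [e1, hf1 x2] at hsub
      omega
    let σ : Equiv.Perm X := Equiv.ofBijective f (Finite.injective_iff_bijective.mp hinj)
    refine ⟨hW, σ, fun x => ?_, fun x y => ?_⟩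
    · -- E x (f x)
      by_contra hE
      have := hW.1.1 x (f x) hE
      rw [hf1 x] at this
      omega
    · show W x y = if y = f x then a else 0
      by_cases hy : y = f x
      · rw [hy, hf1 x, if_pos rfl]
      · rw [if_neg hy]
        exact hf2 x y hy
  · -- matching ⇒ maximizer
    calc PsiSpec Call Cagg Ccon V ≤ M := psi_le V hV
      _ = PsiSpec Call Cagg Ccon W := (psi_matching W hmatch).symm
end
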